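/- arXiv:1002.4473 — 6 statements merged into one kernel-verified Lean document; each statement's English description precedes it below -/
import Mathlib

section
/- Let λ > 0. Then, as the integer M → ∞ (with M ≥ 2 so that the integral converges), ∫₀^∞ x^{−1} · M(1−e^{−λx})^{M−1} λ e^{−λx} dx is asymptotically equivalent to λ/ln(M), i.e. the ratio of the two quantities tends to 1. -/
open MeasureTheory Filter Real Set

namespace GmaxAux

noncomputable def dens (lam : ℝ) (M : ℕ) (x : ℝ) : ℝ :=
  (M : ℝ) * (1 - Real.exp (-lam * x)) ^ (M - 1) * (lam * Real.exp (-lam * x))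

lemma hasDerivAt_F (lam : ℝ) (M : ℕ) (x : ℝ) :
    HasDerivAt (fun y => (1 - Real.exp (-lam * y)) ^ M) (dens lam M x) x := by
  have h0 : HasDerivAt (fun y : ℝ => -lam * y) (-lam) x := by
    simpa using (hasDerivAt_id x).const_mul (-lam)
  have h1 : HasDerivAt (fun y => 1 - Real.exp (-lam * y)) (lam * Real.exp (-lam * x)) x := by
    have := h0.exp.const_sub (1 : ℝ)
    exact this.congr_deriv (by ring)
  simpa [dens] using h1.fun_pow M

lemma continuous_dens (lam : ℝ) (M : ℕ) : Continuous (dens lam M) := by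
  unfold dens; fun_prop

lemma one_sub_exp_neg_le (t : ℝ) : 1 - Real.exp (-t) ≤ t := by
  have := Real.add_one_le_exp (-t)
  linarith

lemma base_mem {lam x : ℝ} (hlam : 0 < lam) (hx : 0 ≤ x) :
    0 ≤ 1 - Real.exp (-lam * x) ∧ 1 - Real.exp (-lam * x) ≤ 1 := by
  constructor
  · have : Real.exp (-lam * x) ≤ 1 := by
      apply Real.exp_le_one_iff.mpr
      nlinarith
    linarith
  · have := Real.exp_pos (-lam * x)
    linarith

lemma dens_nonneg {lam x : ℝ} (hlam : 0 < lam) (hx : 0 ≤ x) (M : ℕ) :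
    0 ≤ dens lam M x := by
  have h := base_mem hlam hx (lam := lam)
  have := Real.exp_pos (-lam * x)
  have h2 := pow_nonneg h.1 (M - 1)
  unfold dens
  positivity


lemma dens_le {lam x : ℝ} (hlam : 0 < lam) (hx : 0 ≤ x) (M : ℕ) :
    dens lam M x ≤ (M : ℝ) * lam * Real.exp (-lam * x) := by
  have h := base_mem hlam hx (lam := lam)
  have h2 : (1 - Real.exp (-lam * x)) ^ (M - 1) ≤ 1 := pow_le_one₀ h.1 h.2
  have h3 := (Real.exp_pos (-lam * x)).le
  have hMc : (0:ℝ) ≤ (M:ℝ) := Nat.cast_nonneg M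
  unfold dens
  calc (M : ℝ) * (1 - Real.exp (-lam * x)) ^ (M - 1) * (lam * Real.exp (-lam * x))
      ≤ (M : ℝ) * 1 * (lam * Real.exp (-lam * x)) := by
        apply mul_le_mul_of_nonneg_right (mul_le_mul_of_nonneg_left h2 hMc)
        positivity
    _ = (M : ℝ) * lam * Real.exp (-lam * x) := by ring

lemma integrableOn_dens {lam : ℝ} (hlam : 0 < lam) (M : ℕ) {c : ℝ} (hc : 0 ≤ c) :
    IntegrableOn (dens lam M) (Ioi c) := by
  have hg : IntegrableOn (fun x => (M : ℝ) * lam * Real.exp (-lam * x)) (Ioi c) :=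
    (exp_neg_integrableOn_Ioi c hlam).const_mul _
  refine hg.mono' ((continuous_dens lam M).aestronglyMeasurable.restrict) ?_
  filter_upwards [ae_restrict_mem measurableSet_Ioi] with x hx
  have hx0 : (0:ℝ) ≤ x := le_trans hc (le_of_lt hx)
  rw [Real.norm_eq_abs, abs_of_nonneg (dens_nonneg hlam hx0 M)]
  exact dens_le hlam hx0 M

/-- The integrand of the theorem. -/
noncomputable def f (lam : ℝ) (M : ℕ) (x : ℝ) : ℝ := (1 / x) * dens lam M x

lemma f_nonneg {lam x : ℝ} (hlam : 0 < lam) (hx : 0 < x) (M : ℕ) : 0 ≤ f lam M x :=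
  mul_nonneg (by positivity) (dens_nonneg hlam hx.le M)

lemma f_le_aux {lam x : ℝ} (hlam : 0 < lam) (hx : 0 < x) {M : ℕ} (hM : 2 ≤ M) :
    f lam M x ≤ lam ^ 2 * (M : ℝ) * Real.exp (-lam * x)
      * (1 - Real.exp (-lam * x)) ^ (M - 2) := by
  have h := base_mem hlam hx.le (lam := lam)
  have hsplit : (1 - Real.exp (-lam * x)) ^ (M - 1)
      = (1 - Real.exp (-lam * x)) ^ (M - 2) * (1 - Real.exp (-lam * x)) := by
    rw [← pow_succ]
    congr 1
    omega
  have hle : 1 - Real.exp (-lam * x) ≤ lam * x := by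
    simpa [neg_mul] using one_sub_exp_neg_le (lam * x)
  have hpow : (0:ℝ) ≤ (1 - Real.exp (-lam * x)) ^ (M - 2) := pow_nonneg h.1 _
  have hexp := (Real.exp_pos (-lam * x)).le
  unfold f dens
  rw [hsplit]
  have hMc : (0:ℝ) ≤ (M:ℝ) := Nat.cast_nonneg M
  rw [div_mul_eq_mul_div, one_mul, div_le_iff₀ hx]
  have hc : (0:ℝ) ≤ (M : ℝ) * (1 - Real.exp (-lam * x)) ^ (M - 2) * (lam * Real.exp (-lam * x)) := by
    apply mul_nonneg (mul_nonneg hMc hpow)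
    positivity
  calc (M : ℝ) * ((1 - Real.exp (-lam * x)) ^ (M - 2) * (1 - Real.exp (-lam * x)))
        * (lam * Real.exp (-lam * x))
      = ((M : ℝ) * (1 - Real.exp (-lam * x)) ^ (M - 2) * (lam * Real.exp (-lam * x)))
        * (1 - Real.exp (-lam * x)) := by ring
    _ ≤ ((M : ℝ) * (1 - Real.exp (-lam * x)) ^ (M - 2) * (lam * Real.exp (-lam * x)))
        * (lam * x) := mul_le_mul_of_nonneg_left hle hc
    _ = lam ^ 2 * (M : ℝ) * Real.exp (-lam * x) * (1 - Real.exp (-lam * x)) ^ (M - 2) * x := by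
        ring

lemma integrableOn_f {lam : ℝ} (hlam : 0 < lam) {M : ℕ} (hM : 2 ≤ M) :
    IntegrableOn (f lam M) (Ioi (0:ℝ)) := by
  have hg : IntegrableOn (fun x => lam ^ 2 * (M : ℝ) * Real.exp (-lam * x)) (Ioi (0:ℝ)) :=
    (exp_neg_integrableOn_Ioi 0 hlam).const_mul _
  refine hg.mono' ?_ ?_
  · apply ContinuousOn.aestronglyMeasurable ?_ measurableSet_Ioi
    unfold f dens
    apply ContinuousOn.mul ?_ (continuous_dens lam M).continuousOn
    exact continuousOn_const.div continuousOn_id (fun x hx => ne_of_gt hx)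
  · filter_upwards [ae_restrict_mem measurableSet_Ioi] with x hx
    rw [Real.norm_eq_abs, abs_of_nonneg (f_nonneg hlam hx M)]
    calc f lam M x ≤ lam ^ 2 * (M : ℝ) * Real.exp (-lam * x)
          * (1 - Real.exp (-lam * x)) ^ (M - 2) := f_le_aux hlam hx hM
    _ ≤ lam ^ 2 * (M : ℝ) * Real.exp (-lam * x) * 1 := by
        have h := base_mem hlam hx.le (lam := lam)
        apply mul_le_mul_of_nonneg_left (pow_le_one₀ h.1 h.2)
        positivity
    _ = _ := mul_one _


lemma integral_dens_Ioc (lam : ℝ) (M : ℕ) {a b : ℝ} (hab : a ≤ b) :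
    ∫ x in Ioc a b, dens lam M x
      = (1 - Real.exp (-lam * b)) ^ M - (1 - Real.exp (-lam * a)) ^ M := by
  rw [← intervalIntegral.integral_of_le hab]
  exact intervalIntegral.integral_eq_sub_of_hasDerivAt (fun x _ => hasDerivAt_F lam M x)
    ((continuous_dens lam M).intervalIntegrable a b)

lemma tendsto_F_atTop {lam : ℝ} (hlam : 0 < lam) (M : ℕ) :
    Tendsto (fun y => (1 - Real.exp (-lam * y)) ^ M) atTop (nhds 1) := by
  have h1 : Tendsto (fun y : ℝ => -lam * y) atTop atBot :=
    tendsto_id.const_mul_atTop_of_neg (neg_neg_iff_pos.mpr hlam)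
  have h2 : Tendsto (fun y : ℝ => 1 - Real.exp (-lam * y)) atTop (nhds 1) := by
    simpa using tendsto_const_nhds.sub (Real.tendsto_exp_atBot.comp h1)
  simpa using h2.pow M

lemma integral_dens_Ioi {lam : ℝ} (hlam : 0 < lam) (M : ℕ) {b : ℝ} (hb : 0 ≤ b) :
    ∫ x in Ioi b, dens lam M x = 1 - (1 - Real.exp (-lam * b)) ^ M :=
  integral_Ioi_of_hasDerivAt_of_tendsto' (fun x _ => hasDerivAt_F lam M x)
    (integrableOn_dens hlam M hb) (tendsto_F_atTop hlam M)


lemma split_integral {lam : ℝ} (hlam : 0 < lam) {M : ℕ} (hM : 2 ≤ M) {a b : ℝ}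
    (ha : 0 < a) (hab : a ≤ b) :
    ∫ x in Ioi (0:ℝ), f lam M x
      = (∫ x in Ioc 0 a, f lam M x) + (∫ x in Ioc a b, f lam M x)
        + (∫ x in Ioi b, f lam M x) := by
  have hint := integrableOn_f hlam hM
  have i1 : IntegrableOn (f lam M) (Ioc 0 a) := hint.mono_set Ioc_subset_Ioi_self
  have i2 : IntegrableOn (f lam M) (Ioc a b) := hint.mono_set
    (fun x hx => lt_trans ha hx.1)
  have i3 : IntegrableOn (f lam M) (Ioi b) := hint.mono_set
    (fun x hx => lt_trans (lt_of_lt_of_le ha hab) hx)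
  have i23 : IntegrableOn (f lam M) (Ioi a) := hint.mono_set
    (fun x hx => lt_trans ha hx)
  have e2 : ∫ x in Ioi a, f lam M x
      = (∫ x in Ioc a b, f lam M x) + (∫ x in Ioi b, f lam M x) := by
    rw [← Ioc_union_Ioi_eq_Ioi hab,
      setIntegral_union (Ioc_disjoint_Ioi le_rfl) measurableSet_Ioi i2 i3]
  have e1 : ∫ x in Ioi (0:ℝ), f lam M x
      = (∫ x in Ioc 0 a, f lam M x) + (∫ x in Ioi a, f lam M x) := by
    rw [← Ioc_union_Ioi_eq_Ioi (le_of_lt ha),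
      setIntegral_union (Ioc_disjoint_Ioi le_rfl) measurableSet_Ioi i1 i23]
  rw [e1, e2, add_assoc]

lemma piece1_bound {lam : ℝ} (hlam : 0 < lam) {M : ℕ} (hM : 2 ≤ M) {a : ℝ} (ha : 0 < a) :
    ∫ x in Ioc (0:ℝ) a, f lam M x ≤ 2 * lam * (1 - Real.exp (-lam * a)) ^ (M - 1) := by
  have hM1 : (1:ℝ) ≤ (M:ℝ) - 1 := by
    have : (2:ℝ) ≤ (M:ℝ) := by exact_mod_cast hM
    linarith
  have hcast : ((M - 1 : ℕ) : ℝ) = (M:ℝ) - 1 := by exact_mod_cast Nat.cast_sub (show 1 ≤ M by omega)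
  have hc : (0:ℝ) < lam * (M:ℝ) / ((M:ℝ) - 1) := by
    have : (0:ℝ) < (M:ℝ) := by positivity
    positivity
  have hint : IntegrableOn (f lam M) (Ioc (0:ℝ) a) :=
    (integrableOn_f hlam hM).mono_set Ioc_subset_Ioi_self
  have hcong : ∀ x ∈ Ioc (0:ℝ) a,
      (lam * (M:ℝ) / ((M:ℝ) - 1)) * dens lam (M-1) x
      = lam ^ 2 * (M : ℝ) * Real.exp (-lam * x) * (1 - Real.exp (-lam * x)) ^ (M - 2) := by
    intro x _
    unfold dens
    have h2 : M - 1 - 1 = M - 2 := by omega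
    rw [h2, hcast]
    field_simp
  have hgint : IntegrableOn
      (fun x => lam ^ 2 * (M : ℝ) * Real.exp (-lam * x)
        * (1 - Real.exp (-lam * x)) ^ (M - 2)) (Ioc (0:ℝ) a) := by
    have h := ((integrableOn_dens hlam (M-1) (le_refl (0:ℝ))).mono_set
      (Ioc_subset_Ioi_self : Ioc (0:ℝ) a ⊆ Ioi 0)).const_mul (lam * (M:ℝ) / ((M:ℝ) - 1))
    exact IntegrableOn.congr_fun h hcong measurableSet_Ioc
  have step1 : ∫ x in Ioc (0:ℝ) a, f lam M x
      ≤ ∫ x in Ioc (0:ℝ) a, lam ^ 2 * (M : ℝ) * Real.exp (-lam * x)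
          * (1 - Real.exp (-lam * x)) ^ (M - 2) :=
    setIntegral_mono_on hint hgint measurableSet_Ioc (fun x hx => f_le_aux hlam hx.1 hM)
  have step2 : ∫ x in Ioc (0:ℝ) a, lam ^ 2 * (M : ℝ) * Real.exp (-lam * x)
          * (1 - Real.exp (-lam * x)) ^ (M - 2)
      = (lam * (M:ℝ) / ((M:ℝ) - 1)) * (1 - Real.exp (-lam * a)) ^ (M - 1) := by
    rw [setIntegral_congr_fun measurableSet_Ioc (fun x hx => (hcong x hx).symm),
      integral_const_mul, integral_dens_Ioc lam (M-1) (le_of_lt ha)]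
    have hz : (1 - Real.exp (-lam * 0)) ^ (M - 1) = 0 := by
      simp only [mul_zero, Real.exp_zero, sub_self]
      exact zero_pow (by omega)
    rw [hz, sub_zero]
  rw [step2] at step1
  refine le_trans step1 ?_
  have hpow : (0:ℝ) ≤ (1 - Real.exp (-lam * a)) ^ (M - 1) :=
    pow_nonneg (base_mem hlam ha.le).1 _
  apply mul_le_mul_of_nonneg_right ?_ hpow
  rw [div_le_iff₀ (by linarith)]
  have : (2:ℝ) ≤ (M:ℝ) := by exact_mod_cast hM
  nlinarith


lemma piece_mid_lower {lam : ℝ} (hlam : 0 < lam) {M : ℕ} (hM : 2 ≤ M) {a b : ℝ}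
    (ha : 0 < a) (hab : a ≤ b) :
    (1/b) * ((1 - Real.exp (-lam * b)) ^ M - (1 - Real.exp (-lam * a)) ^ M)
      ≤ ∫ x in Ioc a b, f lam M x := by
  have idens : IntegrableOn (dens lam M) (Ioc a b) :=
    (integrableOn_dens hlam M ha.le).mono_set (fun x hx => hx.1)
  have hfi : IntegrableOn (f lam M) (Ioc a b) :=
    (integrableOn_f hlam hM).mono_set (fun x hx => lt_trans ha hx.1)
  have hmono := setIntegral_mono_on (idens.const_mul (1/b)) hfi measurableSet_Ioc
    (fun x hx => ?_)
  · rwa [integral_const_mul, integral_dens_Ioc lam M hab] at hmono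
  · have hx0 : 0 < x := lt_trans ha hx.1
    exact mul_le_mul_of_nonneg_right (one_div_le_one_div_of_le hx0 hx.2)
      (dens_nonneg hlam hx0.le M)

lemma piece_mid_upper {lam : ℝ} (hlam : 0 < lam) {M : ℕ} (hM : 2 ≤ M) {a b : ℝ}
    (ha : 0 < a) (hab : a ≤ b) :
    ∫ x in Ioc a b, f lam M x
      ≤ (1/a) * ((1 - Real.exp (-lam * b)) ^ M - (1 - Real.exp (-lam * a)) ^ M) := by
  have idens : IntegrableOn (dens lam M) (Ioc a b) :=
    (integrableOn_dens hlam M ha.le).mono_set (fun x hx => hx.1)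
  have hfi : IntegrableOn (f lam M) (Ioc a b) :=
    (integrableOn_f hlam hM).mono_set (fun x hx => lt_trans ha hx.1)
  have hmono := setIntegral_mono_on hfi (idens.const_mul (1/a)) measurableSet_Ioc
    (fun x hx => ?_)
  · rwa [integral_const_mul, integral_dens_Ioc lam M hab] at hmono
  · have hx0 : 0 < x := lt_trans ha hx.1
    exact mul_le_mul_of_nonneg_right (one_div_le_one_div_of_le ha hx.1.le)
      (dens_nonneg hlam hx0.le M)

lemma piece_tail {lam : ℝ} (hlam : 0 < lam) {M : ℕ} (hM : 2 ≤ M) {b : ℝ} (hb : 0 < b) :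
    ∫ x in Ioi b, f lam M x ≤ (1/b) * (1 - (1 - Real.exp (-lam * b)) ^ M) := by
  have idens : IntegrableOn (dens lam M) (Ioi b) := integrableOn_dens hlam M hb.le
  have hfi : IntegrableOn (f lam M) (Ioi b) :=
    (integrableOn_f hlam hM).mono_set (fun x hx => lt_trans hb hx)
  have hmono := setIntegral_mono_on hfi (idens.const_mul (1/b)) measurableSet_Ioi
    (fun x hx => ?_)
  · rwa [integral_const_mul, integral_dens_Ioi hlam M hb.le] at hmono
  · have hx0 : 0 < x := lt_trans hb hx
    exact mul_le_mul_of_nonneg_right (one_div_le_one_div_of_le hb (le_of_lt hx))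
      (dens_nonneg hlam hx0.le M)

lemma piece_nonneg {lam : ℝ} (hlam : 0 < lam) (M : ℕ) {s : Set ℝ}
    (hs : MeasurableSet s) (hsub : s ⊆ Ioi (0:ℝ)) :
    0 ≤ ∫ x in s, f lam M x :=
  setIntegral_nonneg hs (fun x hx => f_nonneg hlam (hsub hx) M)

end GmaxAux
set_option maxHeartbeats 1000000

/-- `E[g_max^{-1}] ~ λ/ln M` as `M → ∞`, where `g_max` is the maximum of
`M` i.i.d. exponential(λ) random variables, with density
`p_M(x) = M(1-e^{-λx})^{M-1} λe^{-λx}` (the integral is finite for `M ≥ 2`). -/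
theorem gmax_inv_asymptotics (lam : ℝ) (hlam : 0 < lam) :
    Tendsto (fun M : ℕ =>
        (∫ x in Set.Ioi (0:ℝ),
            (1 / x) * ((M : ℝ) * (1 - Real.exp (-lam * x)) ^ (M - 1)
              * (lam * Real.exp (-lam * x)))) /
          (lam / Real.log M)) atTop (nhds 1) := by
  have hlam' : lam ≠ 0 := ne_of_gt hlam
  rw [Metric.tendsto_nhds]
  intro ε hε
  obtain ⟨δ, hδdef⟩ : ∃ x : ℝ, x = min ε 1 / 8 := ⟨_, rfl⟩
  have hδ0 : 0 < δ := by
    have := lt_min hε one_pos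
    rw [hδdef]; positivity
  have hδ8 : δ ≤ 1/8 := by
    have h := min_le_right ε 1
    rw [hδdef]; linarith
  have h4δ : 4 * δ < ε := by
    have h1 := min_le_left ε 1
    have h2 := lt_min hε one_pos
    rw [hδdef]; linarith
  have h1δ : (0:ℝ) < 1 - δ := by linarith
  have h1δ' : (0:ℝ) < 1 + δ := by linarith
  have hlog : Tendsto (fun M : ℕ => Real.log M) atTop atTop :=
    Real.tendsto_log_atTop.comp tendsto_natCast_atTop_atTop
  have hev := hlog.eventually_ge_atTop (max (16/δ^3) (max (Real.log (1/δ)/δ) 1))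
  filter_upwards [hev, eventually_ge_atTop 2] with M hLge hM2
  obtain ⟨L, hLdef⟩ : ∃ x : ℝ, x = Real.log M := ⟨_, rfl⟩
  rw [← hLdef] at hLge ⊢
  have hL1 : 1 ≤ L := le_trans (le_max_of_le_right (le_max_right _ _)) hLge
  have hL0 : 0 < L := lt_of_lt_of_le one_pos hL1
  have hL0' : L ≠ 0 := ne_of_gt hL0
  have hLa : 16/δ^3 ≤ L := le_trans (le_max_left _ _) hLge
  have hLb : Real.log (1/δ)/δ ≤ L := le_trans (le_max_of_le_right (le_max_left _ _)) hLge
  have hM2' : (2:ℝ) ≤ (M:ℝ) := by exact_mod_cast hM2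
  have hM0 : (0:ℝ) < (M:ℝ) := by linarith
  have hMexp : (M:ℝ) = Real.exp L := by rw [hLdef]; exact (Real.exp_log hM0).symm
  -- key quantities
  obtain ⟨a, hadef⟩ : ∃ x : ℝ, x = (1-δ) * L / lam := ⟨_, rfl⟩
  obtain ⟨b, hbdef⟩ : ∃ x : ℝ, x = (1+δ) * L / lam := ⟨_, rfl⟩
  have ha : 0 < a := by rw [hadef]; positivity
  have hab : a ≤ b := by
    rw [hadef, hbdef, div_le_div_iff₀ (by positivity) (by positivity)]
    exact mul_le_mul_of_nonneg_right (mul_le_mul_of_nonneg_right (by linarith) hL0.le) hlam.le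
  have hb : 0 < b := lt_of_lt_of_le ha hab
  obtain ⟨t, htdef⟩ : ∃ x : ℝ, x = Real.exp (-lam * a) := ⟨_, rfl⟩
  obtain ⟨s, hsdef⟩ : ∃ x : ℝ, x = Real.exp (-lam * b) := ⟨_, rfl⟩
  have hta : -lam * a = -((1-δ)*L) := by rw [hadef]; field_simp
  have hsb : -lam * b = -((1+δ)*L) := by rw [hbdef]; field_simp
  obtain ⟨η, hηdef⟩ : ∃ x : ℝ, x = Real.exp (-(δ*L)) := ⟨_, rfl⟩
  have hη0 : 0 < η := hηdef ▸ Real.exp_pos _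
  have hηδ : η ≤ δ := by
    have h1 : Real.log (1/δ) ≤ δ * L := by
      rw [div_le_iff₀ hδ0] at hLb
      linarith [hLb]
    have h2 : η ≤ Real.exp (-Real.log (1/δ)) := by
      rw [hηdef]
      apply Real.exp_le_exp.mpr
      linarith
    rwa [Real.exp_neg, Real.exp_log (by positivity), one_div, inv_inv] at h2
  have ht0 : 0 < t := htdef ▸ Real.exp_pos _
  have ht1 : t ≤ 1 := by
    rw [htdef, hta]
    apply Real.exp_le_one_iff.mpr
    exact neg_nonpos.mpr (mul_nonneg h1δ.le hL0.le)
  have hs0 : 0 < s := hsdef ▸ Real.exp_pos _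
  have hs1 : s ≤ 1 := by
    rw [hsdef, hsb]
    apply Real.exp_le_one_iff.mpr
    exact neg_nonpos.mpr (mul_nonneg h1δ'.le hL0.le)
  have hMt : (M:ℝ) * t = Real.exp (δ*L) := by
    rw [htdef, hta, hMexp, ← Real.exp_add]
    congr 1; ring
  have hMs : (M:ℝ) * s = η := by
    rw [hsdef, hsb, hMexp, hηdef, ← Real.exp_add]
    congr 1; ring
  have hexp_neg_le : ∀ y : ℝ, 0 < y → Real.exp (-y) ≤ 1/y := by
    intro y hy
    have h1 : y ≤ Real.exp y := by linarith [Real.add_one_le_exp y]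
    rw [Real.exp_neg, one_div]
    exact inv_anti₀ hy h1
  obtain ⟨Fa, hFadef⟩ : ∃ x : ℝ, x = (1 - t) ^ M := ⟨_, rfl⟩
  obtain ⟨Fb, hFbdef⟩ : ∃ x : ℝ, x = (1 - s) ^ M := ⟨_, rfl⟩
  have hFa0 : 0 ≤ Fa := hFadef ▸ pow_nonneg (by linarith) M
  have hFb1 : Fb ≤ 1 := hFbdef ▸ pow_le_one₀ (by linarith) (by linarith)
  have hone_sub_le : ∀ u : ℝ, 1 - u ≤ Real.exp (-u) := by
    intro u; linarith [Real.add_one_le_exp (-u)]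
  have hFa_le : Fa ≤ η := by
    have h1 : (1 - t) ^ M ≤ (Real.exp (-t)) ^ M :=
      pow_le_pow_left₀ (by linarith) (hone_sub_le t) M
    have h2 : (Real.exp (-t)) ^ M = Real.exp (-((M:ℝ)*t)) := by
      rw [← Real.exp_nat_mul]; congr 1; ring
    have h3 : Real.exp (-((M:ℝ)*t)) ≤ 1/((M:ℝ)*t) := by
      apply hexp_neg_le
      positivity
    have h4 : 1/((M:ℝ)*t) = η := by
      rw [hMt, hηdef, Real.exp_neg, one_div]
    rw [hFadef]
    calc (1-t)^M ≤ (Real.exp (-t)) ^ M := h1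
      _ = Real.exp (-((M:ℝ)*t)) := h2
      _ ≤ 1/((M:ℝ)*t) := h3
      _ = η := h4
  have hFb_ge : 1 - η ≤ Fb := by
    have h1 : 1 + (M:ℝ) * (-s) ≤ (1 + (-s)) ^ M :=
      one_add_mul_le_pow (by linarith) M
    have h2 : (1:ℝ) + -s = 1 - s := by ring
    rw [h2] at h1
    rw [hFbdef]
    calc (1:ℝ) - η = 1 + (M:ℝ)*(-s) := by rw [← hMs]; ring
      _ ≤ (1-s)^M := h1
  -- piece 1 numeric bound
  have hT1 : 2 * L * (1 - t) ^ (M-1) ≤ δ := by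
    have hcast : ((M - 1 : ℕ) : ℝ) = (M:ℝ) - 1 := by
      exact_mod_cast Nat.cast_sub (show 1 ≤ M by omega)
    have h1 : (1 - t) ^ (M-1) ≤ (Real.exp (-t)) ^ (M-1) :=
      pow_le_pow_left₀ (by linarith) (hone_sub_le t) (M-1)
    have h2 : (Real.exp (-t)) ^ (M-1) = Real.exp (-(((M-1:ℕ)):ℝ)*t) := by
      rw [← Real.exp_nat_mul]; congr 1; ring
    have h3 : Real.exp (δ*L)/2 ≤ (((M-1:ℕ)):ℝ)*t := by
      rw [hcast, ← hMt]
      linarith [mul_nonneg (show (0:ℝ) ≤ (M:ℝ) - 2 by linarith) ht0.le]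
    have h4 : Real.exp (-(((M-1:ℕ)):ℝ)*t) ≤ 2 * η := by
      have h5 : Real.exp (-(((M-1:ℕ)):ℝ)*t) ≤ Real.exp (-(Real.exp (δ*L)/2)) := by
        apply Real.exp_le_exp.mpr
        linarith
      have h6 : Real.exp (-(Real.exp (δ*L)/2)) ≤ 1/(Real.exp (δ*L)/2) :=
        hexp_neg_le _ (by positivity)
      have h7 : 1/(Real.exp (δ*L)/2) = 2 * η := by
        rw [hηdef, Real.exp_neg]
        field_simp
      linarith
    have h8 : (1 - t) ^ (M-1) ≤ 2 * η := le_trans h1 (le_trans (le_of_eq h2) h4)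
    have h9 : η ≤ 4/(δ^2*L^2) := by
      have hq : δ*L/2 ≤ Real.exp (δ*L/2) := by
        linarith [Real.add_one_le_exp (δ*L/2)]
      have hmul : Real.exp (δ*L/2) * Real.exp (δ*L/2) = Real.exp (δ*L) := by
        rw [← Real.exp_add]; congr 1; ring
      have hsq : δ^2*L^2/4 ≤ Real.exp (δ*L) := by
        have h2 : δ*L/2*(δ*L/2) ≤ Real.exp (δ*L/2)*Real.exp (δ*L/2) :=
          mul_le_mul hq hq (by positivity) (Real.exp_pos _).le
        rw [hmul] at h2
        have h3 : δ*L/2*(δ*L/2) = δ^2*L^2/4 := by ring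
        linarith
      have hη' : η = 1/Real.exp (δ*L) := by
        rw [hηdef, Real.exp_neg, one_div]
      rw [hη']
      calc 1/Real.exp (δ*L) ≤ 1/(δ^2*L^2/4) :=
            one_div_le_one_div_of_le (by positivity) hsq
        _ = 4/(δ^2*L^2) := by rw [one_div_div]
    have hA : 2*L*(1-t)^(M-1) ≤ 4*L*η := by
      have := mul_le_mul_of_nonneg_left h8 (le_of_lt hL0)
      linarith
    have hB : 4*L*η ≤ 16/(δ^2*L) := by
      have h10 : 4*L*η ≤ 4*L*(4/(δ^2*L^2)) := by
        apply mul_le_mul_of_nonneg_left h9 (by positivity)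
      have h11 : 4*L*(4/(δ^2*L^2)) = 16/(δ^2*L) := by
        field_simp
        ring
      linarith only [h10, h11]
    have hC : 16/(δ^2*L) ≤ δ := by
      have h12 : 16 ≤ δ^3*L := by
        rw [div_le_iff₀ (by positivity)] at hLa
        linarith
      rw [div_le_iff₀ (by positivity)]
      have h13 : δ*(δ^2*L) = δ^3*L := by ring
      linarith
    linarith
  -- integral estimates
  have hIu : (∫ x in Set.Ioi (0:ℝ), GmaxAux.f lam M x)
      ≤ 2*lam*(1-t)^(M-1) + (1/a)*(Fb - Fa) + (1/b)*(1 - Fb) := by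
    rw [GmaxAux.split_integral hlam hM2 ha hab]
    have p1 := GmaxAux.piece1_bound hlam hM2 ha
    have p2 := GmaxAux.piece_mid_upper hlam hM2 ha hab
    have p3 := GmaxAux.piece_tail hlam hM2 hb
    rw [hFadef, hFbdef, htdef, hsdef]
    linarith
  have hIl : (1/b)*(Fb - Fa) ≤ ∫ x in Set.Ioi (0:ℝ), GmaxAux.f lam M x := by
    rw [GmaxAux.split_integral hlam hM2 ha hab]
    have p2 := GmaxAux.piece_mid_lower hlam hM2 ha hab
    have n1 := GmaxAux.piece_nonneg hlam M (measurableSet_Ioc (a := (0:ℝ)) (b := a))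
      Set.Ioc_subset_Ioi_self
    have n3 := GmaxAux.piece_nonneg hlam M (measurableSet_Ioi (a := b))
      (fun x hx => lt_trans hb hx)
    rw [hFadef, hFbdef, htdef, hsdef]
    linarith
  -- ratio
  have hIL : (∫ x in Set.Ioi (0:ℝ),
      (1 / x) * ((M : ℝ) * (1 - Real.exp (-lam * x)) ^ (M - 1)
        * (lam * Real.exp (-lam * x)))) = ∫ x in Set.Ioi (0:ℝ), GmaxAux.f lam M x := rfl
  rw [Real.dist_eq, hIL]
  obtain ⟨I, hIdef⟩ : ∃ x : ℝ, x = ∫ x in Set.Ioi (0:ℝ), GmaxAux.f lam M x := ⟨_, rfl⟩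
  rw [← hIdef] at hIu hIl ⊢
  have hratio : I / (lam / L) = I * (L / lam) := by
    field_simp
  rw [hratio]
  have hLlam : 0 < L / lam := by positivity
  have hRu : I * (L/lam) ≤ 1 + 4*δ := by
    have h0 : I * (L/lam) ≤ (2*lam*(1-t)^(M-1) + (1/a)*(Fb - Fa) + (1/b)*(1 - Fb)) * (L/lam) :=
      mul_le_mul_of_nonneg_right hIu hLlam.le
    have hexpand : (2*lam*(1-t)^(M-1) + (1/a)*(Fb - Fa) + (1/b)*(1 - Fb)) * (L/lam)
        = 2*L*(1-t)^(M-1) + (Fb - Fa)/(1-δ) + (1 - Fb)/(1+δ) := by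
      rw [hadef, hbdef]
      field_simp
    rw [hexpand] at h0
    have hmid : (Fb - Fa)/(1-δ) ≤ 1/(1-δ) := by
      gcongr
      linarith
    have hmid' : 1/(1-δ) ≤ 1 + 2*δ := by
      rw [div_le_iff₀ h1δ]
      have hh : δ*δ ≤ δ*(1/8) := mul_le_mul_of_nonneg_left hδ8 hδ0.le
      have key : (1+2*δ)*(1-δ) = 1 + δ - 2*(δ*δ) := by ring
      rw [key]
      linarith only [hh, hδ0]
    have htail : (1 - Fb)/(1+δ) ≤ δ := by
      have hnum : 1 - Fb ≤ η := by linarith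
      calc (1 - Fb)/(1+δ) ≤ η/(1+δ) := by gcongr
        _ ≤ η/1 := by
            apply div_le_div_of_nonneg_left hη0.le one_pos
            linarith
        _ = η := div_one η
        _ ≤ δ := hηδ
    linarith
  have hRl : 1 - 4*δ ≤ I * (L/lam) := by
    have h0 : ((1/b)*(Fb - Fa)) * (L/lam) ≤ I * (L/lam) :=
      mul_le_mul_of_nonneg_right hIl hLlam.le
    have hexpand : ((1/b)*(Fb - Fa)) * (L/lam) = (Fb - Fa)/(1+δ) := by
      rw [hbdef]
      field_simp
    rw [hexpand] at h0
    have h1 : (1 - 2*δ)/(1+δ) ≤ (Fb - Fa)/(1+δ) := by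
      gcongr ?_ / _
      linarith
    have h2 : 1 - 4*δ ≤ (1 - 2*δ)/(1+δ) := by
      rw [le_div_iff₀ h1δ']
      have key : (1-4*δ)*(1+δ) = 1 - 3*δ - 4*(δ*δ) := by ring
      rw [key]
      linarith only [mul_nonneg hδ0.le hδ0.le, hδ0]
    linarith
  rw [abs_sub_lt_iff]
  constructor <;> linarith
end

section
/- Let λ > 0 and b > 0. Suppose that for each integer M ≥ 1 the number ν_M > 0 satisfies ∫_{b²ν_M}^∞ (1/√(x·ν_M) − b/x) · M(1−e^{−λx})^{M−1} λ e^{−λx} dx = 1. Then ν_M → 0 as M → ∞. -/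
open MeasureTheory Filter Real

set_option maxHeartbeats 1000000

section aux

variable {lam : ℝ}

private lemma expderiv (x : ℝ) : HasDerivAt (fun y : ℝ => Real.exp (-lam * y))
    (Real.exp (-lam * x) * (-lam)) x := by
  have h1 : HasDerivAt (fun y : ℝ => -lam * y) (-lam) x := by
    simpa using (hasDerivAt_id x).const_mul (-lam)
  exact h1.exp

private lemma exp_tendsto (hlam : 0 < lam) :
    Tendsto (fun x : ℝ => Real.exp (-lam * x)) atTop (nhds 0) := by
  simpa using Filter.Tendsto.const_mul_atTop hlam tendsto_id

/-- the density of the max of M iid exponentials -/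
private noncomputable def pdens (lam : ℝ) (M : ℕ) (x : ℝ) : ℝ :=
  (M : ℝ) * (1 - Real.exp (-lam * x)) ^ (M - 1) * (lam * Real.exp (-lam * x))

private lemma pdens_nonneg (hlam : 0 < lam) (M : ℕ) {x : ℝ} (hx : 0 ≤ x) :
    0 ≤ pdens lam M x := by
  have he : Real.exp (-lam * x) ≤ 1 := by
    apply Real.exp_le_one_iff.mpr
    nlinarith
  have he0 : 0 ≤ 1 - Real.exp (-lam * x) := by linarith
  have := (Real.exp_pos (-lam * x)).le
  unfold pdens
  exact mul_nonneg (mul_nonneg (Nat.cast_nonneg M) (pow_nonneg he0 _))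
    (mul_nonneg hlam.le this)

private lemma pdens_int (hlam : 0 < lam) (M : ℕ) {a : ℝ} (ha : 0 ≤ a) :
    IntegrableOn (pdens lam M) (Set.Ioi a) := by
  apply Integrable.mono' (g := fun x => ((M : ℝ) * lam) * Real.exp (-lam * x))
  · exact ((exp_neg_integrableOn_Ioi a hlam).const_mul _)
  · apply Continuous.aestronglyMeasurable
    unfold pdens
    continuity
  · filter_upwards [ae_restrict_mem measurableSet_Ioi] with x hx
    have hx0 : (0:ℝ) ≤ x := le_trans ha (le_of_lt hx)
    rw [Real.norm_of_nonneg (pdens_nonneg hlam M hx0)]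
    have he : Real.exp (-lam * x) ≤ 1 := by
      apply Real.exp_le_one_iff.mpr; nlinarith
    have he0 : 0 ≤ 1 - Real.exp (-lam * x) := by linarith
    have hep := (Real.exp_pos (-lam * x)).le
    have hp : (1 - Real.exp (-lam * x)) ^ (M - 1) ≤ 1 :=
      pow_le_one₀ he0 (by linarith)
    unfold pdens
    calc (M : ℝ) * (1 - Real.exp (-lam * x)) ^ (M - 1) * (lam * Real.exp (-lam * x))
        ≤ (M : ℝ) * 1 * (lam * Real.exp (-lam * x)) := by
          apply mul_le_mul_of_nonneg_right _ (by positivity)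
          exact mul_le_mul_of_nonneg_left hp (Nat.cast_nonneg M)
      _ = (M : ℝ) * lam * Real.exp (-lam * x) := by ring

private lemma pdens_deriv (M : ℕ) (x : ℝ) :
    HasDerivAt (fun y : ℝ => (1 - Real.exp (-lam * y)) ^ M) (pdens lam M x) x := by
  have h1 : HasDerivAt (fun y : ℝ => 1 - Real.exp (-lam * y))
      (-(Real.exp (-lam * x) * (-lam))) x := (expderiv x).const_sub 1
  have h2 := h1.pow M
  refine h2.congr_deriv ?_
  unfold pdens; ring

private lemma pdens_integral_one (hlam : 0 < lam) {M : ℕ} (hM : 1 ≤ M) :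
    ∫ x in Set.Ioi (0:ℝ), pdens lam M x = 1 := by
  have hF : Tendsto (fun x : ℝ => (1 - Real.exp (-lam * x)) ^ M) atTop (nhds 1) := by
    have h0 : Tendsto (fun x : ℝ => 1 - Real.exp (-lam * x)) atTop (nhds 1) := by
      simpa using tendsto_const_nhds.sub (exp_tendsto hlam)
    simpa using h0.pow M
  have := integral_Ioi_of_hasDerivAt_of_tendsto (a := 0)
    (f := fun y : ℝ => (1 - Real.exp (-lam * y)) ^ M) (f' := pdens lam M)
    ((pdens_deriv M 0).continuousAt.continuousWithinAt)
    (fun x _ => pdens_deriv M x) (pdens_int hlam M le_rfl) hF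
  rw [this]
  simp [zero_pow (by omega : M ≠ 0)]

private lemma exp_integral (hlam : 0 < lam) (a : ℝ) :
    ∫ x in Set.Ioi a, Real.exp (-lam * x) = Real.exp (-lam * a) / lam := by
  have hd : ∀ x : ℝ, HasDerivAt (fun y : ℝ => -Real.exp (-lam * y) / lam)
      (Real.exp (-lam * x)) x := by
    intro x
    have := ((expderiv (lam := lam) x).neg).div_const lam
    refine this.congr_deriv ?_
    rw [mul_neg, neg_neg, mul_div_assoc, div_self hlam.ne', mul_one]
  have hF : Tendsto (fun y : ℝ => -Real.exp (-lam * y) / lam) atTop (nhds 0) := by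
    have := ((exp_tendsto hlam).neg).div_const lam
    simpa using this
  have := integral_Ioi_of_hasDerivAt_of_tendsto (a := a)
    ((hd a).continuousAt.continuousWithinAt)
    (fun x _ => hd x) (exp_neg_integrableOn_Ioi a hlam) hF
  rw [this]; ring

end aux

/-- For the multi-sensor diversity scheme under optimal water-filling power
allocation with unit average power, the Lagrange multiplier `ν_M` defined by
`∫_{b²ν_M}^∞ (1/√(xν_M) − b/x) M(1-e^{-λx})^{M-1} λe^{-λx} dx = 1`
tends to `0` as `M → ∞`. -/
theorem diversity_lagrange_tendsto_zero (lam b : ℝ) (hlam : 0 < lam) (hb : 0 < b)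
    (ν : ℕ → ℝ) (hν : ∀ M : ℕ, 1 ≤ M → 0 < ν M)
    (hpower : ∀ M : ℕ, 1 ≤ M →
      (∫ x in Set.Ioi (b ^ 2 * ν M),
          (1 / Real.sqrt (x * ν M) - b / x) *
            ((M : ℝ) * (1 - Real.exp (-lam * x)) ^ (M - 1)
              * (lam * Real.exp (-lam * x)))) = 1) :
    Tendsto ν atTop (nhds 0) := by
  rw [Metric.tendsto_atTop]
  intro ε hε
  set T : ℝ := 4 / ε + 1 with hT
  have hT0 : 0 < T := by positivity
  have hTε : 4 < T * ε := by
    have : T * ε = 4 + ε := by rw [hT]; field_simp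
    linarith
  set r : ℝ := 1 - Real.exp (-lam * T) with hr
  have hlamT : 0 < lam * T := mul_pos hlam hT0
  have hr0 : 0 ≤ r := by
    have : Real.exp (-lam * T) ≤ 1 := Real.exp_le_one_iff.mpr (by linarith)
    rw [hr]; linarith
  have hr1 : r < 1 := by
    have := Real.exp_pos (-lam * T); rw [hr]; linarith
  set c : ℝ := 1 / (b * ε) with hc
  have hc0 : 0 ≤ c := by positivity
  -- geometric decay of c * M * r^(M-1)
  have hgeo : Tendsto (fun M : ℕ => c * ((M : ℝ) * r ^ (M - 1))) atTop (nhds 0) := by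
    have h1 : Tendsto (fun n : ℕ => ((n : ℝ) + 1) * r ^ n) atTop (nhds 0) := by
      have := (tendsto_self_mul_const_pow_of_lt_one hr0 hr1).add
        (tendsto_pow_atTop_nhds_zero_of_lt_one hr0 hr1)
      simpa [add_mul] using this
    have h2 : Tendsto (fun M : ℕ => ((M - 1 : ℕ) : ℝ) + 1) atTop atTop := by
      apply tendsto_atTop_add_const_right
      exact tendsto_natCast_atTop_atTop.comp (tendsto_sub_atTop_nat 1)
    have h3 : Tendsto (fun M : ℕ => (((M - 1 : ℕ) : ℝ) + 1) * r ^ (M - 1)) atTop (nhds 0) :=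
      h1.comp (tendsto_sub_atTop_nat 1)
    have h4 : Tendsto (fun M : ℕ => (M : ℝ) * r ^ (M - 1)) atTop (nhds 0) := by
      apply h3.congr'
      filter_upwards [eventually_ge_atTop 1] with M hM
      congr 1
      have : ((M - 1 : ℕ) : ℝ) = (M : ℝ) - 1 := by
        rw [Nat.cast_sub hM]; simp
      rw [this]; ring
    simpa using h4.const_mul c
  have hhalf : (0:ℝ) < 1/2 := by norm_num
  obtain ⟨N, hN⟩ := (Filter.eventually_atTop).mp
    (hgeo.eventually (eventually_lt_nhds hhalf))
  refine ⟨max N 1, fun M hM => ?_⟩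
  have hM1 : 1 ≤ M := le_trans (le_max_right N 1) hM
  have hMN : N ≤ M := le_trans (le_max_left N 1) hM
  have hνM : 0 < ν M := hν M hM1
  rw [Real.dist_eq, sub_zero, abs_of_pos hνM]
  by_contra hcon
  push_neg at hcon -- ε ≤ ν M
  -- derive contradiction from the power constraint
  set a : ℝ := b ^ 2 * ν M with ha
  have ha0 : 0 < a := by rw [ha]; positivity
  set f : ℝ → ℝ := fun x =>
    (1 / Real.sqrt (x * ν M) - b / x) * pdens lam M x with hfdef
  have hf1 : ∫ x in Set.Ioi a, f x = 1 := hpower M hM1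
  have hf_int : IntegrableOn f (Set.Ioi a) := integrable_of_integral_eq_one hf1
  set C1 : ℝ := c * r ^ (M - 1) * (M : ℝ) * lam with hC1
  set C2 : ℝ := 1 / Real.sqrt (T * ε) with hC2
  have hsqTε : 2 < Real.sqrt (T * ε) := by
    have := Real.lt_sqrt (x := 2) (y := T * ε) (by norm_num)
    rw [this]; nlinarith [hTε]
  have hC2pos : 0 < C2 := by rw [hC2]; positivity
  have hC2half : C2 < 1/2 := by
    rw [hC2]
    rw [div_lt_div_iff₀ (by linarith) (by norm_num)]
    linarith
  set g : ℝ → ℝ := fun x => C1 * Real.exp (-lam * x) + C2 * pdens lam M x with hgdef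
  have hg_int : IntegrableOn g (Set.Ioi a) :=
    ((exp_neg_integrableOn_Ioi a hlam).const_mul C1).add
      ((pdens_int hlam M ha0.le).const_mul C2)
  have hle : ∀ x ∈ Set.Ioi a, f x ≤ g x := by
    intro x hx
    rw [Set.mem_Ioi, ha] at hx
    have hx0 : 0 < x := lt_trans ha0 (ha ▸ hx)
    have hp0 : 0 ≤ pdens lam M x := pdens_nonneg hlam M hx0.le
    have hxν : b ^ 2 * ε ^ 2 < x * ν M := by
      nlinarith [mul_lt_mul_of_pos_right hx hνM, mul_le_mul hcon hcon hε.le hνM.le,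
        mul_pos hb hb]
    have hxν0 : 0 < x * ν M := lt_trans (by positivity) hxν
    have hsx : b * ε < Real.sqrt (x * ν M) := by
      have : b * ε = Real.sqrt ((b * ε) ^ 2) := (Real.sqrt_sq (by positivity)).symm
      rw [this]
      apply Real.sqrt_lt_sqrt (by positivity)
      have hbe : (b * ε) ^ 2 = b ^ 2 * ε ^ 2 := by ring
      linarith
    have hstep1 : f x ≤ 1 / Real.sqrt (x * ν M) * pdens lam M x := by
      apply mul_le_mul_of_nonneg_right _ hp0
      have : 0 ≤ b / x := by positivity
      linarith
    rcases le_or_gt x T with hxT | hxT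
    · -- x ≤ T : use the first term
      have h1 : 1 / Real.sqrt (x * ν M) ≤ c := by
        rw [hc]
        apply one_div_le_one_div_of_le (by positivity) hsx.le
      have hexp1 : Real.exp (-lam * x) ≤ 1 :=
        Real.exp_le_one_iff.mpr (by have := mul_pos hlam hx0; linarith)
      have h2 : pdens lam M x ≤ r ^ (M - 1) * ((M : ℝ) * (lam * Real.exp (-lam * x))) := by
        unfold pdens
        have hee : Real.exp (-lam * T) ≤ Real.exp (-lam * x) :=
          Real.exp_le_exp.mpr (by have := mul_le_mul_of_nonneg_left hxT hlam.le; linarith)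
        have h1e : (1 - Real.exp (-lam * x)) ^ (M - 1) ≤ r ^ (M - 1) := by
          apply pow_le_pow_left₀ (by linarith) (by rw [hr]; linarith)
        have hpos : 0 ≤ (M : ℝ) * (lam * Real.exp (-lam * x)) := by positivity
        calc (M : ℝ) * (1 - Real.exp (-lam * x)) ^ (M - 1) * (lam * Real.exp (-lam * x))
            = (1 - Real.exp (-lam * x)) ^ (M - 1) * ((M : ℝ) * (lam * Real.exp (-lam * x))) := by
              ring
          _ ≤ r ^ (M - 1) * ((M : ℝ) * (lam * Real.exp (-lam * x))) :=
              mul_le_mul_of_nonneg_right h1e hpos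
      have : f x ≤ C1 * Real.exp (-lam * x) := by
        calc f x ≤ 1 / Real.sqrt (x * ν M) * pdens lam M x := hstep1
          _ ≤ c * (r ^ (M - 1) * ((M : ℝ) * (lam * Real.exp (-lam * x)))) := by
              apply mul_le_mul h1 h2 hp0 hc0
          _ = C1 * Real.exp (-lam * x) := by rw [hC1]; ring
      have : f x ≤ g x := by
        rw [hgdef]
        have : 0 ≤ C2 * pdens lam M x := by positivity
        dsimp only
        linarith
      exact this
    · -- T < x : use the second term
      have h1 : 1 / Real.sqrt (x * ν M) ≤ C2 := by
        rw [hC2]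
        apply one_div_le_one_div_of_le (by linarith)
        apply Real.sqrt_le_sqrt
        have h5 := mul_lt_mul_of_pos_right hxT hε
        have h6 := mul_le_mul_of_nonneg_left hcon hx0.le
        nlinarith [h5, h6]
      have : f x ≤ C2 * pdens lam M x :=
        le_trans hstep1 (mul_le_mul_of_nonneg_right h1 hp0)
      rw [hgdef]
      have hC1e : 0 ≤ C1 * Real.exp (-lam * x) := by
        have := Real.exp_pos (-lam * x)
        have : 0 ≤ C1 := by rw [hC1]; positivity
        positivity
      dsimp only
      linarith
  have hmono : ∫ x in Set.Ioi a, f x ≤ ∫ x in Set.Ioi a, g x :=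
    setIntegral_mono_on hf_int hg_int measurableSet_Ioi hle
  have hgval : ∫ x in Set.Ioi a, g x
      = C1 * (Real.exp (-lam * a) / lam) + C2 * ∫ x in Set.Ioi a, pdens lam M x := by
    rw [hgdef]
    rw [integral_add ((exp_neg_integrableOn_Ioi a hlam).const_mul C1)
      ((pdens_int hlam M ha0.le).const_mul C2)]
    rw [integral_const_mul, integral_const_mul, exp_integral hlam]
  have hpbound : ∫ x in Set.Ioi a, pdens lam M x ≤ 1 := by
    rw [← pdens_integral_one hlam hM1]
    apply setIntegral_mono_set (pdens_int hlam M le_rfl)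
    · filter_upwards [ae_restrict_mem measurableSet_Ioi] with x hx
      exact pdens_nonneg hlam M (le_of_lt hx)
    · exact HasSubset.Subset.eventuallyLE (Set.Ioi_subset_Ioi ha0.le)
  have hexpa : Real.exp (-lam * a) ≤ 1 :=
    Real.exp_le_one_iff.mpr (by have := mul_pos hlam ha0; linarith)
  have hC10 : 0 ≤ C1 := by rw [hC1]; positivity
  have hfinal : C1 * (Real.exp (-lam * a) / lam) + C2 * ∫ x in Set.Ioi a, pdens lam M x
      < 1 := by
    have h1 : C1 * (Real.exp (-lam * a) / lam) ≤ C1 / lam := by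
      have h0 : Real.exp (-lam * a) / lam ≤ 1 / lam :=
        (div_le_div_iff_of_pos_right hlam).mpr hexpa
      calc C1 * (Real.exp (-lam * a) / lam) ≤ C1 * (1 / lam) :=
            mul_le_mul_of_nonneg_left h0 hC10
        _ = C1 / lam := by ring
    have h2 : C1 / lam = c * ((M : ℝ) * r ^ (M - 1)) := by
      rw [hC1]; field_simp
    have h3 : c * ((M : ℝ) * r ^ (M - 1)) < 1/2 := hN M hMN
    have h4 : C2 * ∫ x in Set.Ioi a, pdens lam M x ≤ C2 :=
      mul_le_of_le_one_right hC2pos.le hpbound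
    linarith [h1, h4, hC2half, h2 ▸ h1]
  rw [hf1, hgval] at hmono
  linarith
end

section
/- Let λ > 0 and b > 0. Suppose that for each integer M ≥ 1 the number ν_M > 0 satisfies ∫_{b²ν_M}^∞ (1/√(x·ν_M) − b/x) · M(1−e^{−λx})^{M−1} λ e^{−λx} dx = 1. Then ν_M is asymptotically equivalent to λ/ln(M) as M → ∞, i.e. ν_M · ln(M)/λ → 1. -/
open MeasureTheory Filter Real Set

noncomputable def pdfM (lam : ℝ) (M : ℕ) (x : ℝ) : ℝ :=
  (M : ℝ) * (1 - Real.exp (-lam * x)) ^ (M - 1) * (lam * Real.exp (-lam * x))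

noncomputable def cdfM (lam : ℝ) (M : ℕ) (x : ℝ) : ℝ := (1 - Real.exp (-lam * x)) ^ M

lemma hasDerivAt_cdfM (lam : ℝ) (M : ℕ) (x : ℝ) :
    HasDerivAt (cdfM lam M) (pdfM lam M x) x := by
  have h1 : HasDerivAt (fun y : ℝ => -lam * y) (-lam) x := by
    simpa using (hasDerivAt_id x).const_mul (-lam)
  have h3 : HasDerivAt (cdfM lam M) _ x := ((h1.exp).const_sub 1).pow M
  convert h3 using 1
  unfold pdfM
  ring

lemma continuous_pdfM (lam : ℝ) (M : ℕ) : Continuous (pdfM lam M) := by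
  unfold pdfM
  fun_prop

lemma one_sub_exp_mem (lam x : ℝ) (hlam : 0 < lam) (hx : 0 ≤ x) :
    0 ≤ 1 - Real.exp (-lam * x) ∧ 1 - Real.exp (-lam * x) ≤ 1 := by
  constructor
  · have : Real.exp (-lam * x) ≤ 1 := by
      rw [Real.exp_le_one_iff]; nlinarith
    linarith
  · have := Real.exp_pos (-lam * x); linarith

lemma pdfM_nonneg (lam : ℝ) (M : ℕ) (x : ℝ) (hlam : 0 < lam) (hx : 0 ≤ x) :
    0 ≤ pdfM lam M x := by
  have h := (one_sub_exp_mem lam x hlam hx).1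
  have := Real.exp_pos (-lam * x)
  unfold pdfM
  positivity

lemma cdfM_mem (lam : ℝ) (M : ℕ) (x : ℝ) (hlam : 0 < lam) (hx : 0 ≤ x) :
    0 ≤ cdfM lam M x ∧ cdfM lam M x ≤ 1 := by
  obtain ⟨h0, h1⟩ := one_sub_exp_mem lam x hlam hx
  exact ⟨pow_nonneg h0 M, pow_le_one₀ h0 h1⟩

lemma pdfM_integrableOn (lam : ℝ) (hlam : 0 < lam) (M : ℕ) (t : ℝ) (ht : 0 ≤ t) :
    IntegrableOn (pdfM lam M) (Set.Ioi t) := by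
  have hg : IntegrableOn (fun x => (M : ℝ) * (lam * Real.exp (-lam * x))) (Set.Ioi t) := by
    have := exp_neg_integrableOn_Ioi t hlam
    exact ((this.const_mul lam).const_mul (M : ℝ))
  apply hg.mono' ((continuous_pdfM lam M).aestronglyMeasurable.restrict)
  rw [ae_restrict_iff' measurableSet_Ioi]
  filter_upwards with x hx
  have hx0 : (0:ℝ) ≤ x := le_trans ht (le_of_lt hx)
  obtain ⟨h0, h1⟩ := one_sub_exp_mem lam x hlam hx0
  have hp := pdfM_nonneg lam M x hlam hx0
  rw [Real.norm_eq_abs, abs_of_nonneg hp]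
  unfold pdfM
  have he := (Real.exp_pos (-lam * x)).le
  have hpow : (1 - Real.exp (-lam * x)) ^ (M - 1) ≤ 1 := pow_le_one₀ h0 h1
  have : (0:ℝ) ≤ lam * Real.exp (-lam * x) := by positivity
  have hM0 : (0:ℝ) ≤ (M:ℝ) := Nat.cast_nonneg M
  nlinarith [mul_nonneg hM0 this]

lemma cdfM_tendsto_atTop (lam : ℝ) (hlam : 0 < lam) (M : ℕ) :
    Tendsto (cdfM lam M) atTop (nhds 1) := by
  have h1 : Tendsto (fun x : ℝ => -lam * x) atTop atBot :=
    Tendsto.const_mul_atTop_of_neg (by linarith) tendsto_id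
  have h2 : Tendsto (fun x : ℝ => 1 - Real.exp (-lam * x)) atTop (nhds 1) := by
    have := Real.tendsto_exp_atBot.comp h1
    simpa using (tendsto_const_nhds.sub this)
  have h3 := h2.pow M
  unfold cdfM
  simpa [neg_mul] using h3

lemma integral_pdfM_Ioi (lam : ℝ) (hlam : 0 < lam) (M : ℕ) (t : ℝ) (ht : 0 ≤ t) :
    ∫ x in Set.Ioi t, pdfM lam M x = 1 - cdfM lam M t := by
  apply integral_Ioi_of_hasDerivAt_of_tendsto
  · exact ((hasDerivAt_cdfM lam M t).continuousAt).continuousWithinAt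
  · exact fun x _ => hasDerivAt_cdfM lam M x
  · exact pdfM_integrableOn lam hlam M t ht
  · exact cdfM_tendsto_atTop lam hlam M

lemma integral_pdfM_Ioc (lam : ℝ) (hlam : 0 < lam) (M : ℕ) (a A : ℝ) (h : a ≤ A) :
    ∫ x in Set.Ioc a A, pdfM lam M x = cdfM lam M A - cdfM lam M a := by
  rw [← intervalIntegral.integral_of_le h]
  exact intervalIntegral.integral_eq_sub_of_hasDerivAt
    (fun x _ => hasDerivAt_cdfM lam M x)
    ((continuous_pdfM lam M).intervalIntegrable a A)

lemma natCast_mul_exp_eq (θ : ℝ) :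
    (fun M : ℕ => (M : ℝ) * Real.exp (-(θ * Real.log M)))
      =ᶠ[atTop] (fun M : ℕ => Real.exp ((1 - θ) * Real.log M)) := by
  filter_upwards [eventually_ge_atTop 1] with M hM
  have hM0 : (0:ℝ) < M := by exact_mod_cast hM
  rw [← Real.exp_log hM0, ← Real.exp_add]
  · congr 1
    rw [Real.log_exp]
    ring

lemma tendsto_exp_coeff_neg (c : ℝ) (hc : c < 0) :
    Tendsto (fun M : ℕ => Real.exp (c * Real.log M)) atTop (nhds 0) := by
  have h1 : Tendsto (fun M : ℕ => c * Real.log M) atTop atBot :=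
    Tendsto.const_mul_atTop_of_neg hc (tendsto_log_atTop.comp tendsto_natCast_atTop_atTop)
  exact Real.tendsto_exp_atBot.comp h1

lemma tendsto_M_mul_exp (θ : ℝ) (hθ : 1 < θ) :
    Tendsto (fun M : ℕ => (M : ℝ) * Real.exp (-(θ * Real.log M))) atTop (nhds 0) := by
  apply Tendsto.congr' (natCast_mul_exp_eq θ).symm
  exact tendsto_exp_coeff_neg (1 - θ) (by linarith)

lemma tendsto_pow_one_sub_exp_gt (θ : ℝ) (hθ : 1 < θ) :
    Tendsto (fun M : ℕ => (1 - Real.exp (-(θ * Real.log M))) ^ M) atTop (nhds 1) := by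
  apply tendsto_of_tendsto_of_tendsto_of_le_of_le'
    (g := fun M : ℕ => 1 - (M : ℝ) * Real.exp (-(θ * Real.log M))) (h := fun _ : ℕ => (1:ℝ))
  · simpa using tendsto_const_nhds.sub (tendsto_M_mul_exp θ hθ)
  · exact tendsto_const_nhds
  · filter_upwards [eventually_ge_atTop 1] with M hM
    have h := one_add_mul_le_pow (a := -Real.exp (-(θ * Real.log M))) (by
      have hu : Real.exp (-(θ * Real.log M)) ≤ 1 := by
        rw [Real.exp_le_one_iff]
        have : (0:ℝ) ≤ Real.log M := Real.log_natCast_nonneg M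
        nlinarith
      linarith) M
    calc 1 - (M:ℝ) * Real.exp (-(θ * Real.log M))
        = 1 + (M:ℝ) * (-Real.exp (-(θ * Real.log M))) := by ring
      _ ≤ (1 + -Real.exp (-(θ * Real.log M))) ^ M := h
      _ = (1 - Real.exp (-(θ * Real.log M))) ^ M := by ring_nf
  · filter_upwards [eventually_ge_atTop 1] with M hM
    have hu : Real.exp (-(θ * Real.log M)) ≤ 1 := by
      rw [Real.exp_le_one_iff]
      have : (0:ℝ) ≤ Real.log M := Real.log_natCast_nonneg M
      nlinarith
    have := (Real.exp_pos (-(θ * Real.log M))).le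
    exact pow_le_one₀ (by linarith) (by linarith)

lemma tendsto_log_mul_exp_neg (η : ℝ) (hη : 0 < η) :
    Tendsto (fun M : ℕ => Real.log M * Real.exp (-(η * Real.log M))) atTop (nhds 0) := by
  have base := Real.tendsto_pow_mul_exp_neg_atTop_nhds_zero 1
  have hzy : Tendsto (fun M : ℕ => η * Real.log M) atTop atTop :=
    (tendsto_log_atTop.comp tendsto_natCast_atTop_atTop).const_mul_atTop hη
  have comp := base.comp hzy
  have : Tendsto (fun M : ℕ => (1/η) * ((η * Real.log M) ^ 1 * Real.exp (-(η * Real.log M))))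
      atTop (nhds ((1/η) * 0)) := Tendsto.const_mul _ comp
  simp only [mul_zero] at this
  apply this.congr
  intro M
  field_simp

lemma pow_one_sub_exp_le (θ : ℝ) (hθ0 : 0 < θ) (hθ1 : θ < 1) :
    ∀ᶠ M : ℕ in atTop, (1 - Real.exp (-(θ * Real.log M))) ^ M
      ≤ Real.exp (-((1 - θ) * Real.log M)) := by
  filter_upwards [eventually_ge_atTop 1, natCast_mul_exp_eq θ] with M hM heq
  set u := Real.exp (-(θ * Real.log M)) with hu
  have hlog : (0:ℝ) ≤ Real.log M := Real.log_natCast_nonneg M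
  have hu1 : u ≤ 1 := by rw [hu, Real.exp_le_one_iff]; nlinarith
  have hu0 : 0 < u := Real.exp_pos _
  have step1 : (1 - u) ^ M ≤ Real.exp (-u) ^ M := by
    apply pow_le_pow_left₀ (by linarith)
    have := Real.add_one_le_exp (-u)
    linarith
  have step2 : Real.exp (-u) ^ M = Real.exp (-((M:ℝ) * u)) := by
    rw [← Real.exp_nat_mul]; congr 1; ring
  have step3 : Real.exp (-((M:ℝ) * u)) ≤ Real.exp (-((1 - θ) * Real.log M)) := by
    apply Real.exp_le_exp.mpr
    have : (1 - θ) * Real.log M ≤ (M:ℝ) * u := by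
      rw [heq]
      have := Real.add_one_le_exp ((1 - θ) * Real.log M)
      linarith
    linarith
  calc (1 - u) ^ M ≤ Real.exp (-u) ^ M := step1
    _ = Real.exp (-((M:ℝ) * u)) := step2
    _ ≤ Real.exp (-((1 - θ) * Real.log M)) := step3

lemma tendsto_pow_one_sub_exp_lt_mul_log (θ : ℝ) (hθ0 : 0 < θ) (hθ1 : θ < 1) :
    Tendsto (fun M : ℕ => (1 - Real.exp (-(θ * Real.log M))) ^ M * Real.log M)
      atTop (nhds 0) := by
  apply tendsto_of_tendsto_of_tendsto_of_le_of_le'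
    (g := fun _ : ℕ => (0:ℝ))
    (h := fun M : ℕ => Real.log M * Real.exp (-((1 - θ) * Real.log M)))
  · exact tendsto_const_nhds
  · exact tendsto_log_mul_exp_neg (1 - θ) (by linarith)
  · filter_upwards [eventually_ge_atTop 1] with M hM
    have hlog : (0:ℝ) ≤ Real.log M := Real.log_natCast_nonneg M
    have hu1 : Real.exp (-(θ * Real.log M)) ≤ 1 := by
      rw [Real.exp_le_one_iff]; nlinarith
    have h0 : (0:ℝ) ≤ 1 - Real.exp (-(θ * Real.log M)) := by linarith
    positivity
  · filter_upwards [pow_one_sub_exp_le θ hθ0 hθ1, eventually_ge_atTop 1] with M h1 hM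
    have hlog : (0:ℝ) ≤ Real.log M := Real.log_natCast_nonneg M
    calc (1 - Real.exp (-(θ * Real.log M))) ^ M * Real.log M
        ≤ Real.exp (-((1 - θ) * Real.log M)) * Real.log M := by
          exact mul_le_mul_of_nonneg_right h1 hlog
      _ = Real.log M * Real.exp (-((1 - θ) * Real.log M)) := by ring

lemma tendsto_pow_one_sub_exp_lt (θ : ℝ) (hθ0 : 0 < θ) (hθ1 : θ < 1) :
    Tendsto (fun M : ℕ => (1 - Real.exp (-(θ * Real.log M))) ^ M) atTop (nhds 0) := by
  apply tendsto_of_tendsto_of_tendsto_of_le_of_le'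
    (g := fun _ : ℕ => (0:ℝ))
    (h := fun M : ℕ => (1 - Real.exp (-(θ * Real.log M))) ^ M * Real.log M)
  · exact tendsto_const_nhds
  · exact tendsto_pow_one_sub_exp_lt_mul_log θ hθ0 hθ1
  · filter_upwards [eventually_ge_atTop 1] with M hM
    have hlog : (0:ℝ) ≤ Real.log M := Real.log_natCast_nonneg M
    have hu1 : Real.exp (-(θ * Real.log M)) ≤ 1 := by
      rw [Real.exp_le_one_iff]; nlinarith
    have h0 : (0:ℝ) ≤ 1 - Real.exp (-(θ * Real.log M)) := by linarith
    positivity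
  · filter_upwards [eventually_ge_atTop 3] with M hM
    have hlog : (1:ℝ) ≤ Real.log M := by
      rw [Real.le_log_iff_exp_le (by positivity)]
      calc Real.exp 1 ≤ 2.7182818286 := (Real.exp_one_lt_d9).le
        _ ≤ (M:ℝ) := by
          have : (3:ℝ) ≤ (M:ℝ) := by exact_mod_cast hM
          linarith
    have hu1 : Real.exp (-(θ * Real.log M)) ≤ 1 := by
      rw [Real.exp_le_one_iff]; nlinarith
    nlinarith [pow_nonneg (by linarith : (0:ℝ) ≤ 1 - Real.exp (-(θ * Real.log M))) M]

set_option maxHeartbeats 1600000 in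
/-- For the multi-sensor diversity scheme under optimal water-filling power
allocation with unit average power, the Lagrange multiplier `ν_M` defined by
`∫_{b²ν_M}^∞ (1/√(xν_M) − b/x) M(1-e^{-λx})^{M-1} λe^{-λx} dx = 1`
satisfies `ν_M ~ λ/ln M` as `M → ∞`, i.e. `ν_M ln(M)/λ → 1`. -/
theorem diversity_lagrange_asymptotics (lam b : ℝ) (hlam : 0 < lam) (hb : 0 < b)
    (ν : ℕ → ℝ) (hν : ∀ M : ℕ, 1 ≤ M → 0 < ν M)
    (hpower : ∀ M : ℕ, 1 ≤ M →
      (∫ x in Set.Ioi (b ^ 2 * ν M),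
          (1 / Real.sqrt (x * ν M) - b / x) *
            ((M : ℝ) * (1 - Real.exp (-lam * x)) ^ (M - 1)
              * (lam * Real.exp (-lam * x)))) = 1) :
    Tendsto (fun M : ℕ => ν M * Real.log M / lam) atTop (nhds 1) := by
  have hF : ∀ M : ℕ, 1 ≤ M →
      (∫ x in Set.Ioi (b ^ 2 * ν M), (1 / Real.sqrt (x * ν M) - b / x) * pdfM lam M x) = 1 :=
    fun M hM => hpower M hM
  have hintf : ∀ M : ℕ, 1 ≤ M →
      IntegrableOn (fun x => (1 / Real.sqrt (x * ν M) - b / x) * pdfM lam M x)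
        (Set.Ioi (b ^ 2 * ν M)) := by
    intro M hM
    by_contra h
    have h2 := hF M hM
    rw [MeasureTheory.integral_undef h] at h2
    norm_num at h2
  have hf_nonneg : ∀ M : ℕ, 1 ≤ M → ∀ x ∈ Set.Ioi (b ^ 2 * ν M),
      0 ≤ (1 / Real.sqrt (x * ν M) - b / x) * pdfM lam M x := by
    intro M hM x hx
    have hνM := hν M hM
    have hs0 : 0 < b ^ 2 * ν M := by positivity
    have hx0 : 0 < x := lt_trans hs0 hx
    have hp : 0 ≤ pdfM lam M x := pdfM_nonneg lam M x hlam hx0.le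
    apply mul_nonneg _ hp
    rw [sub_nonneg, div_le_div_iff₀ hx0 (by positivity : (0:ℝ) < Real.sqrt (x * ν M))]
    have hle : Real.sqrt (x * ν M) ≤ x / b := by
      rw [show x / b = Real.sqrt ((x / b) ^ 2) from (Real.sqrt_sq (by positivity)).symm]
      apply Real.sqrt_le_sqrt
      rw [div_pow]
      rw [le_div_iff₀ (by positivity)]
      have hx' : b ^ 2 * ν M < x := hx
      nlinarith
    have h2 := mul_le_mul_of_nonneg_left hle hb.le
    have h3 : b * (x / b) = x := by field_simp
    linarith
  have hbν : ∀ M : ℕ, 1 ≤ M → b * ν M ≤ 1 := by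
    intro M hM
    have hνM := hν M hM
    have hs0 : 0 < b ^ 2 * ν M := by positivity
    have hkey : (1:ℝ) ≤ (b * ν M)⁻¹ := by
      have hmono : (∫ x in Set.Ioi (b ^ 2 * ν M), (1 / Real.sqrt (x * ν M) - b / x) * pdfM lam M x)
          ≤ ∫ x in Set.Ioi (b ^ 2 * ν M), (b * ν M)⁻¹ * pdfM lam M x := by
        apply setIntegral_mono_on (hintf M hM)
          ((pdfM_integrableOn lam hlam M _ hs0.le).const_mul _) measurableSet_Ioi
        intro x hx
        have hx' : b ^ 2 * ν M < x := hx
        have hx0 : 0 < x := lt_trans hs0 hx'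
        have hp : 0 ≤ pdfM lam M x := pdfM_nonneg lam M x hlam hx0.le
        apply mul_le_mul_of_nonneg_right _ hp
        have hsq : b * ν M ≤ Real.sqrt (x * ν M) := by
          rw [show b * ν M = Real.sqrt ((b * ν M) ^ 2) from (Real.sqrt_sq (by positivity)).symm]
          apply Real.sqrt_le_sqrt
          nlinarith
        have h1 := one_div_le_one_div_of_le (show (0:ℝ) < b * ν M by positivity) hsq
        have h2 : 0 ≤ b / x := by positivity
        rw [inv_eq_one_div]
        linarith
      rw [hF M hM, MeasureTheory.integral_const_mul,
        integral_pdfM_Ioi lam hlam M _ hs0.le] at hmono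
      have hcdf := cdfM_mem lam M (b ^ 2 * ν M) hlam hs0.le
      have hinv : (0:ℝ) ≤ (b * ν M)⁻¹ := by positivity
      nlinarith
    rw [one_le_inv_iff₀] at hkey
    exact hkey.2
  have hloglim : Tendsto (fun M : ℕ => Real.log M) atTop atTop :=
    tendsto_log_atTop.comp tendsto_natCast_atTop_atTop
  have lower : ∀ t : ℝ, t < 1 → ∀ᶠ M : ℕ in atTop, t < ν M * Real.log M / lam := by
    intro t ht
    rcases le_or_gt t 0 with ht0 | ht0
    · filter_upwards [eventually_ge_atTop 2] with M hM
      have hνM := hν M (by omega)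
      have hlog : 0 < Real.log M := Real.log_pos (by exact_mod_cast hM)
      have : 0 < ν M * Real.log M / lam := by positivity
      linarith
    · set t' : ℝ := (1 + t) / 2 with ht'def
      have htt' : t < t' := by rw [ht'def]; linarith
      have ht'1 : t' < 1 := by rw [ht'def]; linarith
      have ht'0 : 0 < t' := by rw [ht'def]; linarith
      set ε : ℝ := 1 / t' - 1 with hεdef
      have h1ε : 1 + ε = 1 / t' := by rw [hεdef]; ring
      have hε0 : 0 < ε := by
        have : 1 < 1 / t' := by rw [lt_div_iff₀ ht'0]; linarith
        rw [hεdef]; linarith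
      have hQA : Tendsto (fun M : ℕ => cdfM lam M ((1 + ε) * Real.log M / lam))
          atTop (nhds 1) := by
        apply (tendsto_pow_one_sub_exp_gt (1 + ε) (by linarith)).congr
        intro M
        unfold cdfM
        have : -lam * ((1 + ε) * Real.log M / lam) = -((1 + ε) * Real.log M) := by
          field_simp
        rw [this]
      have hQa : Tendsto (fun M : ℕ => cdfM lam M (Real.log M / (2 * lam)))
          atTop (nhds 0) := by
        apply (tendsto_pow_one_sub_exp_lt (1/2) (by norm_num) (by norm_num)).congr
        intro M
        unfold cdfM
        have : -lam * (Real.log M / (2 * lam)) = -(1/2 * Real.log M) := by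
          field_simp
        rw [this]
      have hQ : Tendsto (fun M : ℕ => cdfM lam M ((1 + ε) * Real.log M / lam)
          - cdfM lam M (Real.log M / (2 * lam))) atTop (nhds 1) := by
        simpa using hQA.sub hQa
      have halim : Tendsto (fun M : ℕ => Real.log M / (2 * lam)) atTop atTop :=
        hloglim.atTop_div_const (by positivity)
      have hba : Tendsto (fun M : ℕ => b / (Real.log M / (2 * lam))) atTop (nhds 0) := by
        have := halim.inv_tendsto_atTop
        have h2 := this.const_mul b
        simpa [div_eq_mul_inv] using h2
      have hR : Tendsto (fun M : ℕ => ((cdfM lam M ((1 + ε) * Real.log M / lam)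
          - cdfM lam M (Real.log M / (2 * lam)))⁻¹ + b / (Real.log M / (2 * lam))) ^ 2)
          atTop (nhds 1) := by
        have := ((hQ.inv₀ one_ne_zero).add hba).pow 2
        simpa using this
      have htt'2 : (1:ℝ) < t' / t := by rw [lt_div_iff₀ ht0]; linarith
      filter_upwards [hR.eventually_lt_const htt'2, hQ.eventually_const_lt (by norm_num : (1:ℝ)/2 < 1),
        halim.eventually_gt_atTop b, eventually_ge_atTop 2] with M hR2 hQhalf hblt hM2
      have hM1 : 1 ≤ M := by omega
      have hνM := hν M hM1
      have hlog : 0 < Real.log M := Real.log_pos (by exact_mod_cast hM2)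
      set aM : ℝ := Real.log M / (2 * lam) with haMdef
      set AM : ℝ := (1 + ε) * Real.log M / lam with hAMdef
      set Q : ℝ := cdfM lam M AM - cdfM lam M aM with hQdef
      have haM0 : 0 < aM := by rw [haMdef]; positivity
      have hsa : b ^ 2 * ν M < aM := by
        have h1 : b ^ 2 * ν M ≤ b := by
          have := hbν M hM1
          nlinarith
        linarith
      have haA : aM ≤ AM := by
        rw [haMdef, hAMdef, div_le_div_iff₀ (by positivity) hlam]
        nlinarith [mul_pos hlog hlam, mul_pos (mul_pos hlog hlam) hε0]
      have hAM0 : 0 < AM := lt_of_lt_of_le haM0 haA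
      set c₀ : ℝ := 1 / Real.sqrt (AM * ν M) - b / aM with hc₀def
      -- step i : ∫_{Ioc aM AM} f ≤ 1
      have hsub : Set.Ioc aM AM ⊆ Set.Ioi (b ^ 2 * ν M) :=
        fun x hx => lt_trans hsa hx.1
      have hstepi : (∫ x in Set.Ioc aM AM,
          (1 / Real.sqrt (x * ν M) - b / x) * pdfM lam M x) ≤ 1 := by
        refine le_of_le_of_eq ?_ (hF M hM1)
        apply setIntegral_mono_set (hintf M hM1)
        · rw [Filter.EventuallyLE, ae_restrict_iff' measurableSet_Ioi]
          exact ae_of_all _ (fun x hx => hf_nonneg M hM1 x hx)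
        · exact HasSubset.Subset.eventuallyLE hsub
      -- step ii : c₀ * Q ≤ ∫_{Ioc aM AM} f
      have hstepii : c₀ * Q ≤ ∫ x in Set.Ioc aM AM,
          (1 / Real.sqrt (x * ν M) - b / x) * pdfM lam M x := by
        have heq : c₀ * Q = ∫ x in Set.Ioc aM AM, c₀ * pdfM lam M x := by
          rw [MeasureTheory.integral_const_mul, integral_pdfM_Ioc lam hlam M aM AM haA, hQdef]
        rw [heq]
        apply setIntegral_mono_on
          (((pdfM_integrableOn lam hlam M aM haM0.le).mono_set Set.Ioc_subset_Ioi_self).const_mul _)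
          ((hintf M hM1).mono_set hsub) measurableSet_Ioc
        intro x hx
        have hx0 : 0 < x := lt_trans haM0 hx.1
        have hp : 0 ≤ pdfM lam M x := pdfM_nonneg lam M x hlam hx0.le
        apply mul_le_mul_of_nonneg_right _ hp
        rw [hc₀def]
        have hs1 : Real.sqrt (x * ν M) ≤ Real.sqrt (AM * ν M) := by
          apply Real.sqrt_le_sqrt
          nlinarith [hx.2]
        have hs2 : 0 < Real.sqrt (x * ν M) := by positivity
        have hd1 := one_div_le_one_div_of_le hs2 hs1
        have hd2 : b / x ≤ b / aM := by
          rw [div_le_div_iff₀ hx0 haM0]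
          nlinarith [hx.1.le]
        linarith
      have hkey1 : c₀ * Q ≤ 1 := le_trans hstepii hstepi
      -- algebra
      have hQpos : 0 < Q := by linarith
      have hc₀le : 1 / Real.sqrt (AM * ν M) ≤ Q⁻¹ + b / aM := by
        have : c₀ ≤ Q⁻¹ := by
          rw [← one_div, le_div_iff₀ hQpos]
          exact hkey1
        rw [hc₀def] at this
        linarith
      set R : ℝ := Q⁻¹ + b / aM with hRdef
      have hRpos : 0 < R := by
        have h1 : 0 < Q⁻¹ := inv_pos.mpr hQpos
        have h2 : 0 < b / aM := div_pos hb haM0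
        rw [hRdef]; linarith
      have hAν0 : 0 < AM * ν M := mul_pos hAM0 hνM
      have hsq0 : 0 < Real.sqrt (AM * ν M) := Real.sqrt_pos.mpr hAν0
      have hmul : 1 ≤ R * Real.sqrt (AM * ν M) := by
        rw [div_le_iff₀ hsq0] at hc₀le
        exact hc₀le
      have hAν : 1 ≤ R ^ 2 * (AM * ν M) := by
        nlinarith [Real.sq_sqrt hAν0.le, sq_nonneg (R * Real.sqrt (AM * ν M) - 1)]
      have hAνeq : AM * ν M = (1 + ε) * (ν M * Real.log M / lam) := by
        rw [hAMdef]; ring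
      have hX : 0 < ν M * Real.log M / lam := by positivity
      rw [hAνeq, h1ε] at hAν
      have h5 : t' ≤ R ^ 2 * (ν M * Real.log M / lam) := by
        have h6 := mul_le_mul_of_nonneg_right hAν ht'0.le
        have ht'ne : t' ≠ 0 := ne_of_gt ht'0
        calc t' = 1 * t' := (one_mul t').symm
          _ ≤ R ^ 2 * (1 / t' * (ν M * Real.log M / lam)) * t' := h6
          _ = R ^ 2 * (ν M * Real.log M / lam) := by field_simp
      rw [lt_div_iff₀ ht0] at hR2
      have hR2pos : (0:ℝ) < R ^ 2 := by positivity
      by_contra hcon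
      push_neg at hcon
      have h7 := mul_le_mul_of_nonneg_left hcon hR2pos.le
      clear_value t' ε aM AM Q c₀ R
      linarith
  rw [tendsto_order]
  constructor
  · intro c hc
    exact lower c hc
  · intro c hc
    set t : ℝ := (1 + c) / 2 with htdef
    have ht1 : 1 < t := by rw [htdef]; linarith
    have htc : t < c := by rw [htdef]; linarith
    have ht0 : 0 < t := by linarith
    have hPa : Tendsto (fun M : ℕ => cdfM lam M (Real.log M / (t * lam)) * Real.log M)
        atTop (nhds 0) := by
      apply (tendsto_pow_one_sub_exp_lt_mul_log (1/t) (by positivity)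
        (by rw [div_lt_one ht0]; exact ht1)).congr
      intro M
      unfold cdfM
      have : -lam * (Real.log M / (t * lam)) = -(1/t * Real.log M) := by
        field_simp
      rw [this]
    have hD : Tendsto (fun M : ℕ =>
        3 / (b * lam) * (cdfM lam M (Real.log M / (t * lam)) * Real.log M)) atTop (nhds 0) := by
      simpa using hPa.const_mul (3 / (b * lam))
    have hUlim : Tendsto (fun M : ℕ => t *
        ((1 - 3 / (b * lam) * (cdfM lam M (Real.log M / (t * lam)) * Real.log M))⁻¹) ^ 2)
        atTop (nhds t) := by
      have h1 : Tendsto (fun M : ℕ =>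
          1 - 3 / (b * lam) * (cdfM lam M (Real.log M / (t * lam)) * Real.log M))
          atTop (nhds 1) := by simpa using tendsto_const_nhds.sub hD
      have h2 := (h1.inv₀ one_ne_zero).pow 2
      have h3 := h2.const_mul t
      simpa using h3
    have halim' : Tendsto (fun M : ℕ => Real.log M / (t * lam)) atTop atTop :=
      hloglim.atTop_div_const (by positivity)
    filter_upwards [lower (1/3) (by norm_num), hUlim.eventually_lt_const htc,
      hD.eventually_lt_const (by norm_num : (0:ℝ) < 1/2),
      halim'.eventually_gt_atTop b, eventually_ge_atTop 2] with M hX3 hUc hDhalf hba' hM2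
    have hM1 : 1 ≤ M := by omega
    have hνM := hν M hM1
    have hlog : 0 < Real.log M := Real.log_pos (by exact_mod_cast hM2)
    have hs0 : 0 < b ^ 2 * ν M := by positivity
    set a' : ℝ := Real.log M / (t * lam) with ha'def
    set D : ℝ := 3 / (b * lam) * (cdfM lam M a' * Real.log M) with hDdef
    have ha'0 : 0 < a' := lt_trans hb hba'
    have hsa' : b ^ 2 * ν M < a' := by
      have h1 : b ^ 2 * ν M ≤ b := by
        have := hbν M hM1
        nlinarith
      linarith
    have hν3 : lam / (3 * Real.log M) < ν M := by
      rw [lt_div_iff₀ hlam] at hX3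
      rw [div_lt_iff₀ (by positivity)]
      nlinarith
    -- integrability of g
    have hcdfs := cdfM_mem lam M (b ^ 2 * ν M) hlam hs0.le
    have hcdfa := cdfM_mem lam M a' hlam ha'0.le
    have hsqb : ∀ x : ℝ, b ^ 2 * ν M < x → b * ν M ≤ Real.sqrt (x * ν M) := by
      intro x hx
      rw [show b * ν M = Real.sqrt ((b * ν M) ^ 2) from (Real.sqrt_sq (by positivity)).symm]
      apply Real.sqrt_le_sqrt
      nlinarith
    have hintg : IntegrableOn (fun x => 1 / Real.sqrt (x * ν M) * pdfM lam M x)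
        (Set.Ioi (b ^ 2 * ν M)) := by
      apply ((pdfM_integrableOn lam hlam M _ hs0.le).const_mul ((b * ν M)⁻¹)).mono'
      · apply AEStronglyMeasurable.mul _ (continuous_pdfM lam M).aestronglyMeasurable.restrict
        apply Measurable.aestronglyMeasurable
        exact (measurable_const.div ((Real.continuous_sqrt.measurable).comp (measurable_id.mul_const _)))
      · rw [ae_restrict_iff' measurableSet_Ioi]
        filter_upwards with x hx
        have hx0 : 0 < x := lt_trans hs0 hx
        have hp : 0 ≤ pdfM lam M x := pdfM_nonneg lam M x hlam hx0.le
        have hsq := hsqb x hx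
        have h1 := one_div_le_one_div_of_le (show (0:ℝ) < b * ν M by positivity) hsq
        rw [Real.norm_eq_abs, abs_of_nonneg (by positivity)]
        rw [inv_eq_one_div]
        apply mul_le_mul_of_nonneg_right _ hp
        exact h1
    have hstep1 : (1:ℝ) ≤ ∫ x in Set.Ioi (b ^ 2 * ν M),
        1 / Real.sqrt (x * ν M) * pdfM lam M x := by
      refine le_trans (le_of_eq (hF M hM1).symm) ?_
      apply setIntegral_mono_on (hintf M hM1) hintg measurableSet_Ioi
      intro x hx
      have hx0 : 0 < x := lt_trans hs0 hx
      have hp : 0 ≤ pdfM lam M x := pdfM_nonneg lam M x hlam hx0.le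
      apply mul_le_mul_of_nonneg_right _ hp
      have : 0 ≤ b / x := by positivity
      linarith
    have hunion : Set.Ioc (b ^ 2 * ν M) a' ∪ Set.Ioi a' = Set.Ioi (b ^ 2 * ν M) :=
      Set.Ioc_union_Ioi_eq_Ioi hsa'.le
    have hsplit : (∫ x in Set.Ioi (b ^ 2 * ν M), 1 / Real.sqrt (x * ν M) * pdfM lam M x)
        = (∫ x in Set.Ioc (b ^ 2 * ν M) a', 1 / Real.sqrt (x * ν M) * pdfM lam M x)
        + ∫ x in Set.Ioi a', 1 / Real.sqrt (x * ν M) * pdfM lam M x := by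
      rw [← hunion]
      exact MeasureTheory.setIntegral_union (Set.Ioc_disjoint_Ioi le_rfl) measurableSet_Ioi
        (hintg.mono_set (hunion ▸ Set.subset_union_left))
        (hintg.mono_set (hunion ▸ Set.subset_union_right))
    have hpart1 : (∫ x in Set.Ioc (b ^ 2 * ν M) a', 1 / Real.sqrt (x * ν M) * pdfM lam M x)
        ≤ (b * ν M)⁻¹ * cdfM lam M a' := by
      have h1 : (∫ x in Set.Ioc (b ^ 2 * ν M) a', 1 / Real.sqrt (x * ν M) * pdfM lam M x)
          ≤ ∫ x in Set.Ioc (b ^ 2 * ν M) a', (b * ν M)⁻¹ * pdfM lam M x := by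
        apply setIntegral_mono_on
          (hintg.mono_set (hunion ▸ Set.subset_union_left))
          (((pdfM_integrableOn lam hlam M _ hs0.le).mono_set
            (hunion ▸ Set.subset_union_left)).const_mul _)
          measurableSet_Ioc
        intro x hx
        have hx0 : 0 < x := lt_trans hs0 hx.1
        have hp : 0 ≤ pdfM lam M x := pdfM_nonneg lam M x hlam hx0.le
        apply mul_le_mul_of_nonneg_right _ hp
        have h1 := one_div_le_one_div_of_le (show (0:ℝ) < b * ν M by positivity) (hsqb x hx.1)
        rw [inv_eq_one_div]
        exact h1
      rw [MeasureTheory.integral_const_mul, integral_pdfM_Ioc lam hlam M _ _ hsa'.le] at h1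
      have hinv : (0:ℝ) ≤ (b * ν M)⁻¹ := by positivity
      nlinarith [hcdfs.1]
    have hpart2 : (∫ x in Set.Ioi a', 1 / Real.sqrt (x * ν M) * pdfM lam M x)
        ≤ 1 / Real.sqrt (a' * ν M) := by
      have hsq' : 0 < Real.sqrt (a' * ν M) := Real.sqrt_pos.mpr (by positivity)
      have h1 : (∫ x in Set.Ioi a', 1 / Real.sqrt (x * ν M) * pdfM lam M x)
          ≤ ∫ x in Set.Ioi a', 1 / Real.sqrt (a' * ν M) * pdfM lam M x := by
        apply setIntegral_mono_on
          (hintg.mono_set (hunion ▸ Set.subset_union_right))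
          ((pdfM_integrableOn lam hlam M _ ha'0.le).const_mul _)
          measurableSet_Ioi
        intro x hx
        have hx0 : 0 < x := lt_trans ha'0 hx
        have hp : 0 ≤ pdfM lam M x := pdfM_nonneg lam M x hlam hx0.le
        apply mul_le_mul_of_nonneg_right _ hp
        apply one_div_le_one_div_of_le hsq'
        apply Real.sqrt_le_sqrt
        nlinarith [le_of_lt (show a' < x from hx)]
      rw [MeasureTheory.integral_const_mul, integral_pdfM_Ioi lam hlam M _ ha'0.le] at h1
      have h2 : (0:ℝ) ≤ 1 / Real.sqrt (a' * ν M) := by positivity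
      nlinarith [hcdfa.1]
    -- key2
    have hkey2 : (1:ℝ) ≤ (b * ν M)⁻¹ * cdfM lam M a' + 1 / Real.sqrt (a' * ν M) := by
      rw [hsplit] at hstep1
      linarith
    -- bound (b ν)⁻¹ Pa' ≤ D
    have hbD : (b * ν M)⁻¹ * cdfM lam M a' ≤ D := by
      have h1 : (0:ℝ) < b * (lam / (3 * Real.log M)) := by positivity
      have h2 : b * (lam / (3 * Real.log M)) ≤ b * ν M := by nlinarith
      have h3 := one_div_le_one_div_of_le h1 h2
      have h4 : 1 / (b * (lam / (3 * Real.log M))) = 3 * Real.log M / (b * lam) := by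
        field_simp
      rw [h4] at h3
      rw [inv_eq_one_div]
      have h5 : 0 ≤ cdfM lam M a' := hcdfa.1
      calc 1 / (b * ν M) * cdfM lam M a'
          ≤ 3 * Real.log M / (b * lam) * cdfM lam M a' :=
            mul_le_mul_of_nonneg_right h3 h5
        _ = D := by rw [hDdef]; ring
    have hD1 : D < 1/2 := hDhalf
    have hsq' : 0 < Real.sqrt (a' * ν M) := Real.sqrt_pos.mpr (by positivity)
    have h6 : 1 - D ≤ 1 / Real.sqrt (a' * ν M) := by linarith
    have h7 : (1 - D) * Real.sqrt (a' * ν M) ≤ 1 := by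
      have := mul_le_mul_of_nonneg_right h6 hsq'.le
      rwa [one_div, inv_mul_cancel₀ hsq'.ne'] at this
    have h8 : Real.sqrt (a' * ν M) ≤ (1 - D)⁻¹ := by
      rw [← one_div, le_div_iff₀ (by linarith : (0:ℝ) < 1 - D)]
      linarith [h7]
    have h9 : a' * ν M ≤ ((1 - D)⁻¹) ^ 2 := by
      nlinarith [Real.sq_sqrt (show (0:ℝ) ≤ a' * ν M by positivity), Real.sqrt_nonneg (a' * ν M)]
    have h10 : a' * ν M = (ν M * Real.log M / lam) / t := by
      rw [ha'def]
      field_simp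
    rw [h10] at h9
    have h11 : ν M * Real.log M / lam ≤ t * ((1 - D)⁻¹) ^ 2 := by
      have := mul_le_mul_of_nonneg_left h9 ht0.le
      have heq : t * (ν M * Real.log M / lam / t) = ν M * Real.log M / lam := by
        field_simp
      rw [heq] at this
      exact this
    have hUc' : t * ((1 - D)⁻¹) ^ 2 < c := hUc
    linarith
end

section
/- Let σθ² > 0, σv² > 0, σn² > 0, λ > 0, and set A = σθ²σv²/(σθ²+σv²), B = σn²σθ²/(σv²(σθ²+σv²)) and b = σn²/(σθ²+σv²). Suppose that for each integer M ≥ 1 the number ν_M > 0 satisfies ∫_{b²ν_M}^∞ (1/√(x·ν_M) − b/x) · M(1−e^{−λx})^{M−1} λ e^{−λx} dx = 1, and define E[D_M] = ∫_{b²ν_M}^∞ A·(1 + B·√(ν_M/x)) · M(1−e^{−λx})^{M−1} λ e^{−λx} dx + σθ²·(1 − e^{−λb²ν_M})^M. Then ln(M)·(E[D_M] − A) → A·B·λ as M → ∞; in particular the expected distortion of the multi-sensor diversity scheme under optimal (water-filling) power allocation has the same asymptotic behaviour A·[1 + B·λ/ln(M)] as under constant power allocation. -/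
open MeasureTheory Filter Real

namespace DivOptAux
open Set


/-- density of the maximum of M iid Exp(lam). -/
noncomputable def pd (lam : ℝ) (M : ℕ) (x : ℝ) : ℝ :=
  (M : ℝ) * (1 - Real.exp (-lam * x)) ^ (M - 1) * (lam * Real.exp (-lam * x))

lemma continuous_pd (lam : ℝ) (M : ℕ) : Continuous (pd lam M) := by
  unfold pd; fun_prop

lemma hasDerivAt_cdf (lam : ℝ) (M : ℕ) (x : ℝ) :
    HasDerivAt (fun y => (1 - Real.exp (-lam * y)) ^ M) (pd lam M x) x := by
  have h0 : HasDerivAt (fun y : ℝ => -lam * y) (-lam) x := by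
    simpa using (hasDerivAt_id x).const_mul (-lam)
  have h1 : HasDerivAt (fun y => Real.exp (-lam * y)) (Real.exp (-lam * x) * -lam) x :=
    (Real.hasDerivAt_exp _).comp x h0
  have h2 : HasDerivAt (fun y => 1 - Real.exp (-lam * y)) (lam * Real.exp (-lam * x)) x := by
    have := h1.const_sub 1
    rw [show lam * Real.exp (-lam * x) = -(Real.exp (-lam * x) * -lam) by ring]; exact this
  simpa [pd] using h2.fun_pow M

lemma base_nonneg {lam x : ℝ} (hlam : 0 < lam) (hx : 0 ≤ x) :
    0 ≤ 1 - Real.exp (-lam * x) := by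
  have : Real.exp (-lam * x) ≤ 1 := by
    rw [Real.exp_le_one_iff]
    nlinarith
  linarith

lemma base_le_one {lam x : ℝ} : 1 - Real.exp (-lam * x) ≤ 1 := by
  have := Real.exp_pos (-lam * x); linarith

lemma base_le {lam x : ℝ} : 1 - Real.exp (-lam * x) ≤ lam * x := by
  have := Real.add_one_le_exp (-lam * x)
  linarith

lemma base_mono {lam : ℝ} (hlam : 0 < lam) {x y : ℝ} (hxy : x ≤ y) :
    1 - Real.exp (-lam * x) ≤ 1 - Real.exp (-lam * y) := by
  have : Real.exp (-lam * y) ≤ Real.exp (-lam * x) := by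
    apply Real.exp_le_exp.2; nlinarith
  linarith

lemma pd_nonneg {lam : ℝ} (hlam : 0 < lam) (M : ℕ) {x : ℝ} (hx : 0 ≤ x) :
    0 ≤ pd lam M x := by
  unfold pd
  have h1 := base_nonneg hlam hx
  positivity

lemma pd_le {lam : ℝ} (hlam : 0 < lam) (M : ℕ) {x : ℝ} (hx : 0 ≤ x) :
    pd lam M x ≤ (M : ℝ) * (lam * Real.exp (-lam * x)) := by
  unfold pd
  have h1 := base_nonneg hlam hx
  have h2 : (1 - Real.exp (-lam * x)) ^ (M - 1) ≤ 1 :=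
    pow_le_one₀ h1 base_le_one
  have h3 : 0 ≤ lam * Real.exp (-lam * x) := by positivity
  nlinarith [mul_le_mul_of_nonneg_right h2 h3]

lemma integrableOn_pd {lam : ℝ} (hlam : 0 < lam) (M : ℕ) {T : ℝ} (hT : 0 ≤ T) :
    IntegrableOn (pd lam M) (Ioi T) := by
  apply Integrable.mono' ((exp_neg_integrableOn_Ioi T hlam).const_mul ((M : ℝ) * lam))
    ((continuous_pd lam M).aestronglyMeasurable)
  rw [ae_restrict_iff' measurableSet_Ioi]
  filter_upwards with x hx
  have hx0 : 0 ≤ x := le_trans hT (le_of_lt hx)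
  rw [Real.norm_eq_abs, abs_of_nonneg (pd_nonneg hlam M hx0)]
  calc pd lam M x ≤ (M : ℝ) * (lam * Real.exp (-lam * x)) := pd_le hlam M hx0
  _ = (M : ℝ) * lam * Real.exp (-lam * x) := by ring

lemma tendsto_cdf_atTop {lam : ℝ} (hlam : 0 < lam) (M : ℕ) :
    Tendsto (fun y => (1 - Real.exp (-lam * y)) ^ M) atTop (nhds 1) := by
  have h1 : Tendsto (fun y : ℝ => -lam * y) atTop atBot := by
    apply Tendsto.const_mul_atTop_of_neg (neg_neg_iff_pos.2 hlam) tendsto_id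
  have h2 : Tendsto (fun y => Real.exp (-lam * y)) atTop (nhds 0) :=
    Real.tendsto_exp_atBot.comp h1
  have h3 : Tendsto (fun y => 1 - Real.exp (-lam * y)) atTop (nhds 1) := by
    simpa using (tendsto_const_nhds (x := (1:ℝ))).sub h2
  simpa using h3.pow M

lemma integral_pd_Ioi {lam : ℝ} (hlam : 0 < lam) (M : ℕ) {T : ℝ} (hT : 0 ≤ T) :
    ∫ x in Ioi T, pd lam M x = 1 - (1 - Real.exp (-lam * T)) ^ M := by
  exact integral_Ioi_of_hasDerivAt_of_tendsto'
    (fun x _ => hasDerivAt_cdf lam M x) (integrableOn_pd hlam M hT) (tendsto_cdf_atTop hlam M)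

lemma integral_pd_Ioc {lam : ℝ} (hlam : 0 < lam) (M : ℕ) {a c : ℝ} (hac : a ≤ c) :
    ∫ x in Ioc a c, pd lam M x
      = (1 - Real.exp (-lam * c)) ^ M - (1 - Real.exp (-lam * a)) ^ M := by
  rw [← intervalIntegral.integral_of_le hac]
  exact intervalIntegral.integral_eq_sub_of_hasDerivAt
    (fun x _ => hasDerivAt_cdf lam M x) ((continuous_pd lam M).intervalIntegrable a c)



lemma inv_sqrt_le {x : ℝ} (hx : 0 < x) : (Real.sqrt x)⁻¹ ≤ x⁻¹ + 1 := by
  rcases le_or_gt x 1 with h | h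
  · have h1 : x ≤ Real.sqrt x := by
      rw [Real.le_sqrt hx.le hx.le]; nlinarith
    have h2 : (Real.sqrt x)⁻¹ ≤ x⁻¹ := inv_anti₀ hx h1
    linarith
  · have h1 : (1:ℝ) ≤ Real.sqrt x := Real.one_le_sqrt.2 h.le
    have h2 : (Real.sqrt x)⁻¹ ≤ 1 := inv_le_one_of_one_le₀ h1
    have h3 : 0 ≤ x⁻¹ := by positivity
    linarith




variable {lam : ℝ} {M : ℕ}

/-- generic integrability with bounded nonneg weight -/
lemma integrableOn_weight_pd (hlam : 0 < lam) (M : ℕ) {c K : ℝ} (hc : 0 ≤ c)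
    {w : ℝ → ℝ} (hw : Measurable w) (hbd : ∀ x ∈ Ioi c, |w x| ≤ K) :
    IntegrableOn (fun x => w x * pd lam M x) (Ioi c) := by
  apply Integrable.mono' ((exp_neg_integrableOn_Ioi c hlam).const_mul (K * ((M : ℝ) * lam)))
  · exact (hw.mul (continuous_pd lam M).measurable).aestronglyMeasurable
  · rw [ae_restrict_iff' measurableSet_Ioi]
    filter_upwards with x hx
    have hx0 : 0 ≤ x := le_trans hc (le_of_lt hx)
    have h1 : 0 ≤ pd lam M x := pd_nonneg hlam M hx0
    have h2 := pd_le hlam M hx0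
    have h3 := hbd x hx
    have h4 : 0 ≤ K := le_trans (abs_nonneg _) h3
    rw [Real.norm_eq_abs, abs_mul, abs_of_nonneg h1]
    calc |w x| * pd lam M x ≤ K * ((M : ℝ) * (lam * Real.exp (-lam * x))) := by
          apply mul_le_mul h3 h2 h1 h4
      _ = K * ((M : ℝ) * lam) * Real.exp (-lam * x) := by ring

lemma integrableOn_inv_pd (hlam : 0 < lam) (M : ℕ) {c : ℝ} (hc : 0 < c) :
    IntegrableOn (fun x => x⁻¹ * pd lam M x) (Ioi c) := by
  apply integrableOn_weight_pd hlam M hc.le measurable_inv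
  intro x hx
  have hx0 : 0 < x := lt_of_le_of_lt hc.le hx
  rw [abs_of_nonneg (by positivity)]
  exact inv_anti₀ hc (le_of_lt hx)

lemma integrableOn_sqrt_pd (hlam : 0 < lam) (M : ℕ) {c : ℝ} (hc : 0 < c) :
    IntegrableOn (fun x => (Real.sqrt x)⁻¹ * pd lam M x) (Ioi c) := by
  apply integrableOn_weight_pd hlam M hc.le (Real.continuous_sqrt.measurable.inv)
  intro x hx
  have hx0 : 0 < x := lt_of_le_of_lt hc.le hx
  rw [abs_of_nonneg (by simp)]
  exact inv_anti₀ (Real.sqrt_pos.2 hc) (Real.sqrt_le_sqrt (le_of_lt hx))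

/-- key pointwise bound for `x⁻¹ * pd` with `M ≥ 2`. -/
lemma inv_pd_le (hlam : 0 < lam) (hM : 2 ≤ M) {x T : ℝ} (hx : 0 < x) (hxT : x ≤ T) :
    x⁻¹ * pd lam M x
      ≤ ((M : ℝ) * lam * (1 - Real.exp (-lam * T)) ^ (M - 2)) * (lam * Real.exp (-lam * x)) := by
  have hbx := base_nonneg hlam hx.le
  have hbT := base_nonneg hlam (hx.le.trans hxT)
  have hsplit : (1 - Real.exp (-lam * x)) ^ (M - 1)
      = (1 - Real.exp (-lam * x)) ^ (M - 2) * (1 - Real.exp (-lam * x)) := by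
    rw [← pow_succ]
    congr 1
    omega
  have h1 : x⁻¹ * (1 - Real.exp (-lam * x)) ≤ lam := by
    rw [inv_mul_le_iff₀ hx]
    calc 1 - Real.exp (-lam * x) ≤ lam * x := base_le
      _ = x * lam := by ring
  have h2 : (1 - Real.exp (-lam * x)) ^ (M - 2) ≤ (1 - Real.exp (-lam * T)) ^ (M - 2) :=
    pow_le_pow_left₀ hbx (base_mono hlam hxT) _
  have hexp : (0:ℝ) ≤ lam * Real.exp (-lam * x) := by positivity
  have hMn : (0:ℝ) ≤ (M:ℝ) := by positivity
  calc x⁻¹ * pd lam M x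
      = ((1 - Real.exp (-lam * x)) ^ (M - 2) * (x⁻¹ * (1 - Real.exp (-lam * x))))
          * ((M : ℝ) * (lam * Real.exp (-lam * x))) := by
        unfold pd; rw [hsplit]; ring
    _ ≤ ((1 - Real.exp (-lam * T)) ^ (M - 2) * lam) * ((M : ℝ) * (lam * Real.exp (-lam * x))) := by
        apply mul_le_mul_of_nonneg_right _ (by positivity)
        apply mul_le_mul h2 h1 (by positivity) (by positivity)
    _ = ((M : ℝ) * lam * (1 - Real.exp (-lam * T)) ^ (M - 2)) * (lam * Real.exp (-lam * x)) := by
        ring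

/-- pd itself with the `(M-2)` exponent bound. -/
lemma pd_le2 (hlam : 0 < lam) (hM : 2 ≤ M) {x T : ℝ} (hx : 0 ≤ x) (hxT : x ≤ T) :
    pd lam M x ≤ ((M : ℝ) * (1 - Real.exp (-lam * T)) ^ (M - 2)) * (lam * Real.exp (-lam * x)) := by
  have hbx := base_nonneg hlam hx
  have h1 : (1 - Real.exp (-lam * x)) ^ (M - 1) ≤ (1 - Real.exp (-lam * T)) ^ (M - 2) := by
    calc (1 - Real.exp (-lam * x)) ^ (M - 1) ≤ (1 - Real.exp (-lam * x)) ^ (M - 2) :=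
          pow_le_pow_of_le_one hbx base_le_one (by omega)
      _ ≤ (1 - Real.exp (-lam * T)) ^ (M - 2) :=
          pow_le_pow_left₀ hbx (base_mono hlam hxT) _
  have hexp : (0:ℝ) ≤ lam * Real.exp (-lam * x) := by positivity
  unfold pd
  have hMn : (0:ℝ) ≤ (M:ℝ) := by positivity
  nlinarith [mul_le_mul_of_nonneg_right h1 hexp]

lemma sqrt_pd_le (hlam : 0 < lam) (hM : 2 ≤ M) {x T : ℝ} (hx : 0 < x) (hxT : x ≤ T) :
    (Real.sqrt x)⁻¹ * pd lam M x
      ≤ ((M : ℝ) * (lam + 1) * (1 - Real.exp (-lam * T)) ^ (M - 2))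
          * (lam * Real.exp (-lam * x)) := by
  have h0 : 0 ≤ pd lam M x := pd_nonneg hlam M hx.le
  calc (Real.sqrt x)⁻¹ * pd lam M x ≤ (x⁻¹ + 1) * pd lam M x :=
        mul_le_mul_of_nonneg_right (inv_sqrt_le hx) h0
    _ = x⁻¹ * pd lam M x + pd lam M x := by ring
    _ ≤ ((M : ℝ) * lam * (1 - Real.exp (-lam * T)) ^ (M - 2)) * (lam * Real.exp (-lam * x))
          + ((M : ℝ) * (1 - Real.exp (-lam * T)) ^ (M - 2)) * (lam * Real.exp (-lam * x)) :=
        add_le_add (inv_pd_le hlam hM hx hxT) (pd_le2 hlam hM hx.le hxT)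
    _ = ((M : ℝ) * (lam + 1) * (1 - Real.exp (-lam * T)) ^ (M - 2))
          * (lam * Real.exp (-lam * x)) := by ring




variable {lam : ℝ} {M : ℕ}

lemma integrableOn_of_bound {s : Set ℝ} (hs : MeasurableSet s) {f g : ℝ → ℝ}
    (hg : IntegrableOn g s) (hf : AEStronglyMeasurable f (volume.restrict s))
    (h : ∀ x ∈ s, |f x| ≤ g x) : IntegrableOn f s :=
  Integrable.mono' hg hf ((ae_restrict_iff' hs).2 (Eventually.of_forall h))

lemma inv_pd_le' (hlam : 0 < lam) (hM : 2 ≤ M) {x : ℝ} (hx : 0 < x) :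
    x⁻¹ * pd lam M x ≤ ((M : ℝ) * lam) * (lam * Real.exp (-lam * x)) := by
  refine le_trans (inv_pd_le hlam hM hx le_rfl) ?_
  have h1 : (1 - Real.exp (-lam * x)) ^ (M - 2) ≤ 1 :=
    pow_le_one₀ (base_nonneg hlam hx.le) base_le_one
  have h2 : (0:ℝ) ≤ lam * Real.exp (-lam * x) := by positivity
  have h3 : (0:ℝ) ≤ (M : ℝ) * lam := by positivity
  nlinarith [mul_le_mul_of_nonneg_left (mul_le_mul_of_nonneg_right h1 h2) h3]

lemma sqrt_pd_le' (hlam : 0 < lam) (hM : 2 ≤ M) {x : ℝ} (hx : 0 < x) :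
    (Real.sqrt x)⁻¹ * pd lam M x ≤ ((M : ℝ) * (lam + 1)) * (lam * Real.exp (-lam * x)) := by
  refine le_trans (sqrt_pd_le hlam hM hx le_rfl) ?_
  have h1 : (1 - Real.exp (-lam * x)) ^ (M - 2) ≤ 1 :=
    pow_le_one₀ (base_nonneg hlam hx.le) base_le_one
  have h2 : (0:ℝ) ≤ lam * Real.exp (-lam * x) := by positivity
  have h3 : (0:ℝ) ≤ (M : ℝ) * (lam + 1) := by positivity
  nlinarith [mul_le_mul_of_nonneg_left (mul_le_mul_of_nonneg_right h1 h2) h3]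

lemma integrableOn_inv_pd0 (hlam : 0 < lam) (hM : 2 ≤ M) :
    IntegrableOn (fun x => x⁻¹ * pd lam M x) (Ioi 0) := by
  apply integrableOn_of_bound measurableSet_Ioi
    (g := fun x => ((M : ℝ) * lam * lam) * Real.exp (-lam * x))
    ((exp_neg_integrableOn_Ioi 0 hlam).const_mul _)
    ((measurable_inv.mul (continuous_pd lam M).measurable).aestronglyMeasurable)
  intro x hx
  have hx0 : (0:ℝ) < x := hx
  show |x⁻¹ * pd lam M x| ≤ _
  rw [abs_of_nonneg (mul_nonneg (by positivity) (pd_nonneg hlam M hx0.le))]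
  calc x⁻¹ * pd lam M x ≤ ((M : ℝ) * lam) * (lam * Real.exp (-lam * x)) :=
        inv_pd_le' hlam hM hx0
    _ = ((M : ℝ) * lam * lam) * Real.exp (-lam * x) := by ring

lemma integrableOn_sqrt_pd0 (hlam : 0 < lam) (hM : 2 ≤ M) :
    IntegrableOn (fun x => (Real.sqrt x)⁻¹ * pd lam M x) (Ioi 0) := by
  apply integrableOn_of_bound measurableSet_Ioi
    (g := fun x => ((M : ℝ) * (lam + 1) * lam) * Real.exp (-lam * x))
    ((exp_neg_integrableOn_Ioi 0 hlam).const_mul _)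
    ((Real.continuous_sqrt.measurable.inv.mul
      (continuous_pd lam M).measurable).aestronglyMeasurable)
  intro x hx
  have hx0 : (0:ℝ) < x := hx
  show |(Real.sqrt x)⁻¹ * pd lam M x| ≤ _
  rw [abs_of_nonneg (mul_nonneg (by positivity) (pd_nonneg hlam M hx0.le))]
  calc (Real.sqrt x)⁻¹ * pd lam M x ≤ ((M : ℝ) * (lam + 1)) * (lam * Real.exp (-lam * x)) :=
        sqrt_pd_le' hlam hM hx0
    _ = ((M : ℝ) * (lam + 1) * lam) * Real.exp (-lam * x) := by ring

lemma split_integral {T : ℝ} (hT : 0 ≤ T) {f : ℝ → ℝ} (hf : IntegrableOn f (Ioi 0)) :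
    ∫ x in Ioi 0, f x = (∫ x in Ioc 0 T, f x) + ∫ x in Ioi T, f x := by
  rw [← Ioc_union_Ioi_eq_Ioi hT]
  exact setIntegral_union (Ioc_disjoint_Ioi le_rfl) measurableSet_Ioi
    (hf.mono_set Ioc_subset_Ioi_self) (hf.mono_set (Ioi_subset_Ioi hT))

/-- generic: integral over `Ioc 0 T` of a function bounded by `C·λe^{-λx}` is at most `C`. -/
lemma integral_Ioc_le_of_bound (hlam : 0 < lam) {T C : ℝ} (hT : 0 < T) (hC : 0 ≤ C)
    {f : ℝ → ℝ} (hfi : IntegrableOn f (Ioc 0 T))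
    (hbd : ∀ x ∈ Ioc 0 T, f x ≤ C * (lam * Real.exp (-lam * x))) :
    ∫ x in Ioc 0 T, f x ≤ C := by
  have hpd1 : ∀ x : ℝ, pd lam 1 x = lam * Real.exp (-lam * x) := by
    intro x; simp [pd]
  have hgi : IntegrableOn (fun x => C * pd lam 1 x) (Ioc 0 T) :=
    ((continuous_const.mul (continuous_pd lam 1)).integrableOn_Ioc)
  have h1 : ∫ x in Ioc 0 T, f x ≤ ∫ x in Ioc 0 T, C * pd lam 1 x := by
    apply setIntegral_mono_on hfi hgi measurableSet_Ioc
    intro x hx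
    rw [hpd1]
    exact hbd x hx
  rw [integral_const_mul, integral_pd_Ioc hlam 1 hT.le] at h1
  have he0 : Real.exp (-lam * 0) = 1 := by norm_num
  have hbT : 1 - Real.exp (-lam * T) ≤ 1 := base_le_one
  have hbT0 : 0 ≤ 1 - Real.exp (-lam * T) := base_nonneg hlam hT.le
  calc ∫ x in Ioc 0 T, f x
      ≤ C * ((1 - Real.exp (-lam * T)) ^ 1 - (1 - Real.exp (-lam * 0)) ^ 1) := h1
    _ = C * (1 - Real.exp (-lam * T)) := by rw [he0]; ring
    _ ≤ C * 1 := by nlinarith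
    _ = C := mul_one C

lemma tail_sqrt_le (hlam : 0 < lam) (M : ℕ) {T : ℝ} (hT : 0 < T) :
    ∫ x in Ioi T, (Real.sqrt x)⁻¹ * pd lam M x ≤ (Real.sqrt T)⁻¹ := by
  have h1 : ∫ x in Ioi T, (Real.sqrt x)⁻¹ * pd lam M x
      ≤ ∫ x in Ioi T, (Real.sqrt T)⁻¹ * pd lam M x := by
    apply setIntegral_mono_on (integrableOn_sqrt_pd hlam M hT)
      ((integrableOn_pd hlam M hT.le).const_mul _) measurableSet_Ioi
    intro x hx
    exact mul_le_mul_of_nonneg_right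
      (inv_anti₀ (Real.sqrt_pos.2 hT) (Real.sqrt_le_sqrt (le_of_lt hx)))
      (pd_nonneg hlam M (hT.le.trans (le_of_lt hx)))
  rw [integral_const_mul, integral_pd_Ioi hlam M hT.le] at h1
  have h2 : (0:ℝ) ≤ (1 - Real.exp (-lam * T)) ^ M := pow_nonneg (base_nonneg hlam hT.le) M
  have h3 : (0:ℝ) ≤ (Real.sqrt T)⁻¹ := by positivity
  nlinarith

lemma tail_inv_le (hlam : 0 < lam) (M : ℕ) {T : ℝ} (hT : 0 < T) :
    ∫ x in Ioi T, x⁻¹ * pd lam M x ≤ T⁻¹ := by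
  have h1 : ∫ x in Ioi T, x⁻¹ * pd lam M x ≤ ∫ x in Ioi T, T⁻¹ * pd lam M x := by
    apply setIntegral_mono_on (integrableOn_inv_pd hlam M hT)
      ((integrableOn_pd hlam M hT.le).const_mul _) measurableSet_Ioi
    intro x hx
    exact mul_le_mul_of_nonneg_right (inv_anti₀ hT (le_of_lt hx))
      (pd_nonneg hlam M (hT.le.trans (le_of_lt hx)))
  rw [integral_const_mul, integral_pd_Ioi hlam M hT.le] at h1
  have h2 : (0:ℝ) ≤ (1 - Real.exp (-lam * T)) ^ M := pow_nonneg (base_nonneg hlam hT.le) M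
  have h3 : (0:ℝ) ≤ T⁻¹ := by positivity
  nlinarith

/-- full upper bound for the sqrt-weighted integral over `Ioi 0`. -/
lemma Js_sqrt_le (hlam : 0 < lam) (hM : 2 ≤ M) {T : ℝ} (hT : 0 < T) :
    ∫ x in Ioi 0, (Real.sqrt x)⁻¹ * pd lam M x
      ≤ (M : ℝ) * (lam + 1) * (1 - Real.exp (-lam * T)) ^ (M - 2) + (Real.sqrt T)⁻¹ := by
  rw [split_integral hT.le (integrableOn_sqrt_pd0 hlam hM)]
  have hC : (0:ℝ) ≤ (M : ℝ) * (lam + 1) * (1 - Real.exp (-lam * T)) ^ (M - 2) := by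
    have := base_nonneg hlam hT.le; positivity
  apply add_le_add
  · apply integral_Ioc_le_of_bound hlam hT hC
      ((integrableOn_sqrt_pd0 hlam hM).mono_set Ioc_subset_Ioi_self)
    intro x hx
    exact sqrt_pd_le hlam hM hx.1 hx.2
  · exact tail_sqrt_le hlam M hT

lemma Js_inv_le (hlam : 0 < lam) (hM : 2 ≤ M) {T : ℝ} (hT : 0 < T) :
    ∫ x in Ioi 0, x⁻¹ * pd lam M x
      ≤ (M : ℝ) * lam * (1 - Real.exp (-lam * T)) ^ (M - 2) + T⁻¹ := by
  rw [split_integral hT.le (integrableOn_inv_pd0 hlam hM)]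
  have hC : (0:ℝ) ≤ (M : ℝ) * lam * (1 - Real.exp (-lam * T)) ^ (M - 2) := by
    have := base_nonneg hlam hT.le; positivity
  apply add_le_add
  · apply integral_Ioc_le_of_bound hlam hT hC
      ((integrableOn_inv_pd0 hlam hM).mono_set Ioc_subset_Ioi_self)
    intro x hx
    exact inv_pd_le hlam hM hx.1 hx.2
  · exact tail_inv_le hlam M hT

/-- monotonicity: integral over `Ioi c` vs `Ioi 0`. -/
lemma Is_le_Js (hlam : 0 < lam) (hM : 2 ≤ M) {c : ℝ} (hc : 0 < c) {w : ℝ → ℝ}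
    (hw : ∀ x : ℝ, 0 < x → 0 ≤ w x)
    (hfi : IntegrableOn (fun x => w x * pd lam M x) (Ioi 0)) :
    ∫ x in Ioi c, w x * pd lam M x ≤ ∫ x in Ioi 0, w x * pd lam M x := by
  apply setIntegral_mono_set hfi
  · exact (ae_restrict_iff' measurableSet_Ioi).2 (Eventually.of_forall fun x hx =>
      mul_nonneg (hw x hx) (pd_nonneg hlam M (le_of_lt hx)))
  · exact HasSubset.Subset.eventuallyLE (Ioi_subset_Ioi hc.le)

/-- lower bound for the sqrt-weighted integral. -/
lemma Is_lower (hlam : 0 < lam) (M : ℕ) {c Tm Tp : ℝ} (hc : 0 < c) (hcT : c ≤ Tm)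
    (hTm : 0 < Tm) (hTmp : Tm ≤ Tp) :
    (Real.sqrt Tp)⁻¹ * ((1 - Real.exp (-lam * Tp)) ^ M - (1 - Real.exp (-lam * Tm)) ^ M)
      ≤ ∫ x in Ioi c, (Real.sqrt x)⁻¹ * pd lam M x := by
  have h1 : ∫ x in Ioc Tm Tp, (Real.sqrt Tp)⁻¹ * pd lam M x
      ≤ ∫ x in Ioc Tm Tp, (Real.sqrt x)⁻¹ * pd lam M x := by
    apply setIntegral_mono_on
      (((integrableOn_pd hlam M hTm.le).mono_set Ioc_subset_Ioi_self).const_mul _)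
      ((integrableOn_sqrt_pd hlam M hTm).mono_set Ioc_subset_Ioi_self)
      measurableSet_Ioc
    intro x hx
    exact mul_le_mul_of_nonneg_right
      (inv_anti₀ (Real.sqrt_pos.2 (hTm.trans hx.1)) (Real.sqrt_le_sqrt hx.2))
      (pd_nonneg hlam M (hTm.le.trans hx.1.le))
  have h2 : ∫ x in Ioc Tm Tp, (Real.sqrt x)⁻¹ * pd lam M x
      ≤ ∫ x in Ioi c, (Real.sqrt x)⁻¹ * pd lam M x := by
    apply setIntegral_mono_set (integrableOn_sqrt_pd hlam M hc)
    · exact (ae_restrict_iff' measurableSet_Ioi).2 (Eventually.of_forall fun x hx =>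
        mul_nonneg (by positivity) (pd_nonneg hlam M (hc.trans hx).le))
    · refine HasSubset.Subset.eventuallyLE ?_
      exact fun x hx => lt_of_le_of_lt hcT hx.1
  have h3 : ∫ x in Ioc Tm Tp, (Real.sqrt Tp)⁻¹ * pd lam M x
      = (Real.sqrt Tp)⁻¹ * ((1 - Real.exp (-lam * Tp)) ^ M - (1 - Real.exp (-lam * Tm)) ^ M) := by
    rw [integral_const_mul, integral_pd_Ioc hlam M hTmp]
  linarith



noncomputable def Tm (lam : ℝ) (M : ℕ) : ℝ := (Real.log M - 2 * Real.log (Real.log M)) / lam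
noncomputable def Tp (lam : ℝ) (M : ℕ) : ℝ := (Real.log M + 2 * Real.log (Real.log M)) / lam

lemma tendsto_L : Tendsto (fun M : ℕ => Real.log M) atTop atTop :=
  Real.tendsto_log_atTop.comp tendsto_natCast_atTop_atTop

lemma tendsto_log_div_self : Tendsto (fun x : ℝ => Real.log x / x) atTop (nhds 0) := by
  have h := Real.tendsto_pow_log_div_mul_add_atTop 1 0 1 one_ne_zero
  refine h.congr' ?_
  filter_upwards with x
  simp

lemma tendsto_logL_div_L :
    Tendsto (fun M : ℕ => Real.log (Real.log M) / Real.log M) atTop (nhds 0) :=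
  tendsto_log_div_self.comp tendsto_L

lemma tendsto_L2_div_M : Tendsto (fun M : ℕ => (Real.log M) ^ 2 / M) atTop (nhds 0) := by
  have h := Real.tendsto_pow_log_div_mul_add_atTop 1 0 2 one_ne_zero
  have h2 : Tendsto (fun x : ℝ => Real.log x ^ 2 / x) atTop (nhds 0) := by
    refine h.congr' ?_
    filter_upwards with x
    simp
  exact h2.comp tendsto_natCast_atTop_atTop

/-- bundle of eventual properties -/
lemma eventually_props : ∀ᶠ M : ℕ in atTop,
    4 ≤ M ∧ 6 ≤ Real.log M ∧ 1 ≤ Real.log (Real.log M) ∧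
      Real.log (Real.log M) ≤ Real.log M / 8 ∧ (Real.log M) ^ 2 / M ≤ 1 / 2 := by
  have h1 : ∀ᶠ M : ℕ in atTop, 4 ≤ M := eventually_ge_atTop 4
  have h2 : ∀ᶠ M : ℕ in atTop, 6 ≤ Real.log M := tendsto_L.eventually_ge_atTop 6
  have h3 : ∀ᶠ M : ℕ in atTop, 1 ≤ Real.log (Real.log M) :=
    (Real.tendsto_log_atTop.comp tendsto_L).eventually_ge_atTop 1
  have h4 : ∀ᶠ M : ℕ in atTop, Real.log (Real.log M) / Real.log M < 1 / 8 :=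
    tendsto_logL_div_L.eventually (gt_mem_nhds (by norm_num : (0:ℝ) < 1 / 8))
  have h5 : ∀ᶠ M : ℕ in atTop, (Real.log M) ^ 2 / M < 1 / 2 :=
    tendsto_L2_div_M.eventually (gt_mem_nhds (by norm_num : (0:ℝ) < 1 / 2))
  filter_upwards [h1, h2, h3, h4, h5] with M p1 p2 p3 p4 p5
  refine ⟨p1, p2, p3, ?_, p5.le⟩
  have hL : (0:ℝ) < Real.log M := by linarith
  rw [div_lt_iff₀ hL] at p4
  linarith

lemma exp_Tm_eq {lam : ℝ} (hlam : 0 < lam) {M : ℕ} (hM : 1 ≤ M) (hL : 0 < Real.log M) :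
    Real.exp (-lam * Tm lam M) = (Real.log M) ^ 2 / M := by
  have hM0 : (0:ℝ) < M := by exact_mod_cast Nat.pos_of_ne_zero (by omega)
  have h1 : -lam * Tm lam M
      = Real.log (Real.log M) + (Real.log (Real.log M) + -Real.log M) := by
    unfold Tm; field_simp; ring
  rw [h1, Real.exp_add, Real.exp_add, Real.exp_log hL, Real.exp_neg, Real.exp_log hM0]
  ring

lemma exp_Tp_eq {lam : ℝ} (hlam : 0 < lam) {M : ℕ} (hM : 1 ≤ M) (hL : 0 < Real.log M) :
    Real.exp (-lam * Tp lam M) = ((M:ℝ) * (Real.log M) ^ 2)⁻¹ := by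
  have hM0 : (0:ℝ) < M := by exact_mod_cast Nat.pos_of_ne_zero (by omega)
  have h1 : -lam * Tp lam M
      = -Real.log (Real.log M) + (-Real.log (Real.log M) + -Real.log M) := by
    unfold Tp; field_simp; ring
  rw [h1, Real.exp_add, Real.exp_add, Real.exp_neg, Real.exp_neg,
    Real.exp_log hL, Real.exp_log hM0]
  have hL0 : Real.log M ≠ 0 := ne_of_gt hL
  field_simp




variable {lam : ℝ}

lemma tendsto_exp_negL : Tendsto (fun M : ℕ => Real.exp (-Real.log M)) atTop (nhds 0) :=
  Real.tendsto_exp_atBot.comp (tendsto_neg_atTop_atBot.comp tendsto_L)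

lemma tendsto_L_mul_DD (hlam : 0 < lam) :
    Tendsto (fun M : ℕ => Real.log M * ((M:ℝ) * (1 - Real.exp (-lam * Tm lam M)) ^ (M - 2)))
      atTop (nhds 0) := by
  apply tendsto_of_tendsto_of_tendsto_of_le_of_le' tendsto_const_nhds tendsto_exp_negL
  · filter_upwards [eventually_props] with M hp
    obtain ⟨hM4, hL6, hLL1, hLL8, hL2M⟩ := hp
    have hM1 : 1 ≤ M := by omega
    have hL0 : (0:ℝ) < Real.log M := by linarith
    rw [exp_Tm_eq hlam hM1 hL0]
    have h1 : 0 ≤ 1 - (Real.log M) ^ 2 / M := by linarith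
    positivity
  · filter_upwards [eventually_props] with M hp
    obtain ⟨hM4, hL6, hLL1, hLL8, hL2M⟩ := hp
    set L := Real.log M with hLdef
    have hM1 : 1 ≤ M := by omega
    have hM0 : (0:ℝ) < M := by exact_mod_cast Nat.pos_of_ne_zero (by omega)
    have hL0 : (0:ℝ) < L := by linarith
    rw [exp_Tm_eq hlam hM1 hL0]
    set t := L ^ 2 / M with htdef
    have ht0 : 0 ≤ t := by positivity
    have hbase : 0 ≤ 1 - t := by linarith
    have h1 : 1 - t ≤ Real.exp (-t) := by
      have := Real.add_one_le_exp (-t); linarith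
    have h2 : (1 - t) ^ (M - 2) ≤ Real.exp (-t) ^ (M - 2) :=
      pow_le_pow_left₀ hbase h1 _
    have h3 : Real.exp (-t) ^ (M - 2) = Real.exp (-(((M:ℝ) - 2) * t)) := by
      rw [← Real.exp_nat_mul]
      congr 1
      have : ((M - 2 : ℕ) : ℝ) = (M : ℝ) - 2 := by
        rw [Nat.cast_sub (by omega)]; norm_num
      rw [this]; ring
    have h4 : Real.exp (-(((M:ℝ) - 2) * t)) ≤ Real.exp (-(L ^ 2 / 2)) := by
      apply Real.exp_le_exp.2
      have hM4' : (4:ℝ) ≤ M := by exact_mod_cast hM4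
      have e : ((M:ℝ) - 2) * t = (((M:ℝ) - 2) * L ^ 2) / M := by
        rw [htdef]; ring
      have : L ^ 2 / 2 ≤ ((M:ℝ) - 2) * t := by
        rw [e, div_le_div_iff₀ (by norm_num : (0:ℝ) < 2) hM0]
        nlinarith
      linarith
    have h5 : (1 - t) ^ (M - 2) ≤ Real.exp (-(L ^ 2 / 2)) := by
      calc (1 - t) ^ (M - 2) ≤ Real.exp (-t) ^ (M - 2) := h2
        _ = Real.exp (-(((M:ℝ) - 2) * t)) := h3
        _ ≤ Real.exp (-(L ^ 2 / 2)) := h4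
    have hLM : L * ((M:ℝ) * (1 - t) ^ (M - 2))
        ≤ Real.exp (Real.log L) * (Real.exp L * Real.exp (-(L ^ 2 / 2))) := by
      rw [Real.exp_log hL0]
      have hexpL : Real.exp L = (M:ℝ) := by
        rw [hLdef, Real.exp_log hM0]
      rw [hexpL]
      have := mul_le_mul_of_nonneg_left h5 hM0.le
      nlinarith
    calc L * ((M:ℝ) * (1 - t) ^ (M - 2))
        ≤ Real.exp (Real.log L) * (Real.exp L * Real.exp (-(L ^ 2 / 2))) := hLM
      _ = Real.exp (Real.log L + (L + -(L ^ 2 / 2))) := by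
          rw [Real.exp_add, Real.exp_add]
      _ ≤ Real.exp (-L) := by
          apply Real.exp_le_exp.2
          have hlogL : Real.log L ≤ L / 8 := hLL8
          nlinarith

lemma tendsto_gm (hlam : 0 < lam) :
    Tendsto (fun M : ℕ => (1 - Real.exp (-lam * Tm lam M)) ^ M) atTop (nhds 0) := by
  apply tendsto_of_tendsto_of_tendsto_of_le_of_le' tendsto_const_nhds tendsto_exp_negL
  · filter_upwards [eventually_props] with M hp
    obtain ⟨hM4, hL6, hLL1, hLL8, hL2M⟩ := hp
    have hL0 : (0:ℝ) < Real.log M := by linarith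
    rw [exp_Tm_eq hlam (by omega) hL0]
    have h1 : 0 ≤ 1 - (Real.log M) ^ 2 / M := by linarith
    positivity
  · filter_upwards [eventually_props] with M hp
    obtain ⟨hM4, hL6, hLL1, hLL8, hL2M⟩ := hp
    set L := Real.log M with hLdef
    have hM0 : (0:ℝ) < M := by exact_mod_cast Nat.pos_of_ne_zero (by omega)
    have hL0 : (0:ℝ) < L := by linarith
    rw [exp_Tm_eq hlam (by omega) hL0]
    set t := L ^ 2 / M with htdef
    have ht0 : 0 ≤ t := by positivity
    have hbase : 0 ≤ 1 - t := by linarith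
    have h1 : 1 - t ≤ Real.exp (-t) := by
      have := Real.add_one_le_exp (-t); linarith
    calc (1 - t) ^ M ≤ Real.exp (-t) ^ M := pow_le_pow_left₀ hbase h1 _
      _ = Real.exp (-((M:ℝ) * t)) := by rw [← Real.exp_nat_mul]; ring_nf
      _ ≤ Real.exp (-L) := by
          apply Real.exp_le_exp.2
          have : (M:ℝ) * t = L ^ 2 := by
            rw [htdef]; field_simp
          rw [this]
          nlinarith

lemma tendsto_gp (hlam : 0 < lam) :
    Tendsto (fun M : ℕ => (1 - Real.exp (-lam * Tp lam M)) ^ M) atTop (nhds 1) := by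
  have hlow : Tendsto (fun M : ℕ => 1 - ((Real.log M) ^ 2)⁻¹) atTop (nhds 1) := by
    have h1 : Tendsto (fun M : ℕ => (Real.log M) ^ 2) atTop atTop :=
      (tendsto_pow_atTop (by norm_num : 2 ≠ 0)).comp tendsto_L
    have h2 : Tendsto (fun M : ℕ => ((Real.log M) ^ 2)⁻¹) atTop (nhds 0) :=
      h1.inv_tendsto_atTop
    simpa using (tendsto_const_nhds (x := (1:ℝ))).sub h2
  apply tendsto_of_tendsto_of_tendsto_of_le_of_le' hlow tendsto_const_nhds
  · filter_upwards [eventually_props] with M hp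
    obtain ⟨hM4, hL6, hLL1, hLL8, hL2M⟩ := hp
    set L := Real.log M with hLdef
    have hM0 : (0:ℝ) < M := by exact_mod_cast Nat.pos_of_ne_zero (by omega)
    have hL0 : (0:ℝ) < L := by linarith
    rw [exp_Tp_eq hlam (by omega) hL0]
    have ha : (-2:ℝ) ≤ -((M:ℝ) * L ^ 2)⁻¹ := by
      have hM4' : (4:ℝ) ≤ (M:ℝ) := by exact_mod_cast hM4
      have h1 : ((M:ℝ) * L ^ 2)⁻¹ ≤ 1 := by
        apply inv_le_one_of_one_le₀
        nlinarith
      linarith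
    have := one_add_mul_le_pow ha M
    have heq : 1 + (M:ℝ) * -((M:ℝ) * L ^ 2)⁻¹ = 1 - (L ^ 2)⁻¹ := by
      field_simp; ring
    rw [heq] at this
    rw [sub_eq_add_neg]
    exact this
  · filter_upwards [eventually_props] with M hp
    obtain ⟨hM4, hL6, hLL1, hLL8, hL2M⟩ := hp
    have hL0 : (0:ℝ) < Real.log M := by linarith
    have hM0 : (0:ℝ) < M := by exact_mod_cast Nat.pos_of_ne_zero (by omega)
    rw [exp_Tp_eq hlam (by omega) hL0]
    apply pow_le_one₀
    · have hM1' : (1:ℝ) ≤ (M:ℝ) := by exact_mod_cast (by omega : 1 ≤ M)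
      have h1 : ((M:ℝ) * (Real.log M) ^ 2)⁻¹ ≤ 1 := by
        apply inv_le_one_of_one_le₀
        nlinarith
      linarith [inv_nonneg.2 (le_of_lt (by positivity : (0:ℝ) < (M:ℝ) * (Real.log M) ^ 2))]
    · have : (0:ℝ) < ((M:ℝ) * (Real.log M) ^ 2)⁻¹ := by positivity
      linarith

lemma tendsto_L_div_Tm (hlam : 0 < lam) :
    Tendsto (fun M : ℕ => Real.log M / Tm lam M) atTop (nhds lam) := by
  have h1 : Tendsto (fun M : ℕ => lam * (1 - 2 * (Real.log (Real.log M) / Real.log M))⁻¹)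
      atTop (nhds (lam * (1 - 2 * 0)⁻¹)) := by
    exact (((tendsto_const_nhds (x := (1:ℝ))).sub (tendsto_logL_div_L.const_mul 2)).inv₀
      (by norm_num)).const_mul lam
  have h2 : lam * ((1:ℝ) - 2 * 0)⁻¹ = lam := by norm_num
  rw [h2] at h1
  apply h1.congr'
  filter_upwards [eventually_props] with M hp
  obtain ⟨hM4, hL6, hLL1, hLL8, hL2M⟩ := hp
  set L := Real.log M
  have hL0 : (0:ℝ) < L := by linarith
  have hden : (0:ℝ) < L - 2 * Real.log L := by linarith
  unfold Tm
  change lam * (1 - 2 * (Real.log L / L))⁻¹ = L / ((L - 2 * Real.log L) / lam)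
  field_simp

lemma tendsto_L_div_Tp (hlam : 0 < lam) :
    Tendsto (fun M : ℕ => Real.log M / Tp lam M) atTop (nhds lam) := by
  have h1 : Tendsto (fun M : ℕ => lam * (1 + 2 * (Real.log (Real.log M) / Real.log M))⁻¹)
      atTop (nhds (lam * (1 + 2 * 0)⁻¹)) := by
    exact (((tendsto_const_nhds (x := (1:ℝ))).add (tendsto_logL_div_L.const_mul 2)).inv₀
      (by norm_num)).const_mul lam
  have h2 : lam * ((1:ℝ) + 2 * 0)⁻¹ = lam := by norm_num
  rw [h2] at h1
  apply h1.congr'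
  filter_upwards [eventually_props] with M hp
  obtain ⟨hM4, hL6, hLL1, hLL8, hL2M⟩ := hp
  set L := Real.log M
  have hL0 : (0:ℝ) < L := by linarith
  have hden : (0:ℝ) < L + 2 * Real.log L := by linarith
  unfold Tp
  change lam * (1 + 2 * (Real.log L / L))⁻¹ = L / ((L + 2 * Real.log L) / lam)
  field_simp

lemma tendsto_sqrtL_div_sqrtTm (hlam : 0 < lam) :
    Tendsto (fun M : ℕ => Real.sqrt (Real.log M) * (Real.sqrt (Tm lam M))⁻¹)
      atTop (nhds (Real.sqrt lam)) := by
  have h := (Real.continuous_sqrt.tendsto lam).comp (tendsto_L_div_Tm hlam)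
  apply h.congr'
  filter_upwards with M
  show Real.sqrt (Real.log M / Tm lam M) = _
  rw [div_eq_mul_inv, Real.sqrt_mul (Real.log_natCast_nonneg M), Real.sqrt_inv]

lemma tendsto_sqrtL_div_sqrtTp (hlam : 0 < lam) :
    Tendsto (fun M : ℕ => Real.sqrt (Real.log M) * (Real.sqrt (Tp lam M))⁻¹)
      atTop (nhds (Real.sqrt lam)) := by
  have h := (Real.continuous_sqrt.tendsto lam).comp (tendsto_L_div_Tp hlam)
  apply h.congr'
  filter_upwards with M
  show Real.sqrt (Real.log M / Tp lam M) = _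
  rw [div_eq_mul_inv, Real.sqrt_mul (Real.log_natCast_nonneg M), Real.sqrt_inv]

lemma tendsto_Tm_atTop (hlam : 0 < lam) : Tendsto (fun M : ℕ => Tm lam M) atTop atTop := by
  apply tendsto_atTop_mono' atTop (f₁ := fun M : ℕ => Real.log M / (2 * lam))
  · filter_upwards [eventually_props] with M hp
    obtain ⟨hM4, hL6, hLL1, hLL8, hL2M⟩ := hp
    unfold Tm
    rw [div_le_div_iff₀ (by positivity) hlam]
    nlinarith
  · exact tendsto_L.atTop_div_const (by positivity)

lemma tendsto_inv_sqrt_Tm (hlam : 0 < lam) :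
    Tendsto (fun M : ℕ => (Real.sqrt (Tm lam M))⁻¹) atTop (nhds 0) := by
  have h1 : Tendsto (fun M : ℕ => (Tm lam M)⁻¹) atTop (nhds 0) :=
    (tendsto_Tm_atTop hlam).inv_tendsto_atTop
  have h2 := (Real.continuous_sqrt.tendsto 0).comp h1
  rw [Real.sqrt_zero] at h2
  apply h2.congr'
  filter_upwards with M
  show Real.sqrt (Tm lam M)⁻¹ = _
  rw [Real.sqrt_inv]

lemma tendsto_inv_Tm (hlam : 0 < lam) :
    Tendsto (fun M : ℕ => (Tm lam M)⁻¹) atTop (nhds 0) :=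
  (tendsto_Tm_atTop hlam).inv_tendsto_atTop


lemma hpower_convert {lam : ℝ} (hlam : 0 < lam) (M : ℕ) {nu bb : ℝ} (hnu : 0 < nu)
    (hbb : 0 < bb) :
    (∫ x in Ioi (bb ^ 2 * nu), (1 / Real.sqrt (x * nu) - bb / x) * pd lam M x)
      = (Real.sqrt nu)⁻¹ * (∫ x in Ioi (bb ^ 2 * nu), (Real.sqrt x)⁻¹ * pd lam M x)
        - bb * ∫ x in Ioi (bb ^ 2 * nu), x⁻¹ * pd lam M x := by
  have hc : 0 < bb ^ 2 * nu := by positivity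
  have h1 : ∫ x in Ioi (bb ^ 2 * nu), (1 / Real.sqrt (x * nu) - bb / x) * pd lam M x
      = ∫ x in Ioi (bb ^ 2 * nu),
          ((Real.sqrt nu)⁻¹ * ((Real.sqrt x)⁻¹ * pd lam M x) - bb * (x⁻¹ * pd lam M x)) := by
    apply setIntegral_congr_fun measurableSet_Ioi
    intro x hx
    have hx0 : 0 < x := hc.trans hx
    dsimp only
    rw [Real.sqrt_mul hx0.le, one_div, mul_inv, div_eq_mul_inv]
    ring
  rw [h1, integral_sub ((integrableOn_sqrt_pd hlam M hc).const_mul _)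
    ((integrableOn_inv_pd hlam M hc).const_mul _), integral_const_mul, integral_const_mul]

lemma hED_convert {lam : ℝ} (hlam : 0 < lam) (M : ℕ) {nu bb AA BB : ℝ} (hnu : 0 < nu)
    (hbb : 0 < bb) :
    (∫ x in Ioi (bb ^ 2 * nu), (AA * (1 + BB * Real.sqrt (nu / x))) * pd lam M x)
      = AA * (∫ x in Ioi (bb ^ 2 * nu), pd lam M x)
        + (AA * BB * Real.sqrt nu) * ∫ x in Ioi (bb ^ 2 * nu), (Real.sqrt x)⁻¹ * pd lam M x := by
  have hc : 0 < bb ^ 2 * nu := by positivity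
  have h1 : ∫ x in Ioi (bb ^ 2 * nu), (AA * (1 + BB * Real.sqrt (nu / x))) * pd lam M x
      = ∫ x in Ioi (bb ^ 2 * nu),
          (AA * pd lam M x + (AA * BB * Real.sqrt nu) * ((Real.sqrt x)⁻¹ * pd lam M x)) := by
    apply setIntegral_congr_fun measurableSet_Ioi
    intro x hx
    have hx0 : 0 < x := hc.trans hx
    dsimp only
    rw [Real.sqrt_div hnu.le, div_eq_mul_inv]
    ring
  rw [h1, integral_add ((integrableOn_pd hlam M hc.le).const_mul _)
    ((integrableOn_sqrt_pd hlam M hc).const_mul _), integral_const_mul, integral_const_mul]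

noncomputable def IsF (lam b : ℝ) (ν : ℕ → ℝ) (M : ℕ) : ℝ :=
  ∫ x in Ioi (b ^ 2 * ν M), (Real.sqrt x)⁻¹ * pd lam M x

noncomputable def I1F (lam b : ℝ) (ν : ℕ → ℝ) (M : ℕ) : ℝ :=
  ∫ x in Ioi (b ^ 2 * ν M), x⁻¹ * pd lam M x

noncomputable def qF (lam b : ℝ) (ν : ℕ → ℝ) (M : ℕ) : ℝ :=
  (1 - Real.exp (-lam * (b ^ 2 * ν M))) ^ M

lemma tendsto_main {lam b A B sθ : ℝ} (hlam : 0 < lam) (hb0 : 0 < b)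
    {ν : ℕ → ℝ} (hν : ∀ M : ℕ, 1 ≤ M → 0 < ν M)
    (hkey : ∀ M : ℕ, 1 ≤ M →
      (Real.sqrt (ν M))⁻¹ * IsF lam b ν M - b * I1F lam b ν M = 1)
    {ED : ℕ → ℝ}
    (hEDeq : ∀ M : ℕ, 1 ≤ M → ED M - A
      = A * B * (Real.sqrt (ν M) * IsF lam b ν M) + (sθ - A) * qF lam b ν M) :
    Tendsto (fun M : ℕ => Real.log M * (ED M - A)) atTop (nhds (A * B * lam)) := by
  have hcpos : ∀ M : ℕ, 1 ≤ M → 0 < b ^ 2 * ν M := fun M hM => by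
    have := hν M hM; positivity
  have hIsnn : ∀ M : ℕ, 1 ≤ M → 0 ≤ IsF lam b ν M := by
    intro M hM
    apply setIntegral_nonneg measurableSet_Ioi
    intro x hx
    have hx0 : 0 < x := (hcpos M hM).trans hx
    exact mul_nonneg (by positivity) (pd_nonneg hlam M hx0.le)
  have hI1nn : ∀ M : ℕ, 1 ≤ M → 0 ≤ I1F lam b ν M := by
    intro M hM
    apply setIntegral_nonneg measurableSet_Ioi
    intro x hx
    have hx0 : 0 < x := (hcpos M hM).trans hx
    exact mul_nonneg (by positivity) (pd_nonneg hlam M hx0.le)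
  have hIseq : ∀ M : ℕ, 1 ≤ M →
      IsF lam b ν M = Real.sqrt (ν M) * (1 + b * I1F lam b ν M) := by
    intro M hM
    have h := hkey M hM
    have hs : 0 < Real.sqrt (ν M) := Real.sqrt_pos.2 (hν M hM)
    have h' : Real.sqrt (ν M) * ((Real.sqrt (ν M))⁻¹ * IsF lam b ν M)
        = Real.sqrt (ν M) * (1 + b * I1F lam b ν M) := by
      rw [show (Real.sqrt (ν M))⁻¹ * IsF lam b ν M = 1 + b * I1F lam b ν M from by linarith]
    rwa [← mul_assoc, mul_inv_cancel₀ hs.ne', one_mul] at h'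
  have hsqν_le : ∀ M : ℕ, 1 ≤ M → Real.sqrt (ν M) ≤ IsF lam b ν M := by
    intro M hM
    rw [hIseq M hM]
    have h1 := hI1nn M hM
    have h2 : (1:ℝ) ≤ 1 + b * I1F lam b ν M := by nlinarith
    exact le_mul_of_one_le_right (Real.sqrt_nonneg _) h2
  -- DD and its limits
  have hLDD := tendsto_L_mul_DD (lam := lam) hlam
  have hTm0 : ∀ᶠ M : ℕ in atTop, 0 < Tm lam M :=
    (tendsto_Tm_atTop hlam).eventually_gt_atTop 0
  have hL1 : ∀ᶠ M : ℕ in atTop, 1 ≤ Real.log M := tendsto_L.eventually_ge_atTop 1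
  have hDDnn : ∀ᶠ M : ℕ in atTop,
      0 ≤ (M : ℝ) * (1 - Real.exp (-lam * Tm lam M)) ^ (M - 2) := by
    filter_upwards [hTm0] with M h
    have := base_nonneg hlam (le_of_lt h) (lam := lam) (x := Tm lam M)
    positivity
  have hDD0 : Tendsto (fun M : ℕ => (M : ℝ) * (1 - Real.exp (-lam * Tm lam M)) ^ (M - 2))
      atTop (nhds 0) := by
    apply tendsto_of_tendsto_of_tendsto_of_le_of_le' tendsto_const_nhds hLDD hDDnn
    filter_upwards [hL1, hDDnn] with M h1 h2
    exact le_mul_of_one_le_left h2 h1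
  -- upper bound u for Is
  have hu : Tendsto (fun M : ℕ =>
      (lam + 1) * ((M : ℝ) * (1 - Real.exp (-lam * Tm lam M)) ^ (M - 2))
        + (Real.sqrt (Tm lam M))⁻¹) atTop (nhds 0) := by
    have := (hDD0.const_mul (lam + 1)).add (tendsto_inv_sqrt_Tm hlam)
    simpa using this
  have hIs_le_u : ∀ᶠ M : ℕ in atTop, IsF lam b ν M
      ≤ (lam + 1) * ((M : ℝ) * (1 - Real.exp (-lam * Tm lam M)) ^ (M - 2))
        + (Real.sqrt (Tm lam M))⁻¹ := by
    filter_upwards [eventually_props, hTm0, eventually_ge_atTop 1] with M hp hTmpos hM1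
    obtain ⟨hM4, hL6, hLL1, hLL8, hL2M⟩ := hp
    have hM2 : 2 ≤ M := by omega
    calc IsF lam b ν M ≤ ∫ x in Ioi 0, (Real.sqrt x)⁻¹ * pd lam M x :=
          Is_le_Js hlam hM2 (hcpos M hM1) (fun x hx => by positivity)
            (integrableOn_sqrt_pd0 hlam hM2)
      _ ≤ (M : ℝ) * (lam + 1) * (1 - Real.exp (-lam * Tm lam M)) ^ (M - 2)
            + (Real.sqrt (Tm lam M))⁻¹ := Js_sqrt_le hlam hM2 hTmpos
      _ = (lam + 1) * ((M : ℝ) * (1 - Real.exp (-lam * Tm lam M)) ^ (M - 2))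
            + (Real.sqrt (Tm lam M))⁻¹ := by ring
  -- ν → 0
  have hν0 : Tendsto ν atTop (nhds 0) := by
    have huu : Tendsto (fun M : ℕ =>
        ((lam + 1) * ((M : ℝ) * (1 - Real.exp (-lam * Tm lam M)) ^ (M - 2))
          + (Real.sqrt (Tm lam M))⁻¹)
        * ((lam + 1) * ((M : ℝ) * (1 - Real.exp (-lam * Tm lam M)) ^ (M - 2))
          + (Real.sqrt (Tm lam M))⁻¹)) atTop (nhds 0) := by
      simpa using hu.mul hu
    apply tendsto_of_tendsto_of_tendsto_of_le_of_le' tendsto_const_nhds huu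
    · filter_upwards [eventually_ge_atTop 1] with M hM
      exact (hν M hM).le
    · filter_upwards [hIs_le_u, eventually_ge_atTop 1] with M h1 hM1
      have h2 := hsqν_le M hM1
      have h3 := hIsnn M hM1
      have h4 : Real.sqrt (ν M) * Real.sqrt (ν M) = ν M :=
        Real.mul_self_sqrt (hν M hM1).le
      nlinarith [Real.sqrt_nonneg (ν M)]
  have hc0 : Tendsto (fun M : ℕ => b ^ 2 * ν M) atTop (nhds 0) := by
    simpa using hν0.const_mul (b ^ 2)
  have hcTm : ∀ᶠ M : ℕ in atTop, b ^ 2 * ν M ≤ Tm lam M := by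
    have h1 : ∀ᶠ M : ℕ in atTop, b ^ 2 * ν M < 1 :=
      hc0.eventually (gt_mem_nhds one_pos)
    have h2 : ∀ᶠ M : ℕ in atTop, (1:ℝ) ≤ Tm lam M :=
      (tendsto_Tm_atTop hlam).eventually_ge_atTop 1
    filter_upwards [h1, h2] with M ha hb
    linarith
  -- limit of S := √L * Is
  have hU : Tendsto (fun M : ℕ =>
      (lam + 1) * (Real.log M * ((M : ℝ) * (1 - Real.exp (-lam * Tm lam M)) ^ (M - 2)))
        + Real.sqrt (Real.log M) * (Real.sqrt (Tm lam M))⁻¹) atTop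
      (nhds (Real.sqrt lam)) := by
    have := (hLDD.const_mul (lam + 1)).add (tendsto_sqrtL_div_sqrtTm hlam)
    simpa using this
  have hW : Tendsto (fun M : ℕ =>
      (Real.sqrt (Real.log M) * (Real.sqrt (Tp lam M))⁻¹)
        * ((1 - Real.exp (-lam * Tp lam M)) ^ M - (1 - Real.exp (-lam * Tm lam M)) ^ M))
      atTop (nhds (Real.sqrt lam)) := by
    have := (tendsto_sqrtL_div_sqrtTp hlam).mul ((tendsto_gp hlam).sub (tendsto_gm hlam))
    simpa using this
  have hS : Tendsto (fun M : ℕ => Real.sqrt (Real.log M) * IsF lam b ν M) atTop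
      (nhds (Real.sqrt lam)) := by
    apply tendsto_of_tendsto_of_tendsto_of_le_of_le' hW hU
    · -- lower bound
      filter_upwards [eventually_props, hcTm, hTm0, eventually_ge_atTop 1]
        with M hp hcT hTmpos hM1
      obtain ⟨hM4, hL6, hLL1, hLL8, hL2M⟩ := hp
      have hTmTp : Tm lam M ≤ Tp lam M := by
        unfold Tm Tp
        have hnum : Real.log M - 2 * Real.log (Real.log M)
            ≤ Real.log M + 2 * Real.log (Real.log M) := by linarith
        exact (div_le_div_iff_of_pos_right hlam).mpr hnum
      have hlow := Is_lower hlam M (hcpos M hM1) hcT hTmpos hTmTp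
      calc (Real.sqrt (Real.log M) * (Real.sqrt (Tp lam M))⁻¹)
            * ((1 - Real.exp (-lam * Tp lam M)) ^ M - (1 - Real.exp (-lam * Tm lam M)) ^ M)
          = Real.sqrt (Real.log M) * ((Real.sqrt (Tp lam M))⁻¹
            * ((1 - Real.exp (-lam * Tp lam M)) ^ M
              - (1 - Real.exp (-lam * Tm lam M)) ^ M)) := by ring
        _ ≤ Real.sqrt (Real.log M) * IsF lam b ν M :=
            mul_le_mul_of_nonneg_left hlow (Real.sqrt_nonneg _)
    · -- upper bound
      filter_upwards [hIs_le_u, hL1, hDDnn] with M h1 h2 h3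
      have hsqL : Real.sqrt (Real.log M) ≤ Real.log M := by
        rw [Real.sqrt_le_left (by linarith)]
        nlinarith
      calc Real.sqrt (Real.log M) * IsF lam b ν M
          ≤ Real.sqrt (Real.log M)
            * ((lam + 1) * ((M : ℝ) * (1 - Real.exp (-lam * Tm lam M)) ^ (M - 2))
              + (Real.sqrt (Tm lam M))⁻¹) :=
            mul_le_mul_of_nonneg_left h1 (Real.sqrt_nonneg _)
        _ = Real.sqrt (Real.log M)
              * ((lam + 1) * ((M : ℝ) * (1 - Real.exp (-lam * Tm lam M)) ^ (M - 2)))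
            + Real.sqrt (Real.log M) * (Real.sqrt (Tm lam M))⁻¹ := by ring
        _ ≤ Real.log M
              * ((lam + 1) * ((M : ℝ) * (1 - Real.exp (-lam * Tm lam M)) ^ (M - 2)))
            + Real.sqrt (Real.log M) * (Real.sqrt (Tm lam M))⁻¹ := by
            have hnn : 0 ≤ (lam + 1) * ((M : ℝ) * (1 - Real.exp (-lam * Tm lam M)) ^ (M - 2)) := by
              positivity
            have := mul_le_mul_of_nonneg_right hsqL hnn
            linarith
        _ = (lam + 1) * (Real.log M * ((M : ℝ) * (1 - Real.exp (-lam * Tm lam M)) ^ (M - 2)))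
            + Real.sqrt (Real.log M) * (Real.sqrt (Tm lam M))⁻¹ := by ring
  -- I1 → 0
  have hI1_0 : Tendsto (fun M : ℕ => I1F lam b ν M) atTop (nhds 0) := by
    have hv : Tendsto (fun M : ℕ =>
        lam * ((M : ℝ) * (1 - Real.exp (-lam * Tm lam M)) ^ (M - 2)) + (Tm lam M)⁻¹)
        atTop (nhds 0) := by
      have := (hDD0.const_mul lam).add (tendsto_inv_Tm hlam)
      simpa using this
    apply tendsto_of_tendsto_of_tendsto_of_le_of_le' tendsto_const_nhds hv
    · filter_upwards [eventually_ge_atTop 1] with M hM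
      exact hI1nn M hM
    · filter_upwards [eventually_props, hTm0, eventually_ge_atTop 1] with M hp hTmpos hM1
      obtain ⟨hM4, hL6, hLL1, hLL8, hL2M⟩ := hp
      have hM2 : 2 ≤ M := by omega
      calc I1F lam b ν M ≤ ∫ x in Ioi 0, x⁻¹ * pd lam M x :=
            Is_le_Js hlam hM2 (hcpos M hM1) (fun x hx => by positivity)
              (integrableOn_inv_pd0 hlam hM2)
        _ ≤ (M : ℝ) * lam * (1 - Real.exp (-lam * Tm lam M)) ^ (M - 2) + (Tm lam M)⁻¹ :=
            Js_inv_le hlam hM2 hTmpos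
        _ = lam * ((M : ℝ) * (1 - Real.exp (-lam * Tm lam M)) ^ (M - 2)) + (Tm lam M)⁻¹ := by
            ring
  -- L * q → 0
  have hLq : Tendsto (fun M : ℕ => Real.log M * qF lam b ν M) atTop (nhds 0) := by
    have hV : Tendsto (fun M : ℕ => (lam ^ 2 * b ^ 4)
        * ((Real.sqrt (Real.log M) * IsF lam b ν M) ^ 2
          * ((Real.sqrt (Real.log M) * IsF lam b ν M) ^ 2 * (Real.log M)⁻¹)))
        atTop (nhds 0) := by
      have := (((hS.pow 2).mul ((hS.pow 2).mul
        tendsto_L.inv_tendsto_atTop))).const_mul (lam ^ 2 * b ^ 4)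
      simpa using this
    apply tendsto_of_tendsto_of_tendsto_of_le_of_le' tendsto_const_nhds hV
    · filter_upwards [eventually_ge_atTop 1] with M hM
      have hc := (hcpos M hM).le
      have h0 := base_nonneg hlam hc (lam := lam)
      have : 0 ≤ qF lam b ν M := pow_nonneg h0 M
      have hLnn : 0 ≤ Real.log (M:ℕ) := Real.log_natCast_nonneg M
      positivity
    · filter_upwards [eventually_props, eventually_ge_atTop 1, hL1] with M hp hM1 hLge
      obtain ⟨hM4, hL6, hLL1, hLL8, hL2M⟩ := hp
      have hM2 : 2 ≤ M := by omega
      have hcp := hcpos M hM1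
      have h0 := base_nonneg hlam hcp.le (lam := lam) (x := b ^ 2 * ν M)
      have h1 : qF lam b ν M ≤ (1 - Real.exp (-lam * (b ^ 2 * ν M))) ^ 2 :=
        pow_le_pow_of_le_one h0 base_le_one hM2
      have h2 : 1 - Real.exp (-lam * (b ^ 2 * ν M)) ≤ lam * (b ^ 2 * ν M) := base_le
      have h3 : ν M ≤ IsF lam b ν M ^ 2 := by
        have h4 := hsqν_le M hM1
        have h5 : Real.sqrt (ν M) ^ 2 = ν M := Real.sq_sqrt (hν M hM1).le
        nlinarith [Real.sqrt_nonneg (ν M), hIsnn M hM1]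
      have h6 : (1 - Real.exp (-lam * (b ^ 2 * ν M))) ^ 2
          ≤ (lam * (b ^ 2 * ν M)) ^ 2 := by
        apply pow_le_pow_left₀ h0 h2
      have h7 : (lam * (b ^ 2 * ν M)) ^ 2
          ≤ lam ^ 2 * b ^ 4 * (IsF lam b ν M ^ 2) ^ 2 := by
        have hν' := (hν M hM1).le
        have hp2 := pow_le_pow_left₀ hν' h3 2
        have hpos : (0:ℝ) ≤ lam ^ 2 * b ^ 4 := by positivity
        have e : (lam * (b ^ 2 * ν M)) ^ 2 = lam ^ 2 * b ^ 4 * ν M ^ 2 := by ring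
        rw [e]
        exact mul_le_mul_of_nonneg_left hp2 hpos
      have hq2 : qF lam b ν M ≤ lam ^ 2 * b ^ 4 * (IsF lam b ν M ^ 2) ^ 2 := by
        linarith
      have hL0 : (0:ℝ) < Real.log M := by linarith
      have hsq : Real.sqrt (Real.log M) ^ 2 = Real.log M :=
        Real.sq_sqrt (Real.log_natCast_nonneg M)
      have hVeq : (lam ^ 2 * b ^ 4)
          * ((Real.sqrt (Real.log M) * IsF lam b ν M) ^ 2
            * ((Real.sqrt (Real.log M) * IsF lam b ν M) ^ 2 * (Real.log M)⁻¹))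
          = Real.log M * (lam ^ 2 * b ^ 4 * (IsF lam b ν M ^ 2) ^ 2) := by
        rw [mul_pow, hsq]
        field_simp
      rw [hVeq]
      exact mul_le_mul_of_nonneg_left hq2 hL0.le
  -- final assembly
  have T2 : Tendsto (fun M : ℕ => 1 + b * I1F lam b ν M) atTop (nhds 1) := by
    have := (tendsto_const_nhds (x := (1:ℝ))).add (hI1_0.const_mul b)
    simpa using this
  have T3 : Tendsto (fun M : ℕ =>
      (Real.sqrt (Real.log M) * IsF lam b ν M) ^ 2 / (1 + b * I1F lam b ν M))
      atTop (nhds (Real.sqrt lam ^ 2 / 1)) := (hS.pow 2).div T2 one_ne_zero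
  have T4 : Tendsto (fun M : ℕ =>
      A * B * ((Real.sqrt (Real.log M) * IsF lam b ν M) ^ 2 / (1 + b * I1F lam b ν M))
        + (sθ - A) * (Real.log M * qF lam b ν M)) atTop
      (nhds (A * B * (Real.sqrt lam ^ 2 / 1) + (sθ - A) * 0)) :=
    (T3.const_mul (A * B)).add (hLq.const_mul (sθ - A))
  have hval : A * B * (Real.sqrt lam ^ 2 / 1) + (sθ - A) * 0 = A * B * lam := by
    rw [Real.sq_sqrt hlam.le]; ring
  rw [hval] at T4
  apply T4.congr'
  filter_upwards [eventually_ge_atTop 1] with M hM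
  have h1 := hEDeq M hM
  have hpb : 0 < 1 + b * I1F lam b ν M := by
    have := hI1nn M hM
    nlinarith
  have hsq : Real.sqrt (Real.log M) ^ 2 = Real.log M :=
    Real.sq_sqrt (Real.log_natCast_nonneg M)
  show _ = Real.log M * (ED M - A)
  rw [h1, mul_pow, hsq, hIseq M hM]
  field_simp

end DivOptAux

/-- The expected distortion of the multi-sensor diversity scheme under optimal
water-filling power allocation has the same asymptotics as under constant power
allocation: with `A = σθ²σv²/(σθ²+σv²)`, `B = σn²σθ²/(σv²(σθ²+σv²))`,
`b = σn²/(σθ²+σv²)`, Lagrange multipliers `ν_M` determined by the unit power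
constraint, and
`E[D_M] = ∫_{b²ν_M}^∞ A(1 + B√(ν_M/x)) p_M(x) dx + σθ²(1-e^{-λb²ν_M})^M`,
one has `ln(M)·(E[D_M] − A) → A·B·λ` as `M → ∞`. -/
theorem diversity_optimal_power_asymptotics (sθ sv sn lam : ℝ)
    (hθ : 0 < sθ) (hv : 0 < sv) (hn : 0 < sn) (hlam : 0 < lam)
    (A B b : ℝ) (hA : A = sθ * sv / (sθ + sv))
    (hB : B = sn * sθ / (sv * (sθ + sv)))
    (hb : b = sn / (sθ + sv))
    (ν : ℕ → ℝ) (hν : ∀ M : ℕ, 1 ≤ M → 0 < ν M)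
    (hpower : ∀ M : ℕ, 1 ≤ M →
      (∫ x in Set.Ioi (b ^ 2 * ν M),
          (1 / Real.sqrt (x * ν M) - b / x) *
            ((M : ℝ) * (1 - Real.exp (-lam * x)) ^ (M - 1)
              * (lam * Real.exp (-lam * x)))) = 1)
    (ED : ℕ → ℝ)
    (hED : ∀ M : ℕ, 1 ≤ M →
      ED M = (∫ x in Set.Ioi (b ^ 2 * ν M),
          (A * (1 + B * Real.sqrt (ν M / x))) *
            ((M : ℝ) * (1 - Real.exp (-lam * x)) ^ (M - 1)
              * (lam * Real.exp (-lam * x))))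
        + sθ * (1 - Real.exp (-lam * (b ^ 2 * ν M))) ^ M) :
    Tendsto (fun M : ℕ => Real.log M * (ED M - A)) atTop (nhds (A * B * lam)) := by
  have hb0 : 0 < b := by rw [hb]; positivity
  apply DivOptAux.tendsto_main hlam hb0 hν
  · intro M hM
    have h2 := DivOptAux.hpower_convert (lam := lam) hlam M (hν M hM) hb0
    show (Real.sqrt (ν M))⁻¹
          * (∫ x in Set.Ioi (b ^ 2 * ν M), (Real.sqrt x)⁻¹ * DivOptAux.pd lam M x)
        - b * (∫ x in Set.Ioi (b ^ 2 * ν M), x⁻¹ * DivOptAux.pd lam M x) = 1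
    rw [← h2]
    exact hpower M hM
  · intro M hM
    have hc : (0:ℝ) < b ^ 2 * ν M := by have := hν M hM; positivity
    have h2 := DivOptAux.hED_convert (lam := lam) hlam M (hν M hM) hb0 (AA := A) (BB := B)
    rw [DivOptAux.integral_pd_Ioi hlam M hc.le] at h2
    have h := hED M hM
    have h3 : (∫ x in Set.Ioi (b ^ 2 * ν M),
          (A * (1 + B * Real.sqrt (ν M / x))) *
            ((M : ℝ) * (1 - Real.exp (-lam * x)) ^ (M - 1)
              * (lam * Real.exp (-lam * x))))
        = A * (1 - (1 - Real.exp (-lam * (b ^ 2 * ν M))) ^ M)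
          + (A * B * Real.sqrt (ν M)) * DivOptAux.IsF lam b ν M := h2
    rw [h3] at h
    show ED M - A = A * B * (Real.sqrt (ν M) * DivOptAux.IsF lam b ν M)
        + (sθ - A) * DivOptAux.qF lam b ν M
    rw [h]
    unfold DivOptAux.qF
    ring
end

section
/- Let λ > 0 and b > 0, and for each integer M ≥ 1 set T_M = (1/λ)ln(M). Suppose ν_M > 0 satisfies ∫_{max(T_M, b²ν_M)}^∞ (1/√(x·ν_M) − b/x) · λ e^{−λx} dx = 1/M. Then ν_M ≤ λπ for every M, and consequently there exists M₀ such that T_M > b²·ν_M for all M ≥ M₀. -/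
open MeasureTheory Filter Real

lemma exp_int (lam L : ℝ) (hlam : 0 < lam) :
    (∫ x in Set.Ioi L, Real.exp (-lam * x)) = lam⁻¹ * Real.exp (-lam * L) := by
  have := MeasureTheory.integral_comp_mul_left_Ioi (fun x => Real.exp (-x)) L hlam
  simp only [smul_eq_mul] at this
  rw [show (fun x => Real.exp (-lam * x)) = fun x => Real.exp (-(lam * x)) by
    funext x; ring_nf]
  rw [this, integral_exp_neg_Ioi]
  ring_nf

lemma key2 (lam b V T : ℝ) (hlam : 0 < lam) (hb : 0 < b) (hV : 0 < V) (hT : 0 < T)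
    (heq : (∫ x in Set.Ioi (max T (b ^ 2 * V)),
        (1 / Real.sqrt (x * V) - b / x) * (lam * Real.exp (-lam * x)))
      = Real.exp (-lam * T)) :
    T * V ≤ 1 := by
  by_contra h
  push_neg at h
  set L := max T (b ^ 2 * V) with hLdef
  have hTL : T ≤ L := le_max_left _ _
  have hL : 0 < L := lt_of_lt_of_le hT hTL
  set f : ℝ → ℝ := fun x => (1 / Real.sqrt (x * V) - b / x) * (lam * Real.exp (-lam * x)) with hf
  have hfi : IntegrableOn f (Set.Ioi L) := by
    by_contra h'
    rw [MeasureTheory.integral_undef h'] at heq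
    exact (Real.exp_pos _).ne heq
  set c : ℝ := (Real.sqrt (T * V))⁻¹ with hc
  have hsTV : 1 < Real.sqrt (T * V) := by
    rw [show (1:ℝ) = Real.sqrt 1 by simp]
    exact Real.sqrt_lt_sqrt (by norm_num) h
  have hcpos : 0 < c := inv_pos.mpr (lt_trans one_pos hsTV)
  have hc1 : c < 1 := inv_lt_one_of_one_lt₀ hsTV
  have hbound : ∀ x ∈ Set.Ioi L, f x ≤ c * (lam * Real.exp (-lam * x)) := by
    intro x hx
    have hx' : T < x := lt_of_le_of_lt hTL hx
    have hx0 : 0 < x := lt_trans hT hx'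
    have h1 : 1 / Real.sqrt (x * V) - b / x ≤ c := by
      have hs : Real.sqrt (T * V) ≤ Real.sqrt (x * V) :=
        Real.sqrt_le_sqrt (by nlinarith)
      have hs0 : 0 < Real.sqrt (T * V) := lt_trans one_pos hsTV
      have : 1 / Real.sqrt (x * V) ≤ c := by
        rw [one_div, hc]
        exact inv_anti₀ hs0 hs
      have hbx : 0 < b / x := div_pos hb hx0
      linarith
    have h2 : 0 ≤ lam * Real.exp (-lam * x) := by positivity
    exact mul_le_mul_of_nonneg_right h1 h2 |>.trans_eq rfl
  have hgi : IntegrableOn (fun x => c * (lam * Real.exp (-lam * x))) (Set.Ioi L) := by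
    exact (((exp_neg_integrableOn_Ioi L hlam).const_mul lam).const_mul c)
  have hle : (∫ x in Set.Ioi L, f x) ≤ ∫ x in Set.Ioi L, c * (lam * Real.exp (-lam * x)) :=
    setIntegral_mono_on hfi hgi measurableSet_Ioi hbound
  have hval : (∫ x in Set.Ioi L, c * (lam * Real.exp (-lam * x)))
      = c * Real.exp (-lam * L) := by
    rw [MeasureTheory.integral_const_mul, MeasureTheory.integral_const_mul, exp_int lam L hlam]
    field_simp
  have hmono : Real.exp (-lam * L) ≤ Real.exp (-lam * T) := by
    apply Real.exp_le_exp.mpr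
    nlinarith
  have : Real.exp (-lam * T) < Real.exp (-lam * T) := by
    calc Real.exp (-lam * T) = ∫ x in Set.Ioi L, f x := heq.symm
    _ ≤ c * Real.exp (-lam * L) := by rw [← hval]; exact hle
    _ ≤ c * Real.exp (-lam * T) := by nlinarith [Real.exp_pos (-lam*T)]
    _ < 1 * Real.exp (-lam * T) := by
        exact mul_lt_mul_of_pos_right hc1 (Real.exp_pos _)
    _ = Real.exp (-lam * T) := one_mul _
  exact lt_irrefl _ this

lemma key1 (lam b V : ℝ) (hlam : 0 < lam) (hb : 0 < b) (hV : 0 < V)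
    (heq : (∫ x in Set.Ioi (max 0 (b ^ 2 * V)),
        (1 / Real.sqrt (x * V) - b / x) * (lam * Real.exp (-lam * x))) = 1) :
    V ≤ lam * Real.pi := by
  by_contra h
  push_neg at h
  have hL0 : 0 < b ^ 2 * V := by positivity
  have hmax : max 0 (b ^ 2 * V) = b ^ 2 * V := max_eq_right hL0.le
  rw [hmax] at heq
  set L := b ^ 2 * V with hLdef
  set f : ℝ → ℝ := fun x => (1 / Real.sqrt (x * V) - b / x) * (lam * Real.exp (-lam * x)) with hf
  set g : ℝ → ℝ := fun x => (lam / Real.sqrt V) * (x ^ (-(1:ℝ)/2) * Real.exp (-lam * x)) with hg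
  have hfi : IntegrableOn f (Set.Ioi L) := by
    by_contra h'
    rw [MeasureTheory.integral_undef h'] at heq
    norm_num at heq
  have hgi0 : IntegrableOn g (Set.Ioi 0) := by
    have := (integrableOn_rpow_mul_exp_neg_mul_rpow
      (s := -(1:ℝ)/2) (p := 1) (b := lam) (by norm_num) zero_lt_one hlam)
    simp only [Real.rpow_one] at this
    exact this.const_mul _
  have hgnn : ∀ x ∈ Set.Ioi (0:ℝ), 0 ≤ g x := by
    intro x hx
    have hx0 : (0:ℝ) < x := hx
    have : (0:ℝ) ≤ x ^ (-(1:ℝ)/2) := Real.rpow_nonneg hx0.le _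
    positivity
  have hbound : ∀ x ∈ Set.Ioi L, f x ≤ g x := by
    intro x hx
    have hx0 : 0 < x := lt_trans hL0 hx
    have h1 : 1 / Real.sqrt (x * V) - b / x ≤ (1 / Real.sqrt V) * x ^ (-(1:ℝ)/2) := by
      have hsx : Real.sqrt (x * V) = Real.sqrt x * Real.sqrt V :=
        Real.sqrt_mul hx0.le V
      have hxr : x ^ (-(1:ℝ)/2) = (Real.sqrt x)⁻¹ := by
        rw [show -(1:ℝ)/2 = -(1/2 : ℝ) by norm_num, Real.rpow_neg hx0.le,
          ← Real.sqrt_eq_rpow]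
      have hbx : 0 < b / x := div_pos hb hx0
      have : 1 / Real.sqrt (x * V) = (1 / Real.sqrt V) * (Real.sqrt x)⁻¹ := by
        rw [hsx]; field_simp
      rw [this, hxr]
      linarith
    have h2 : 0 ≤ lam * Real.exp (-lam * x) := by positivity
    calc f x ≤ (1 / Real.sqrt V) * x ^ (-(1:ℝ)/2) * (lam * Real.exp (-lam * x)) :=
          mul_le_mul_of_nonneg_right h1 h2
      _ = g x := by simp only [hg]; ring
  have hgiL : IntegrableOn g (Set.Ioi L) := hgi0.mono_set (Set.Ioi_subset_Ioi hL0.le)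
  have h1 : (∫ x in Set.Ioi L, f x) ≤ ∫ x in Set.Ioi L, g x :=
    setIntegral_mono_on hfi hgiL measurableSet_Ioi hbound
  have h2 : (∫ x in Set.Ioi L, g x) ≤ ∫ x in Set.Ioi (0:ℝ), g x := by
    apply setIntegral_mono_set hgi0
    · exact (ae_restrict_iff' measurableSet_Ioi).mpr (Filter.Eventually.of_forall hgnn)
    · exact HasSubset.Subset.eventuallyLE (Set.Ioi_subset_Ioi hL0.le)
  have hval : (∫ x in Set.Ioi (0:ℝ), g x)
      = Real.sqrt (lam * Real.pi) / Real.sqrt V := by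
    have hint := integral_rpow_mul_exp_neg_mul_rpow
      (p := 1) (q := -(1:ℝ)/2) (b := lam) (by norm_num) (by norm_num) hlam
    simp only [Real.rpow_one] at hint
    rw [hg, MeasureTheory.integral_const_mul, hint]
    have h12 : (-(1:ℝ)/2 + 1) = (1:ℝ)/2 := by norm_num
    rw [show (-(-(1:ℝ)/2 + 1) / 1) = -(1/2:ℝ) by norm_num,
      show ((-(1:ℝ)/2 + 1) / 1) = (1/2:ℝ) by norm_num, Real.Gamma_one_half_eq,
      Real.rpow_neg hlam.le, ← Real.sqrt_eq_rpow,
      Real.sqrt_mul hlam.le]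
    have hsl : 0 < Real.sqrt lam := Real.sqrt_pos.mpr hlam
    field_simp
    linear_combination (-1:ℝ) * Real.mul_self_sqrt hlam.le
  have hlt : Real.sqrt (lam * Real.pi) / Real.sqrt V < 1 := by
    have hsv : 0 < Real.sqrt V := Real.sqrt_pos.mpr hV
    rw [div_lt_one hsv]
    exact Real.sqrt_lt_sqrt (by positivity) h
  have : (1:ℝ) < 1 := by
    calc (1:ℝ) = ∫ x in Set.Ioi L, f x := heq.symm
      _ ≤ ∫ x in Set.Ioi L, g x := h1
      _ ≤ ∫ x in Set.Ioi (0:ℝ), g x := h2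
      _ = Real.sqrt (lam * Real.pi) / Real.sqrt V := hval
      _ < 1 := hlt
  exact lt_irrefl _ this

/-- For the channel-aware ALOHA scheme with threshold `T_M = (1/λ)ln M` and
per-sensor average power `1/M` under optimal water-filling power allocation,
the Lagrange multipliers `ν_M` determined by
`∫_{max(T_M, b²ν_M)}^∞ (1/√(xν_M) − b/x) λe^{-λx} dx = 1/M`
satisfy `ν_M ≤ λπ` for every `M`, and consequently `T_M > b²ν_M` for all `M`
sufficiently large. -/
theorem aloha_lagrange_bound (lam b : ℝ) (hlam : 0 < lam) (hb : 0 < b)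
    (ν : ℕ → ℝ) (hν : ∀ M : ℕ, 1 ≤ M → 0 < ν M)
    (hpower : ∀ M : ℕ, 1 ≤ M →
      (∫ x in Set.Ioi (max (Real.log M / lam) (b ^ 2 * ν M)),
          (1 / Real.sqrt (x * ν M) - b / x) * (lam * Real.exp (-lam * x)))
        = 1 / (M : ℝ)) :
    (∀ M : ℕ, 1 ≤ M → ν M ≤ lam * Real.pi) ∧
    (∃ M₀ : ℕ, ∀ M : ℕ, M₀ ≤ M → b ^ 2 * ν M < Real.log M / lam) := by
  have hkey : ∀ M : ℕ, 2 ≤ M → Real.log M / lam * ν M ≤ 1 := by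
    intro M hM
    have hM1 : 1 ≤ M := le_trans (by norm_num) hM
    have hM0 : (0:ℝ) < M := by positivity
    have hM2 : (2:ℝ) ≤ M := by exact_mod_cast hM
    have hlog : 0 < Real.log M := Real.log_pos (by linarith)
    have hT : 0 < Real.log M / lam := div_pos hlog hlam
    apply key2 lam b (ν M) (Real.log M / lam) hlam hb (hν M hM1) hT
    rw [hpower M hM1]
    rw [show -lam * (Real.log M / lam) = -Real.log M by field_simp,
      Real.exp_neg, Real.exp_log hM0, one_div]
  constructor
  · intro M hM
    rcases eq_or_lt_of_le hM with hM1 | hM2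
    · -- M = 1
      have h1 : M = 1 := hM1.symm
      subst h1
      apply key1 lam b (ν 1) hlam hb (hν 1 le_rfl)
      have := hpower 1 le_rfl
      simpa using this
    · have hM2 : 2 ≤ M := hM2
      have hM0 : (0:ℝ) < M := by positivity
      have hM2' : (2:ℝ) ≤ M := by exact_mod_cast hM2
      have hlog2 : Real.log 2 ≤ Real.log M := Real.log_le_log (by norm_num) hM2'
      have hlog : 0 < Real.log M := Real.log_pos (by linarith)
      have hk := hkey M hM2
      have hνpos := hν M hM
      have hpi : Real.pi > 3 := Real.pi_gt_three
      have hl2 : (0.6931471803 : ℝ) < Real.log 2 := Real.log_two_gt_d9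
      -- ν M ≤ lam / log M ≤ lam * π
      have h1 : ν M ≤ lam / Real.log M := by
        rw [div_mul_eq_mul_div, div_le_one hlam] at hk
        rw [le_div_iff₀ hlog]
        nlinarith
      calc ν M ≤ lam / Real.log M := h1
        _ ≤ lam * Real.pi := by
          rw [div_le_iff₀ hlog]
          have hgt : 1 < Real.pi * Real.log M := by nlinarith
          have h2' : lam * 1 < lam * (Real.pi * Real.log M) :=
            mul_lt_mul_of_pos_left hgt hlam
          nlinarith
  · refine ⟨max 2 (⌈Real.exp (b * lam)⌉₊ + 1), fun M hM => ?_⟩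
    have hM2 : 2 ≤ M := le_trans (le_max_left _ _) hM
    have hMc : ⌈Real.exp (b * lam)⌉₊ + 1 ≤ M := le_trans (le_max_right _ _) hM
    have hM0 : (0:ℝ) < M := by positivity
    have hexp : Real.exp (b * lam) < M := by
      have h1 : Real.exp (b * lam) ≤ (⌈Real.exp (b * lam)⌉₊ : ℝ) := Nat.le_ceil _
      have h2 : ((⌈Real.exp (b * lam)⌉₊ : ℝ) + 1) ≤ (M:ℝ) := by exact_mod_cast hMc
      linarith
    have hlogM : b * lam < Real.log M := by
      have := Real.log_lt_log (Real.exp_pos _) hexp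
      rwa [Real.log_exp] at this
    have hT : b < Real.log M / lam := by
      rw [lt_div_iff₀ hlam]; linarith [mul_comm b lam]
    have hTpos : 0 < Real.log M / lam := lt_trans hb hT
    have hk := hkey M hM2
    have hνpos := hν M (le_trans (by norm_num) hM2)
    set T := Real.log M / lam
    -- ν M ≤ 1/T, so b^2 * ν M ≤ b^2 / T < T
    have h1 : ν M ≤ 1 / T := by
      rw [le_div_iff₀ hTpos]; nlinarith
    have h2 : b ^ 2 * ν M ≤ b ^ 2 / T := by
      rw [div_eq_mul_one_div]
      exact mul_le_mul_of_nonneg_left h1 (by positivity)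
    have h3 : b ^ 2 / T < T := by
      rw [div_lt_iff₀ hTpos]; nlinarith
    linarith
end

section
/- Let σθ² > 0, σv² > 0, σn² > 0, λ > 0. For an integer M ≥ 2 and T > 0 define F_M(T) = σθ²·[1 − M e^{−λT}(1 − e^{−λT})^{M−1}] + M(1 − e^{−λT})^{M−1} · ∫_T^∞ (1/σθ² + (x e^{λT}/M)/((x σv² e^{λT}/M) + σn²))^{−1} λ e^{−λx} dx. Suppose that for each M ≥ 2, T*_M > 0 is a minimizer of F_M over (0,∞). Then T*_M is asymptotically equivalent to (1/λ)ln(M) as M → ∞, i.e. λ·T*_M/ln(M) → 1. -/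
open MeasureTheory Filter Real

lemma int_lam_exp {lam : ℝ} (hlam : 0 < lam) (T : ℝ) :
    ∫ x in Set.Ioi T, lam * Real.exp (-lam * x) = Real.exp (-lam * T) := by
  have hderiv : ∀ x ∈ Set.Ici T,
      HasDerivAt (fun y => -Real.exp (-lam * y)) (lam * Real.exp (-lam * x)) x := by
    intro x _
    have h := (((hasDerivAt_id x).const_mul (-lam)).exp).neg
    simpa [mul_comm, Pi.neg_def] using h
  have hint : MeasureTheory.IntegrableOn (fun x => lam * Real.exp (-lam * x)) (Set.Ioi T) :=
    (exp_neg_integrableOn_Ioi T hlam).const_mul lam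
  have htend : Filter.Tendsto (fun y => -Real.exp (-lam * y)) Filter.atTop (nhds 0) := by
    rw [← neg_zero]
    exact (Real.tendsto_exp_atBot.comp
      (tendsto_id.const_mul_atTop_of_neg (by linarith))).neg
  have := MeasureTheory.integral_Ioi_of_hasDerivAt_of_tendsto' hderiv hint htend
  simpa using this

lemma int_bounds (sθ sv sn lam : ℝ) (hθ : 0 < sθ) (hv : 0 < sv) (hn : 0 < sn)
    (hlam : 0 < lam) {c : ℝ} (hc : 0 < c) {T : ℝ} (hT : 0 < T) :
    0 ≤ (∫ x in Set.Ioi T, (1/sθ + x * c / (x * sv * c + sn))⁻¹ * (lam * Real.exp (-lam * x)))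
    ∧ (∫ x in Set.Ioi T, (1/sθ + x * c / (x * sv * c + sn))⁻¹ * (lam * Real.exp (-lam * x)))
      ≤ (1/sθ + T * c / (T * sv * c + sn))⁻¹ * Real.exp (-lam * T) := by
  set g : ℝ → ℝ := fun x => (1/sθ + x * c / (x * sv * c + sn))⁻¹ with hg
  have hD : ∀ x : ℝ, 0 < x → 0 < x * sv * c + sn := fun x hx => by positivity
  have hq : ∀ x : ℝ, 0 < x → 0 ≤ x * c / (x * sv * c + sn) := fun x hx => by positivity
  have hgpos : ∀ x : ℝ, 0 < x → 0 < g x := by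
    intro x hx
    have := hq x hx
    have h1 : 0 < 1/sθ + x * c / (x * sv * c + sn) := by positivity
    exact inv_pos.mpr h1
  have hgle : ∀ x : ℝ, 0 < x → g x ≤ sθ := by
    intro x hx
    have h1 : 1/sθ ≤ 1/sθ + x * c / (x * sv * c + sn) := by
      have := hq x hx; linarith
    have h2 : (1/sθ + x * c / (x * sv * c + sn))⁻¹ ≤ (1/sθ)⁻¹ :=
      inv_anti₀ (by positivity) h1
    show (1/sθ + x * c / (x * sv * c + sn))⁻¹ ≤ sθ
    simpa [one_div] using h2
  have hmono : ∀ x : ℝ, T ≤ x → g x ≤ g T := by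
    intro x hx
    have hxpos : 0 < x := lt_of_lt_of_le hT hx
    have hqT : T * c / (T * sv * c + sn) ≤ x * c / (x * sv * c + sn) := by
      rw [div_le_div_iff₀ (hD T hT) (hD x hxpos)]
      nlinarith [mul_nonneg (mul_nonneg (sub_nonneg.mpr hx) hc.le) hn.le]
    have h1 : 0 < 1/sθ + T * c / (T * sv * c + sn) := by
      have := hq T hT; positivity
    exact inv_anti₀ h1 (by linarith)
  have hmeas : Measurable fun x : ℝ => g x * (lam * Real.exp (-lam * x)) := by
    apply Measurable.mul
    · exact ((measurable_const.add ((measurable_id.mul_const c).div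
        ((measurable_id.mul_const sv |>.mul_const c).add_const sn))).inv)
    · exact measurable_const.mul (Real.measurable_exp.comp (measurable_id.const_mul (-lam)))
  have hintmaj : MeasureTheory.IntegrableOn
      (fun x => sθ * (lam * Real.exp (-lam * x))) (Set.Ioi T) :=
    ((exp_neg_integrableOn_Ioi T hlam).const_mul lam).const_mul sθ
  have hintf : MeasureTheory.IntegrableOn
      (fun x => g x * (lam * Real.exp (-lam * x))) (Set.Ioi T) := by
    refine MeasureTheory.Integrable.mono' hintmaj hmeas.aestronglyMeasurable ?_
    filter_upwards [MeasureTheory.ae_restrict_mem measurableSet_Ioi] with x hx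
    have hxpos : 0 < x := lt_trans hT hx
    have h0 : 0 ≤ g x * (lam * Real.exp (-lam * x)) :=
      mul_nonneg (hgpos x hxpos).le (by positivity)
    rw [Real.norm_eq_abs, abs_of_nonneg h0]
    exact mul_le_mul_of_nonneg_right (hgle x hxpos) (by positivity)
  constructor
  · apply MeasureTheory.setIntegral_nonneg measurableSet_Ioi
    intro x hx
    exact mul_nonneg (hgpos x (lt_trans hT hx)).le (by positivity)
  · have hintgT : MeasureTheory.IntegrableOn
        (fun x => g T * (lam * Real.exp (-lam * x))) (Set.Ioi T) :=
      ((exp_neg_integrableOn_Ioi T hlam).const_mul lam).const_mul (g T)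
    have hle : (∫ x in Set.Ioi T, g x * (lam * Real.exp (-lam * x)))
        ≤ ∫ x in Set.Ioi T, g T * (lam * Real.exp (-lam * x)) := by
      refine MeasureTheory.setIntegral_mono_on hintf hintgT measurableSet_Ioi ?_
      intro x hx
      exact mul_le_mul_of_nonneg_right (hmono x (le_of_lt hx)) (by positivity)
    have heq : (∫ x in Set.Ioi T, g T * (lam * Real.exp (-lam * x)))
        = g T * Real.exp (-lam * T) := by
      rw [MeasureTheory.integral_const_mul, int_lam_exp hlam]
    calc (∫ x in Set.Ioi T, g x * (lam * Real.exp (-lam * x))) ≤ _ := hle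
      _ = g T * Real.exp (-lam * T) := heq

lemma Q0_ge (M : ℕ) (hM : 2 ≤ M) : Real.exp (-1) ≤ (1 - (M:ℝ)⁻¹) ^ (M - 1) := by
  have hMR : (2:ℝ) ≤ (M:ℝ) := by exact_mod_cast hM
  set m : ℝ := (M:ℝ) - 1 with hm
  have hm1 : (1:ℝ) ≤ m := by simp [hm]; linarith
  have hmpos : (0:ℝ) < m := by linarith
  have hcast : ((M - 1 : ℕ) : ℝ) = m := by
    have : (1:ℕ) ≤ M := by omega
    push_cast [Nat.cast_sub this]
    simp [hm]
  have h1 : m + 1 ≤ m * Real.exp (1/m) := by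
    have h := Real.add_one_le_exp (1/m)
    have := mul_le_mul_of_nonneg_left h hmpos.le
    calc m + 1 = m * (1/m + 1) := by field_simp; ring
      _ ≤ m * Real.exp (1/m) := this
  have h2 : Real.exp (-(1/m)) ≤ 1 - (M:ℝ)⁻¹ := by
    have hMpos : (0:ℝ) < M := by linarith
    have hexp : (0:ℝ) < Real.exp (1/m) := Real.exp_pos _
    rw [Real.exp_neg]
    rw [inv_le_iff_one_le_mul₀ hexp]
    have : 1 - (M:ℝ)⁻¹ = m / (m+1) := by
      rw [hm, sub_add_cancel, sub_div, div_self hMpos.ne', one_div]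
    rw [this, div_mul_eq_mul_div, le_div_iff₀ (by linarith)]
    nlinarith
  have h3 : Real.exp (-(1/m)) ^ (M-1) ≤ (1 - (M:ℝ)⁻¹) ^ (M-1) :=
    pow_le_pow_left₀ (Real.exp_pos _).le h2 _
  have h4 : Real.exp (-(1/m)) ^ (M-1) = Real.exp (-1) := by
    rw [← Real.exp_nat_mul, hcast]
    congr 1
    field_simp
  linarith [h3, h4.ge, h4.le]

set_option maxHeartbeats 1000000 in
/-- For the channel-aware ALOHA scheme with optimized transmission threshold
under constant (normalized) power allocation `α² = e^{λT}/M`: any minimizers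
`T*_M > 0` of the expected distortion
`F_M(T) = σθ²[1 − Me^{-λT}(1-e^{-λT})^{M-1}]
  + M(1-e^{-λT})^{M-1} ∫_T^∞ (1/σθ² + (xe^{λT}/M)/((xσv²e^{λT}/M)+σn²))⁻¹ λe^{-λx} dx`
satisfy `T*_M ~ (1/λ)ln M` as `M → ∞`, i.e. `λT*_M/ln M → 1`. -/
theorem optimal_threshold_asymptotics (sθ sv sn lam : ℝ)
    (hθ : 0 < sθ) (hv : 0 < sv) (hn : 0 < sn) (hlam : 0 < lam)
    (F : ℕ → ℝ → ℝ)
    (hF : ∀ M : ℕ, 2 ≤ M → ∀ T : ℝ, 0 < T →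
      F M T = sθ * (1 - (M : ℝ) * Real.exp (-lam * T)
          * (1 - Real.exp (-lam * T)) ^ (M - 1))
        + (M : ℝ) * (1 - Real.exp (-lam * T)) ^ (M - 1) *
          ∫ x in Set.Ioi T,
            (1 / sθ + (x * Real.exp (lam * T) / M) /
              (x * sv * Real.exp (lam * T) / M + sn))⁻¹
              * (lam * Real.exp (-lam * x)))
    (Ts : ℕ → ℝ) (hTs : ∀ M : ℕ, 2 ≤ M → 0 < Ts M)
    (hmin : ∀ M : ℕ, 2 ≤ M → ∀ T : ℝ, 0 < T → F M (Ts M) ≤ F M T) :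
    Tendsto (fun M : ℕ => lam * Ts M / Real.log M) atTop (nhds 1) := by
  -- the gap identity
  have gap_eq : ∀ M : ℕ, 2 ≤ M → ∀ T : ℝ, 0 < T →
      sθ - F M T = (M : ℝ) * (1 - Real.exp (-lam * T)) ^ (M - 1) *
        (sθ * Real.exp (-lam * T) - ∫ x in Set.Ioi T,
          (1 / sθ + x * (Real.exp (lam * T) / M) /
            (x * sv * (Real.exp (lam * T) / M) + sn))⁻¹
            * (lam * Real.exp (-lam * x))) := by
    intro M hM T hT
    rw [hF M hM T hT]
    simp_rw [mul_div_assoc]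
    ring
  have hcpos : ∀ (M : ℕ), 2 ≤ M → ∀ T : ℝ, 0 < Real.exp (lam * T) / M := by
    intro M hM T
    have : (0:ℝ) < M := by positivity
    positivity
  have hQ : ∀ (M : ℕ) (T : ℝ), 0 < T → 0 ≤ (1 - Real.exp (-lam * T)) ^ (M - 1) := by
    intro M T hT
    have : Real.exp (-lam * T) ≤ 1 := Real.exp_le_one_iff.mpr (by nlinarith)
    exact pow_nonneg (by linarith) _
  have gap_ub : ∀ M : ℕ, 2 ≤ M → ∀ T : ℝ, 0 < T →
      sθ - F M T ≤ sθ * M * Real.exp (-lam * T) * (1 - Real.exp (-lam * T)) ^ (M - 1) := by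
    intro M hM T hT
    rw [gap_eq M hM T hT]
    have hI := (int_bounds sθ sv sn lam hθ hv hn hlam (hcpos M hM T) hT).1
    have hQ' := hQ M T hT
    have hM0 : (0:ℝ) ≤ (M:ℝ) := by positivity
    nlinarith [mul_nonneg hM0 hQ', mul_le_mul_of_nonneg_left hI (mul_nonneg hM0 hQ')]
  have gap_lb : ∀ M : ℕ, 2 ≤ M → ∀ T : ℝ, 0 < T →
      (M : ℝ) * (1 - Real.exp (-lam * T)) ^ (M - 1) * Real.exp (-lam * T) *
        (sθ - (1 / sθ + T * (Real.exp (lam * T) / M) /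
          (T * sv * (Real.exp (lam * T) / M) + sn))⁻¹)
      ≤ sθ - F M T := by
    intro M hM T hT
    rw [gap_eq M hM T hT]
    have hI := (int_bounds sθ sv sn lam hθ hv hn hlam (hcpos M hM T) hT).2
    have hQ' := hQ M T hT
    have hM0 : (0:ℝ) ≤ (M:ℝ) := by positivity
    nlinarith [mul_le_mul_of_nonneg_left hI (mul_nonneg hM0 hQ')]
  -- constants
  set gbar : ℝ := (1/sθ + 1/(sv+sn))⁻¹ with hgbar
  have hgbar_lt : gbar < sθ := by
    have h1 : (1/sθ) < 1/sθ + 1/(sv+sn) := by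
      have : 0 < 1/(sv+sn) := by positivity
      linarith
    have h2 : (1/sθ + 1/(sv+sn))⁻¹ < (1/sθ)⁻¹ := inv_strictAnti₀ (by positivity) h1
    rw [hgbar]
    simpa [one_div] using h2
  set cc : ℝ := Real.exp (-1) * (sθ - gbar) with hcc_def
  have hcc : 0 < cc := mul_pos (Real.exp_pos _) (by linarith)
  -- lower bound at T0 = log M / lam
  have hC : ∀ M : ℕ, 2 ≤ M → lam ≤ Real.log M → cc ≤ sθ - F M (Real.log M / lam) := by
    intro M hM hlog
    have hMR : (2:ℝ) ≤ (M:ℝ) := by exact_mod_cast hM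
    have hMpos : (0:ℝ) < M := by linarith
    set T0 : ℝ := Real.log M / lam with hT0def
    have hT0pos : 0 < T0 := div_pos (lt_of_lt_of_le hlam hlog) hlam
    have hT1 : 1 ≤ T0 := by
      rw [hT0def, le_div_iff₀ hlam]; linarith
    have hlamT0 : lam * T0 = Real.log M := by
      rw [hT0def]; field_simp
    have hexp : Real.exp (lam * T0) = M := by rw [hlamT0, Real.exp_log hMpos]
    have hc0 : Real.exp (lam * T0) / M = 1 := by rw [hexp]; field_simp
    have hp0 : Real.exp (-lam * T0) = (M:ℝ)⁻¹ := by
      rw [neg_mul, Real.exp_neg, hexp]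
    have hdenpos : 0 < T0 * sv * 1 + sn := by nlinarith
    have hgb : (1/sθ + T0 * (Real.exp (lam*T0)/M) /
        (T0 * sv * (Real.exp (lam*T0)/M) + sn))⁻¹ ≤ gbar := by
      rw [hc0, hgbar]
      have hfrac : 1/(sv+sn) ≤ T0 * 1/(T0*sv*1+sn) := by
        rw [div_le_div_iff₀ (by positivity) hdenpos]
        nlinarith
      exact inv_anti₀ (by positivity) (by linarith)
    have hlow := gap_lb M hM T0 hT0pos
    rw [hp0] at hlow
    have hQ0 := Q0_ge M hM
    have hQ0' : (0:ℝ) ≤ (1 - (M:ℝ)⁻¹) ^ (M-1) := le_trans (Real.exp_pos _).le hQ0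
    have hkey : cc ≤ (1 - (M:ℝ)⁻¹)^(M-1) *
        (sθ - (1/sθ + T0 * (Real.exp (lam*T0)/M) /
          (T0 * sv * (Real.exp (lam*T0)/M) + sn))⁻¹) := by
      rw [hcc_def]
      apply mul_le_mul hQ0 (by linarith) (by linarith) hQ0'
    have hfact : (M:ℝ) * (1 - (M:ℝ)⁻¹)^(M-1) * (M:ℝ)⁻¹ = (1 - (M:ℝ)⁻¹)^(M-1) := by
      field_simp
    calc cc ≤ _ := hkey
      _ = (M:ℝ) * (1 - (M:ℝ)⁻¹)^(M-1) * (M:ℝ)⁻¹ *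
          (sθ - (1/sθ + T0 * (Real.exp (lam*T0)/M) /
            (T0 * sv * (Real.exp (lam*T0)/M) + sn))⁻¹) := by rw [hfact]
      _ ≤ sθ - F M T0 := hlow
  -- log tendsto
  have hlogtop : Tendsto (fun M : ℕ => Real.log M) atTop atTop :=
    Real.tendsto_log_atTop.comp tendsto_natCast_atTop_atTop
  set A : ℝ := Real.log (16*sθ/cc) with hA
  set B : ℝ := Real.log sθ - Real.log cc with hB
  -- the eventual two-sided bound
  have hev : ∀ᶠ M : ℕ in atTop,
      Real.log M - A ≤ lam * Ts M ∧ lam * Ts M ≤ Real.log M + B := by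
    filter_upwards [eventually_ge_atTop 2, hlogtop.eventually_ge_atTop lam] with M hM hlog
    have hMR : (2:ℝ) ≤ (M:ℝ) := by exact_mod_cast hM
    have hMpos : (0:ℝ) < M := by linarith
    have hT0pos : 0 < Real.log M / lam := div_pos (lt_of_lt_of_le hlam hlog) hlam
    have ht : 0 < Ts M := hTs M hM
    have hcc_le : cc ≤ sθ - F M (Ts M) := by
      have h1 := hC M hM hlog
      have h2 := hmin M hM (Real.log M / lam) hT0pos
      linarith
    set pt : ℝ := Real.exp (-lam * Ts M) with hpt
    have hptpos : 0 < pt := Real.exp_pos _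
    have hpt1 : pt ≤ 1 := by
      rw [hpt]
      exact Real.exp_le_one_iff.mpr (by nlinarith)
    have h1 : cc ≤ sθ * M * pt * (1 - pt)^(M-1) :=
      le_trans hcc_le (gap_ub M hM (Ts M) ht)
    have hP : (0:ℝ) < sθ * M * pt := by positivity
    -- upper bound on lam * Ts M
    have hQle1 : (1 - pt)^(M-1) ≤ 1 := pow_le_one₀ (by linarith) (by linarith)
    have h2 : cc ≤ sθ * M * pt := by nlinarith
    have hub : cc/(sθ*M) ≤ pt := by
      rw [div_le_iff₀ (by positivity)]
      nlinarith
    have hlog_ub : lam * Ts M ≤ Real.log M + B := by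
      have hl := Real.log_le_log (by positivity) hub
      rw [hpt, Real.log_exp, Real.log_div (ne_of_gt hcc) (by positivity),
        Real.log_mul (ne_of_gt hθ) (ne_of_gt hMpos)] at hl
      rw [hB]; linarith
    -- lower bound on lam * Ts M
    have hmcast : ((M-1:ℕ):ℝ) = (M:ℝ) - 1 := by
      rw [Nat.cast_sub (by omega : 1 ≤ M)]; norm_num
    have hm1pos : (0:ℝ) < ((M-1:ℕ):ℝ) := by rw [hmcast]; linarith
    set s : ℝ := ((M-1:ℕ):ℝ) * pt with hs
    have hspos : 0 < s := mul_pos hm1pos hptpos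
    have hexp_pt : 1 - pt ≤ Real.exp (-pt) := by linarith [Real.add_one_le_exp (-pt)]
    have hQ2 : (1-pt)^(M-1) ≤ Real.exp (-pt)^(M-1) :=
      pow_le_pow_left₀ (by linarith) hexp_pt _
    have hQ3 : Real.exp (-pt)^(M-1) = Real.exp (-s) := by
      rw [← Real.exp_nat_mul]
      congr 1
      rw [hs]; ring
    have h3 : cc ≤ sθ * M * pt * Real.exp (-s) := by
      calc cc ≤ sθ * M * pt * (1 - pt)^(M-1) := h1
        _ ≤ sθ * M * pt * Real.exp (-s) := by
            rw [← hQ3]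
            exact mul_le_mul_of_nonneg_left hQ2 hP.le
    have h4 : s^2 ≤ 4 * Real.exp s := by
      have ha := Real.add_one_le_exp (s/2)
      have hb : (s/2)^2 ≤ Real.exp (s/2)^2 := pow_le_pow_left₀ (by linarith) (by linarith) 2
      have hc2 : Real.exp (s/2)^2 = Real.exp s := by
        rw [sq, ← Real.exp_add]; congr 1; ring
      nlinarith
    have he1 : Real.exp (-s) * Real.exp s = 1 := by rw [← Real.exp_add]; simp
    have h5 : Real.exp (-s) * s^2 ≤ 4 := by
      nlinarith [mul_le_mul_of_nonneg_left h4 (Real.exp_pos (-s)).le]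
    have h6 : cc * s^2 ≤ 4 * (sθ * M * pt) := by
      nlinarith [mul_le_mul_of_nonneg_right h3 (sq_nonneg s),
        mul_le_mul_of_nonneg_left h5 hP.le]
    have hm2 : (M:ℝ) ≤ 2 * ((M-1:ℕ):ℝ) := by rw [hmcast]; linarith
    have h7 : cc * (M:ℝ)^2 * pt^2 ≤ 16 * (sθ * M * pt) := by
      have hhint : (0:ℝ) ≤ cc * pt^2 * ((2*((M-1:ℕ):ℝ))^2 - (M:ℝ)^2) := by
        apply mul_nonneg (by positivity)
        nlinarith
      have h6' : cc * (((M-1:ℕ):ℝ) * pt)^2 ≤ 4 * (sθ * M * pt) := by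
        rw [← hs]; exact h6
      nlinarith [h6', hhint]
    have h8 : pt ≤ (16*sθ/cc)/(M:ℝ) := by
      rw [div_div, le_div_iff₀ (by positivity)]
      nlinarith [mul_pos hMpos hptpos]
    have hlog_lb : Real.log M - A ≤ lam * Ts M := by
      have hl := Real.log_le_log hptpos h8
      rw [hpt, Real.log_exp,
        Real.log_div (ne_of_gt (by positivity : (0:ℝ) < 16*sθ/cc)) (ne_of_gt hMpos)] at hl
      rw [hA]; linarith
    exact ⟨hlog_lb, hlog_ub⟩
  -- conclusion by squeeze
  have key : ∀ C : ℝ, Tendsto (fun x : ℝ => (x + C)/x) atTop (nhds 1) := by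
    intro C
    have h : Tendsto (fun x : ℝ => C/x) atTop (nhds 0) :=
      tendsto_const_nhds.div_atTop tendsto_id
    have h2 : Tendsto (fun x : ℝ => 1 + C/x) atTop (nhds (1 + 0)) :=
      tendsto_const_nhds.add h
    rw [add_zero] at h2
    refine h2.congr' ?_
    filter_upwards [eventually_ne_atTop (0:ℝ)] with x hx
    field_simp
  apply tendsto_of_tendsto_of_tendsto_of_le_of_le'
    ((key (-A)).comp hlogtop) ((key B).comp hlogtop)
  · filter_upwards [hev, hlogtop.eventually_gt_atTop 0] with M h hpos
    show (Real.log M + -A)/Real.log M ≤ lam * Ts M / Real.log M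
    exact (div_le_div_iff_of_pos_right hpos).mpr (by linarith [h.1])
  · filter_upwards [hev, hlogtop.eventually_gt_atTop 0] with M h hpos
    show lam * Ts M / Real.log M ≤ (Real.log M + B)/Real.log M
    exact (div_le_div_iff_of_pos_right hpos).mpr (by linarith [h.2])
end
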